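/- arXiv:2505.10054 — 15 statements merged into one kernel-verified Lean document; each statement's English description precedes it below -/
import Mathlib

section
/- Let β > 0, let d_S ≥ d_r ≥ 1 be integers, and let E : Fin d_S → ℝ be nondecreasing. Let p be a probability distribution on Fin d_S satisfying condition (R3). Then for every unitary complex matrix U indexed by (Fin d_S) × (Fin d_r) that commutes with the diagonal matrix H having diagonal entries H_{(k,j)} = E_k + E_j, the output ground-state population satisfies Σ_{j<d_r} (U·D·U†)_{(0,j),(0,j)} ≤ exp(−β·E_0) / Σ_{k<d_S} exp(−β·E_k), where D is the diagonal matrix with D_{(k,j),(k,j)} = p_k·τ^r_j. (Paper's Theorem 2: no cooling below the bath temperature by a single collision when the molecule is no larger than the system, the molecule carries the truncated system spectrum, and the system state has an effective temperature.) -/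
open scoped BigOperators
open Matrix

/-- Paper's Theorem 2 (no-go): if the molecule is no larger than the system (R1),
the molecule carries the truncated system spectrum (R2), and the system state has an
effective temperature (R3), then no energy-preserving collision can push the system's
ground-state population above the bath Gibbs value. -/
theorem no_cooling_single_collision
    (β : ℝ) (hβ : 0 < β) (dS dr : ℕ) (hdS : 0 < dS) (hdr : 0 < dr) (hd : dr ≤ dS)
    (E : Fin dS → ℝ) (hE : Monotone E)
    (p : Fin dS → ℝ) (hp0 : ∀ k, 0 ≤ p k) (hp1 : ∑ k, p k = 1)
    (hR3 : ∀ k k' : Fin dS, E k ≤ E k' →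
      p k * Real.exp (β * E k) ≤ p k' * Real.exp (β * E k'))
    (U : Matrix (Fin dS × Fin dr) (Fin dS × Fin dr) ℂ)
    (hU : U ∈ Matrix.unitaryGroup (Fin dS × Fin dr) ℂ)
    (hcomm : U * Matrix.diagonal
        (fun kj : Fin dS × Fin dr => ((E kj.1 + E (Fin.castLE hd kj.2) : ℝ) : ℂ))
      = Matrix.diagonal
        (fun kj : Fin dS × Fin dr => ((E kj.1 + E (Fin.castLE hd kj.2) : ℝ) : ℂ)) * U) :
    ∑ j : Fin dr,
      ((U * Matrix.diagonal (fun kj : Fin dS × Fin dr =>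
          ((p kj.1 * (Real.exp (-β * E (Fin.castLE hd kj.2)) /
            (∑ i : Fin dr, Real.exp (-β * E (Fin.castLE hd i)))) : ℝ) : ℂ)) * Uᴴ)
        (⟨0, hdS⟩, j) (⟨0, hdS⟩, j)).re
    ≤ Real.exp (-β * E ⟨0, hdS⟩) / (∑ k : Fin dS, Real.exp (-β * E k)) := by
  classical
  haveI : Nonempty (Fin dr) := ⟨⟨0, hdr⟩⟩
  haveI : Nonempty (Fin dS) := ⟨⟨0, hdS⟩⟩
  set z : Fin dS := ⟨0, hdS⟩ with hz
  set a : Fin dS → ℝ := fun k => Real.exp (-β * E k) with ha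
  set Zr : ℝ := ∑ i : Fin dr, a (Fin.castLE hd i) with hZr
  set ZS : ℝ := ∑ k, a k with hZS
  have haPos : ∀ k, 0 < a k := fun k => Real.exp_pos _
  have hZrPos : 0 < Zr := Finset.sum_pos (fun i _ => haPos _) Finset.univ_nonempty
  have hZSPos : 0 < ZS := Finset.sum_pos (fun i _ => haPos _) Finset.univ_nonempty
  set q : Fin dS × Fin dr → ℝ := fun kj => p kj.1 * (a (Fin.castLE hd kj.2) / Zr) with hqdef
  -- energy conservation for nonzero entries of U
  have hEcons : ∀ x y : Fin dS × Fin dr, U x y ≠ 0 →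
      E x.1 + E (Fin.castLE hd x.2) = E y.1 + E (Fin.castLE hd y.2) := by
    intro x y hxy
    have h := congrFun (congrFun hcomm x) y
    rw [Matrix.mul_diagonal, Matrix.diagonal_mul] at h
    have h' : (((E y.1 + E (Fin.castLE hd y.2) : ℝ) : ℂ)
        - ((E x.1 + E (Fin.castLE hd x.2) : ℝ) : ℂ)) * U x y = 0 := by
      linear_combination h
    rcases mul_eq_zero.mp h' with h'' | h''
    · exact (Complex.ofReal_inj.mp (sub_eq_zero.mp h'')).symm
    · exact absurd h'' hxy
  -- diagonal entries of U D U† as real sums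
  have hdiag : ∀ x : Fin dS × Fin dr,
      ((U * Matrix.diagonal (fun kj : Fin dS × Fin dr => ((q kj : ℝ) : ℂ)) * Uᴴ) x x).re
        = ∑ m, q m * Complex.normSq (U x m) := by
    intro x
    have hc : (U * Matrix.diagonal (fun kj : Fin dS × Fin dr => ((q kj : ℝ) : ℂ)) * Uᴴ) x x
        = ((∑ m, q m * Complex.normSq (U x m) : ℝ) : ℂ) := by
      rw [Matrix.mul_apply]
      push_cast
      refine Finset.sum_congr rfl fun m _ => ?_
      rw [Matrix.mul_diagonal, Matrix.conjTranspose_apply]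
      have h1 : U x m * star (U x m) = (Complex.normSq (U x m) : ℂ) := Complex.mul_conj _
      calc U x m * (q m : ℂ) * star (U x m)
          = (q m : ℂ) * (U x m * star (U x m)) := by ring
        _ = (q m : ℂ) * (Complex.normSq (U x m) : ℂ) := by rw [h1]
    rw [hc, Complex.ofReal_re]
  -- rows of U have unit norm
  have hrow : ∀ x : Fin dS × Fin dr, ∑ m, Complex.normSq (U x m) = 1 := by
    intro x
    have h0 : U * Uᴴ = 1 := Matrix.mem_unitaryGroup_iff.mp hU
    have h1 : (U * Uᴴ) x x = 1 := by rw [h0]; simp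
    rw [Matrix.mul_apply] at h1
    have hc : ((∑ m, Complex.normSq (U x m) : ℝ) : ℂ) = 1 := by
      rw [← h1]
      push_cast
      refine Finset.sum_congr rfl fun m _ => ?_
      rw [Matrix.conjTranspose_apply]
      exact (Complex.mul_conj _).symm
    exact_mod_cast hc
  have hDeq : (fun kj : Fin dS × Fin dr =>
      ((p kj.1 * (Real.exp (-β * E (Fin.castLE hd kj.2)) /
        (∑ i : Fin dr, Real.exp (-β * E (Fin.castLE hd i)))) : ℝ) : ℂ))
      = fun kj : Fin dS × Fin dr => ((q kj : ℝ) : ℂ) := rfl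
  rw [hDeq]
  -- pointwise bound on q at contributing entries
  have hEz : ∀ k : Fin dS, E z ≤ E k := fun k => hE (by simp [hz, Fin.le_def])
  have hkey : ∀ j : Fin dr, ∀ m : Fin dS × Fin dr,
      q m * Complex.normSq (U (z, j) m)
        ≤ (p (Fin.castLE hd j) * (a z / Zr)) * Complex.normSq (U (z, j) m) := by
    intro j m
    by_cases hm : U (z, j) m = 0
    · simp [hm]
    · refine mul_le_mul_of_nonneg_right ?_ (Complex.normSq_nonneg _)
      have heq := hEcons (z, j) m hm
      simp only at heq
      have hle : E m.1 ≤ E (Fin.castLE hd j) := by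
        have := hEz (Fin.castLE hd m.2); linarith
      have hr := hR3 m.1 (Fin.castLE hd j) hle
      have e1 : p m.1 * a (Fin.castLE hd m.2)
          = (p m.1 * Real.exp (β * E m.1))
            * Real.exp (-β * (E z + E (Fin.castLE hd j))) := by
        have hexp : Real.exp (β * E m.1) * Real.exp (-β * (E z + E (Fin.castLE hd j)))
            = Real.exp (-β * E (Fin.castLE hd m.2)) := by
          rw [← Real.exp_add]; congr 1; linear_combination (-β) * heq
        simp only [ha]
        rw [← hexp]; ring
      have e2 : p (Fin.castLE hd j) * a z
          = (p (Fin.castLE hd j) * Real.exp (β * E (Fin.castLE hd j)))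
            * Real.exp (-β * (E z + E (Fin.castLE hd j))) := by
        have hexp : Real.exp (β * E (Fin.castLE hd j))
            * Real.exp (-β * (E z + E (Fin.castLE hd j)))
            = Real.exp (-β * E z) := by
          rw [← Real.exp_add]; congr 1; ring
        simp only [ha]
        rw [← hexp]; ring
      have main : p m.1 * a (Fin.castLE hd m.2) ≤ p (Fin.castLE hd j) * a z := by
        rw [e1, e2]
        exact mul_le_mul_of_nonneg_right hr (Real.exp_pos _).le
      calc q m = (p m.1 * a (Fin.castLE hd m.2)) / Zr := by rw [hqdef]; ring
        _ ≤ (p (Fin.castLE hd j) * a z) / Zr := by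
            exact div_le_div_of_nonneg_right main hZrPos.le
        _ = p (Fin.castLE hd j) * (a z / Zr) := by ring
  -- sum the bound over rows
  have hstep1 : ∑ j : Fin dr,
      ((U * Matrix.diagonal (fun kj : Fin dS × Fin dr => ((q kj : ℝ) : ℂ)) * Uᴴ)
        (z, j) (z, j)).re
      ≤ (∑ j : Fin dr, p (Fin.castLE hd j)) * (a z / Zr) := by
    rw [Finset.sum_mul]
    refine Finset.sum_le_sum fun j _ => ?_
    rw [hdiag]
    calc ∑ m, q m * Complex.normSq (U (z, j) m)
        ≤ ∑ m, (p (Fin.castLE hd j) * (a z / Zr)) * Complex.normSq (U (z, j) m) :=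
          Finset.sum_le_sum fun m _ => hkey j m
      _ = (p (Fin.castLE hd j) * (a z / Zr)) * ∑ m, Complex.normSq (U (z, j) m) := by
          rw [Finset.mul_sum]
      _ = p (Fin.castLE hd j) * (a z / Zr) := by rw [hrow]; ring
  -- Chebyshev-type rearrangement step
  set s : Finset (Fin dS) := Finset.univ.filter (fun k : Fin dS => (k : ℕ) < dr) with hs
  have himg : Finset.image (Fin.castLE hd) Finset.univ = s := by
    ext k
    simp only [hs, Finset.mem_image, Finset.mem_filter, Finset.mem_univ, true_and]
    constructor
    · rintro ⟨j, -, rfl⟩; exact j.isLt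
    · intro hk; exact ⟨⟨(k : ℕ), hk⟩, Fin.ext rfl⟩
  have hsum : ∀ g : Fin dS → ℝ,
      (∑ j : Fin dr, g (Fin.castLE hd j)) = ∑ k ∈ s, g k := by
    intro g
    rw [← himg, Finset.sum_image (fun x _ y _ h => Fin.castLE_injective hd h)]
  have hcross : (∑ k ∈ s, p k) * (∑ k ∈ sᶜ, a k)
      ≤ (∑ k ∈ s, a k) * (∑ k ∈ sᶜ, p k) := by
    rw [Finset.sum_mul_sum, Finset.sum_mul_sum]
    refine Finset.sum_le_sum fun j hj => Finset.sum_le_sum fun k hk => ?_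
    have hjlt : (j : ℕ) < dr := by
      simpa [hs] using hj
    have hkge : ¬ (k : ℕ) < dr := by
      simp only [hs, Finset.mem_compl, Finset.mem_filter, Finset.mem_univ, true_and] at hk
      exact hk
    have hjk : E j ≤ E k := hE (by simp only [Fin.le_def]; omega)
    have hr := hR3 j k hjk
    have h1 : Real.exp (β * E j) * a j = 1 := by
      simp only [ha]; rw [← Real.exp_add]; simp
    have h2 : Real.exp (β * E k) * a k = 1 := by
      simp only [ha]; rw [← Real.exp_add]; simp
    have e3 : (p j * Real.exp (β * E j)) * (a j * a k) = p j * a k := by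
      calc (p j * Real.exp (β * E j)) * (a j * a k)
          = p j * a k * (Real.exp (β * E j) * a j) := by ring
        _ = p j * a k := by rw [h1]; ring
    have e4 : (p k * Real.exp (β * E k)) * (a j * a k) = p k * a j := by
      calc (p k * Real.exp (β * E k)) * (a j * a k)
          = p k * a j * (Real.exp (β * E k) * a k) := by ring
        _ = p k * a j := by rw [h2]; ring
    calc p j * a k = (p j * Real.exp (β * E j)) * (a j * a k) := e3.symm
      _ ≤ (p k * Real.exp (β * E k)) * (a j * a k) :=
          mul_le_mul_of_nonneg_right hr (mul_nonneg (haPos j).le (haPos k).le)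
      _ = p k * a j := e4
      _ = a j * p k := by ring
  have hsplitA : ZS = (∑ k ∈ s, a k) + ∑ k ∈ sᶜ, a k := by
    rw [hZS, ← Finset.sum_add_sum_compl s a]
  have hsplitP : (1 : ℝ) = (∑ k ∈ s, p k) + ∑ k ∈ sᶜ, p k := by
    rw [← hp1, ← Finset.sum_add_sum_compl s p]
  have hZreq : Zr = ∑ k ∈ s, a k := by rw [hZr]; exact hsum a
  have hS1eq : (∑ j : Fin dr, p (Fin.castLE hd j)) = ∑ k ∈ s, p k := hsum p
  have hmain : (∑ j : Fin dr, p (Fin.castLE hd j)) * ZS ≤ Zr := by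
    rw [hS1eq, hZreq, hsplitA]
    nlinarith [hcross, hsplitP, Finset.sum_nonneg (fun k (_ : k ∈ s) => (haPos k).le),
      Finset.sum_nonneg (fun k (_ : k ∈ s) => hp0 k)]
  have hfinal : (∑ j : Fin dr, p (Fin.castLE hd j)) * (a z / Zr) ≤ a z / ZS := by
    rw [show (∑ j : Fin dr, p (Fin.castLE hd j)) * (a z / Zr)
        = ((∑ j : Fin dr, p (Fin.castLE hd j)) * a z) / Zr by ring,
      div_le_div_iff₀ hZrPos hZSPos]
    nlinarith [mul_le_mul_of_nonneg_left hmain (haPos z).le]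
  exact hstep1.trans hfinal
end

section
/- Let β > 0, let d_S ≥ d_r ≥ 1 be integers, let E : Fin d_S → ℝ be nondecreasing, and let p be a probability distribution on Fin d_S satisfying condition (R3). Then for every j < d_r and every k' < d_S, j' < d_r with E_{k'} + E_{j'} = E_0 + E_j, one has p_{k'}·exp(−β·E_{j'}) ≤ p_j·exp(−β·E_0). Equivalently, p_{k'}·τ^r_{j'} ≤ p_j·τ^r_0, i.e. within each joint energy eigenspace containing a state of the form |0,j⟩, the largest joint population p_{k'}·τ^r_{j'} is the one at (j,0). (Key lemma in the proof of the paper's Theorem 2.) -/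
open scoped BigOperators

/-- Key lemma in the proof of the paper's Theorem 2: within each joint energy eigenspace
containing a state of the form |0,j⟩, the largest joint population p_{k'}·τ^r_{j'} is the
one at (j,0), i.e. p_{k'}·exp(−β·E_{j'}) ≤ p_j·exp(−β·E_0). -/
theorem largest_population_in_subspace
    (β : ℝ) (hβ : 0 < β) (dS dr : ℕ) (hdS : 0 < dS) (hdr : 0 < dr) (hd : dr ≤ dS)
    (E : Fin dS → ℝ) (hE : Monotone E)
    (p : Fin dS → ℝ) (hp0 : ∀ k, 0 ≤ p k) (hp1 : ∑ k, p k = 1)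
    (hR3 : ∀ k k' : Fin dS, E k ≤ E k' →
      p k * Real.exp (β * E k) ≤ p k' * Real.exp (β * E k'))
    (j : Fin dr) (k' : Fin dS) (j' : Fin dr)
    (hsub : E k' + E (Fin.castLE hd j') = E ⟨0, hdS⟩ + E (Fin.castLE hd j)) :
    p k' * Real.exp (-β * E (Fin.castLE hd j'))
      ≤ p (Fin.castLE hd j) * Real.exp (-β * E ⟨0, hdS⟩) := by
  have h0 : E ⟨0, hdS⟩ ≤ E (Fin.castLE hd j') := hE (by simp [Fin.le_def])
  have hk : E k' ≤ E (Fin.castLE hd j) := by linarith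
  have h := hR3 k' (Fin.castLE hd j) hk
  have h2 := mul_le_mul_of_nonneg_right h
    (Real.exp_nonneg (-β * (E ⟨0, hdS⟩ + E (Fin.castLE hd j))))
  calc p k' * Real.exp (-β * E (Fin.castLE hd j'))
      = p k' * Real.exp (β * E k') *
        Real.exp (-β * (E ⟨0, hdS⟩ + E (Fin.castLE hd j))) := by
        rw [mul_assoc, ← Real.exp_add]; congr 1
        exact congrArg Real.exp (by linear_combination -β * hsub)
    _ ≤ p (Fin.castLE hd j) * Real.exp (β * E (Fin.castLE hd j)) *
        Real.exp (-β * (E ⟨0, hdS⟩ + E (Fin.castLE hd j))) := h2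
    _ = p (Fin.castLE hd j) * Real.exp (-β * E ⟨0, hdS⟩) := by
        rw [mul_assoc, ← Real.exp_add]; congr 2; ring
end

section
/- Let β > 0, let d_S ≥ d_r ≥ 1 be integers, let E : Fin d_S → ℝ be nondecreasing, and let p be a probability distribution on Fin d_S satisfying condition (R3). Then (Σ_{j<d_r} p_j) / (Σ_{j<d_r} exp(−β·E_j)) ≤ 1 / (Σ_{k<d_S} exp(−β·E_k)); equivalently, Σ_{j<d_r} p_j·τ^r_0 ≤ exp(−β·E_0)/Σ_{k<d_S} exp(−β·E_k), where τ^r_0 = exp(−β·E_0)/Σ_{i<d_r} exp(−β·E_i). (Final mediant-type inequality in the proof of the paper's Theorem 2.) -/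
open scoped BigOperators

/-- Final mediant-type inequality in the proof of the paper's Theorem 2:
(Σ_{j<d_r} p_j)/(Σ_{j<d_r} e^{−βE_j}) ≤ 1/(Σ_{k<d_S} e^{−βE_k}) for a distribution p
satisfying (R3). -/
theorem mediant_inequality_R3
    (β : ℝ) (hβ : 0 < β) (dS dr : ℕ) (hdS : 0 < dS) (hdr : 0 < dr) (hd : dr ≤ dS)
    (E : Fin dS → ℝ) (hE : Monotone E)
    (p : Fin dS → ℝ) (hp0 : ∀ k, 0 ≤ p k) (hp1 : ∑ k, p k = 1)
    (hR3 : ∀ k k' : Fin dS, E k ≤ E k' →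
      p k * Real.exp (β * E k) ≤ p k' * Real.exp (β * E k')) :
    (∑ j : Fin dr, p (Fin.castLE hd j)) /
        (∑ j : Fin dr, Real.exp (-β * E (Fin.castLE hd j)))
      ≤ 1 / (∑ k : Fin dS, Real.exp (-β * E k)) := by
  classical
  set S : Finset (Fin dS) := Finset.univ.filter (fun k : Fin dS => (k : ℕ) < dr) with hS
  have hmap : (Finset.univ.map ⟨Fin.castLE hd, Fin.castLE_injective hd⟩) = S := by
    ext k
    simp only [Finset.mem_map, Finset.mem_univ, true_and, hS, Finset.mem_filter,
      Function.Embedding.coeFn_mk]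
    constructor
    · rintro ⟨j, rfl⟩; exact j.2
    · intro hk; exact ⟨⟨k, hk⟩, rfl⟩
  have hreindex : ∀ f : Fin dS → ℝ,
      ∑ j : Fin dr, f (Fin.castLE hd j) = ∑ k ∈ S, f k := by
    intro f
    rw [← hmap, Finset.sum_map]
    rfl
  have hBpos : 0 < ∑ j : Fin dr, Real.exp (-β * E (Fin.castLE hd j)) :=
    Finset.sum_pos (fun j _ => Real.exp_pos _) ⟨⟨0, hdr⟩, Finset.mem_univ _⟩
  have hCpos : 0 < ∑ k : Fin dS, Real.exp (-β * E k) :=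
    Finset.sum_pos (fun k _ => Real.exp_pos _) ⟨⟨0, hdS⟩, Finset.mem_univ _⟩
  rw [div_le_div_iff₀ hBpos hCpos, one_mul]
  rw [hreindex p, hreindex (fun k => Real.exp (-β * E k))]
  -- split total sums
  have hCsplit : ∑ k : Fin dS, Real.exp (-β * E k)
      = (∑ k ∈ S, Real.exp (-β * E k)) + ∑ k ∈ Sᶜ, Real.exp (-β * E k) :=
    (Finset.sum_add_sum_compl S _).symm
  have hpsplit : (∑ k ∈ S, p k) + ∑ k ∈ Sᶜ, p k = 1 := by
    rw [Finset.sum_add_sum_compl]; exact hp1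
  rw [hCsplit]
  have key : (∑ k ∈ S, p k) * (∑ k ∈ Sᶜ, Real.exp (-β * E k))
      ≤ (∑ k ∈ Sᶜ, p k) * (∑ k ∈ S, Real.exp (-β * E k)) := by
    rw [Finset.sum_mul_sum, Finset.sum_mul_sum]
    rw [Finset.sum_comm]
    refine Finset.sum_le_sum fun k hk => Finset.sum_le_sum fun j hj => ?_
    have hjS : (j : ℕ) < dr := by simpa [hS] using hj
    have hkS : ¬ (k : ℕ) < dr := by
      simp only [Finset.mem_compl, hS, Finset.mem_filter, Finset.mem_univ, true_and] at hk
      exact hk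
    have hjk : E j ≤ E k := hE (by
      have : (j : ℕ) ≤ (k : ℕ) := le_trans (le_of_lt hjS) (le_of_not_gt hkS)
      exact this)
    have h := hR3 j k hjk
    have hj' : -β * E j = -(β * E j) := by ring
    have hk' : -β * E k = -(β * E k) := by ring
    rw [hj', hk', Real.exp_neg, Real.exp_neg, ← div_eq_mul_inv, ← div_eq_mul_inv,
      div_le_div_iff₀ (Real.exp_pos _) (Real.exp_pos _)]
    exact h
  nlinarith [key, Finset.sum_nonneg (fun k (_ : k ∈ S) => hp0 k),
    Finset.sum_nonneg (fun k (_ : k ∈ Sᶜ) => hp0 k), hpsplit,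
    Finset.sum_nonneg (fun k (_ : k ∈ S) => (Real.exp_pos (-β * E k)).le)]
end

section
/- Let β > 0, let μ ≥ ν ≥ 1 and d ≥ 1 be integers, and let ε : Fin d → ℝ satisfy ε_0 = 0 and ε_l ≥ 0 for all l. For configurations K : Fin μ → Fin d write E(K) = Σ_{η<μ} ε(K_η), and similarly E(J) for J : Fin ν → Fin d. Let p be a probability distribution on the system configurations (Fin μ → Fin d) satisfying the energy-ordered condition (R3): p_K·exp(β·E(K)) ≤ p_{K'}·exp(β·E(K')) whenever E(K) ≤ E(K'). Let τ_J = exp(−β·E(J))/Z^ν with Z = Σ_{l<d} exp(−β·ε_l) be the molecule Gibbs distribution. Then for every unitary complex matrix U indexed by (Fin μ → Fin d) × (Fin ν → Fin d) that commutes with the diagonal matrix with entries E(K) + E(J), the output population of the all-ground system configuration O satisfies Σ_J (U·D·U†)_{(O,J),(O,J)} ≤ 1/Z^μ, where D is diagonal with D_{(K,J),(K,J)} = p_K·τ_J. (Paper's Theorem 3: no sub-bath cooling when the system is μ copies and the molecule is ν ≤ μ copies of the same particle.) -/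
open scoped BigOperators
open Matrix

private lemma exp_shift_le {X Y u v : ℝ} (h : X * Real.exp u ≤ Y * Real.exp v) :
    X * Real.exp (u - v) ≤ Y := by
  have h2 := mul_le_mul_of_nonneg_right h (Real.exp_pos (-v)).le
  calc X * Real.exp (u - v) = X * Real.exp u * Real.exp (-v) := by
        rw [mul_assoc, ← Real.exp_add]; ring_nf
    _ ≤ Y * Real.exp v * Real.exp (-v) := h2
    _ = Y := by rw [mul_assoc, ← Real.exp_add, add_neg_cancel, Real.exp_zero, mul_one]

/-- Paper's Theorem 3: the system consists of μ copies of a particle and the molecule of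
ν ≤ μ copies of the same particle. If the system distribution satisfies the energy-ordered
condition (R3), no energy-preserving collision can push the population of the all-ground
system configuration above the Gibbs value 1/Z^μ. -/
theorem no_cooling_copies
    (β : ℝ) (hβ : 0 < β) (μ ν d : ℕ) (hν : 1 ≤ ν) (hμν : ν ≤ μ) (hd : 0 < d)
    (ε : Fin d → ℝ) (hε0 : ε ⟨0, hd⟩ = 0) (hεnn : ∀ l, 0 ≤ ε l)
    (p : (Fin μ → Fin d) → ℝ) (hp0 : ∀ K, 0 ≤ p K) (hp1 : ∑ K, p K = 1)
    (hR3 : ∀ K K' : Fin μ → Fin d,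
      (∑ η, ε (K η)) ≤ (∑ η, ε (K' η)) →
      p K * Real.exp (β * ∑ η, ε (K η)) ≤ p K' * Real.exp (β * ∑ η, ε (K' η)))
    (U : Matrix ((Fin μ → Fin d) × (Fin ν → Fin d))
          ((Fin μ → Fin d) × (Fin ν → Fin d)) ℂ)
    (hU : U ∈ Matrix.unitaryGroup ((Fin μ → Fin d) × (Fin ν → Fin d)) ℂ)
    (hcomm : U * Matrix.diagonal
        (fun KJ : (Fin μ → Fin d) × (Fin ν → Fin d) =>
          (((∑ η, ε (KJ.1 η)) + ∑ η, ε (KJ.2 η) : ℝ) : ℂ))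
      = Matrix.diagonal
        (fun KJ : (Fin μ → Fin d) × (Fin ν → Fin d) =>
          (((∑ η, ε (KJ.1 η)) + ∑ η, ε (KJ.2 η) : ℝ) : ℂ)) * U) :
    ∑ J : Fin ν → Fin d,
      ((U * Matrix.diagonal
          (fun KJ : (Fin μ → Fin d) × (Fin ν → Fin d) =>
            ((p KJ.1 * (Real.exp (-β * ∑ η, ε (KJ.2 η)) /
              (∑ l : Fin d, Real.exp (-β * ε l)) ^ ν) : ℝ) : ℂ)) * Uᴴ)
        ((fun _ => ⟨0, hd⟩), J) ((fun _ => ⟨0, hd⟩), J)).re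
    ≤ 1 / (∑ l : Fin d, Real.exp (-β * ε l)) ^ μ := by
  classical
  set Z : ℝ := ∑ l : Fin d, Real.exp (-β * ε l) with hZdef
  have hZpos : 0 < Z :=
    Finset.sum_pos (fun l _ => Real.exp_pos _) ⟨⟨0, hd⟩, Finset.mem_univ _⟩
  -- energy notations
  set Es : (Fin μ → Fin d) → ℝ := fun K => ∑ η, ε (K η) with hEs
  set Em : (Fin ν → Fin d) → ℝ := fun J => ∑ η, ε (J η) with hEm
  set El : (Fin (μ - ν) → Fin d) → ℝ := fun L => ∑ η, ε (L η) with hEl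
  have hEsnn : ∀ K, 0 ≤ Es K := fun K => Finset.sum_nonneg fun _ _ => hεnn _
  have hEmnn : ∀ J, 0 ≤ Em J := fun J => Finset.sum_nonneg fun _ _ => hεnn _
  have hElnn : ∀ L, 0 ≤ El L := fun L => Finset.sum_nonneg fun _ _ => hεnn _
  set O : Fin μ → Fin d := fun _ => ⟨0, hd⟩ with hO
  have hEsO : Es O = 0 := by
    simp [hEs, hO, hε0]
  -- glue
  set glue : (Fin ν → Fin d) → (Fin (μ - ν) → Fin d) → (Fin μ → Fin d) :=
    fun J L η => if h : (η : ℕ) < ν then J ⟨η, h⟩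
      else L ⟨(η : ℕ) - ν, by have := η.isLt; omega⟩ with hglue
  -- energy of glued configuration
  have hglueE : ∀ (J : Fin ν → Fin d) (L : Fin (μ - ν) → Fin d),
      Es (glue J L) = Em J + El L := by
    intro J L
    set f : ℕ → ℝ := fun n =>
      if h : n < ν then ε (J ⟨n, h⟩)
      else if h2 : n - ν < μ - ν then ε (L ⟨n - ν, h2⟩) else 0 with hf
    have h1 : ∀ η : Fin μ, ε (glue J L η) = f η.val := by
      intro η
      by_cases h : (η : ℕ) < ν
      · simp [hglue, hf, h]
      · have h2 : (η : ℕ) - ν < μ - ν := by have := η.isLt; omega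
        simp [hglue, hf, h, h2]
    have h2 : Es (glue J L) = ∑ i ∈ Finset.range μ, f i := by
      calc Es (glue J L) = ∑ η : Fin μ, f η.val :=
            Finset.sum_congr rfl (fun η _ => h1 η)
        _ = ∑ i ∈ Finset.range μ, f i := Fin.sum_univ_eq_sum_range f μ
    have hμ : μ = ν + (μ - ν) := by omega
    rw [h2, hμ, Finset.sum_range_add]
    congr 1
    · rw [hEm, ← Fin.sum_univ_eq_sum_range]
      refine Finset.sum_congr rfl fun i _ => ?_
      simp [hf, i.isLt]
    · rw [hEl, ← Fin.sum_univ_eq_sum_range]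
      refine Finset.sum_congr rfl fun i _ => ?_
      have hn : ¬ (ν + (i : ℕ) < ν) := by omega
      have hlt : ν + (i : ℕ) - ν < μ - ν := by have := i.isLt; omega
      simp [hf, hn, hlt]
  have hglue_inj : Function.Injective
      (fun JL : (Fin ν → Fin d) × (Fin (μ - ν) → Fin d) => glue JL.1 JL.2) := by
    intro x y hxy
    have hJ : x.1 = y.1 := by
      funext i
      have h := congrFun hxy ⟨(i : ℕ), lt_of_lt_of_le i.isLt hμν⟩
      simpa [hglue, i.isLt] using h
    have hL : x.2 = y.2 := by
      funext i
      have hlt : ν + (i : ℕ) < μ := by have := i.isLt; omega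
      have h := congrFun hxy ⟨ν + (i : ℕ), hlt⟩
      have hn : ¬ (ν + (i : ℕ) < ν) := by omega
      simpa [hglue, hn, Nat.add_sub_cancel_left] using h
    exact Prod.ext hJ hL
  -- KJ : embed a molecule configuration into the system
  set KJ : (Fin ν → Fin d) → (Fin μ → Fin d) := fun J => glue J (fun _ => ⟨0, hd⟩)
    with hKJ
  have hKJE : ∀ J, Es (KJ J) = Em J := by
    intro J
    have h := hglueE J (fun _ => ⟨0, hd⟩)
    rw [show KJ J = glue J (fun _ => ⟨0, hd⟩) from rfl, h]
    have : El (fun _ => ⟨0, hd⟩) = 0 := by simp [hEl, hε0]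
    rw [this, add_zero]
  -- powers of Z as sums over configurations
  have hpow : ∀ (n : ℕ), Z ^ n = ∑ L : Fin n → Fin d, Real.exp (-β * ∑ η, ε (L η)) := by
    intro n
    rw [hZdef, Fintype.sum_pow (fun l => Real.exp (-β * ε l)) n]
    refine Finset.sum_congr rfl fun L _ => ?_
    rw [← Real.exp_sum]
    congr 1
    rw [Finset.mul_sum]
  -- step 4 : ∑_J p (KJ J) ≤ 1 / Z ^ (μ - ν)
  have hZepos : 0 < Z ^ (μ - ν) := pow_pos hZpos _
  have hstep4 : ∑ J : Fin ν → Fin d, p (KJ J) ≤ 1 / Z ^ (μ - ν) := by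
    rw [le_div_iff₀ hZepos]
    have hterm : ∀ (J : Fin ν → Fin d) (L : Fin (μ - ν) → Fin d),
        p (KJ J) * Real.exp (-β * El L) ≤ p (glue J L) := by
      intro J L
      have hle : Es (KJ J) ≤ Es (glue J L) := by
        rw [hKJE, hglueE]; have := hElnn L; linarith
      have h := hR3 (KJ J) (glue J L) hle
      rw [show (∑ η, ε (KJ J η)) = Es (KJ J) from rfl,
        show (∑ η, ε (glue J L η)) = Es (glue J L) from rfl] at h
      rw [hKJE, hglueE] at h
      have h2 := exp_shift_le h
      have : β * Em J - β * (Em J + El L) = -β * El L := by ring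
      rwa [this] at h2
    calc (∑ J : Fin ν → Fin d, p (KJ J)) * Z ^ (μ - ν)
        = ∑ J : Fin ν → Fin d, ∑ L : Fin (μ - ν) → Fin d,
            p (KJ J) * Real.exp (-β * El L) := by
          rw [hpow (μ - ν)]
          rw [Finset.sum_mul]
          refine Finset.sum_congr rfl fun J _ => ?_
          rw [Finset.mul_sum]
      _ ≤ ∑ J : Fin ν → Fin d, ∑ L : Fin (μ - ν) → Fin d, p (glue J L) :=
          Finset.sum_le_sum fun J _ => Finset.sum_le_sum fun L _ => hterm J L
      _ = ∑ x : (Fin ν → Fin d) × (Fin (μ - ν) → Fin d), p (glue x.1 x.2) := by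
          rw [Fintype.sum_prod_type]
      _ = ∑ K ∈ Finset.univ.image
            (fun x : (Fin ν → Fin d) × (Fin (μ - ν) → Fin d) => glue x.1 x.2), p K := by
          rw [Finset.sum_image (fun a _ b _ h => hglue_inj h)]
      _ ≤ ∑ K : Fin μ → Fin d, p K :=
          Finset.sum_le_sum_of_subset_of_nonneg (Finset.subset_univ _)
            (fun K _ _ => hp0 K)
      _ = 1 := hp1
  -- matrix facts
  set dx : (Fin μ → Fin d) × (Fin ν → Fin d) → ℝ := fun x => p x.1 * (Real.exp (-β * Em x.2) / Z ^ ν) with hdx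
  have hdxnn : ∀ x, 0 ≤ dx x := fun x =>
    mul_nonneg (hp0 _) (div_nonneg (Real.exp_pos _).le (pow_pos hZpos _).le)
  have hrow : ∀ J : Fin ν → Fin d, ∑ x : (Fin μ → Fin d) × (Fin ν → Fin d), Complex.normSq (U (O, J) x) = 1 := by
    intro J
    have h1 : U * star U = 1 := (Matrix.mem_unitaryGroup_iff).mp hU
    have h2 : (U * star U) (O, J) (O, J) = 1 := by rw [h1]; simp [Matrix.one_apply]
    rw [Matrix.mul_apply] at h2
    have h3 := congrArg Complex.re h2
    rw [Complex.re_sum] at h3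
    simp only [Complex.one_re] at h3
    rw [← h3]
    refine Finset.sum_congr rfl fun x _ => ?_
    rw [Matrix.star_apply,
      show star (U (O, J) x) = (starRingEnd ℂ) (U (O, J) x) from rfl,
      Complex.mul_conj, Complex.ofReal_re]
  have hoff : ∀ (J : Fin ν → Fin d) (x : (Fin μ → Fin d) × (Fin ν → Fin d)),
      U (O, J) x ≠ 0 → Es x.1 + Em x.2 = Em J := by
    intro J x hUx
    have h := congrFun (congrFun hcomm (O, J)) x
    rw [Matrix.mul_diagonal, Matrix.diagonal_mul] at h
    have h2 := mul_left_cancel₀ hUx (h.trans (mul_comm _ _))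
    have h3 : ((∑ η : Fin μ, ε (x.1 η)) + ∑ η : Fin ν, ε (x.2 η) : ℝ)
        = ((∑ η : Fin μ, ε ((O, J).1 η)) + ∑ η : Fin ν, ε ((O, J).2 η) : ℝ) := by
      exact_mod_cast h2
    have h4 : (∑ η : Fin μ, ε (O η) : ℝ) = 0 := hEsO
    rw [show ((O, J).1) = O from rfl, show ((O, J).2) = J from rfl, h4, zero_add] at h3
    exact h3
  -- entry formula
  have hentry : ∀ J : Fin ν → Fin d,
      ((U * Matrix.diagonal (fun x : (Fin μ → Fin d) × (Fin ν → Fin d) => ((dx x : ℝ) : ℂ)) * Uᴴ) (O, J) (O, J)).re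
      = ∑ x : (Fin μ → Fin d) × (Fin ν → Fin d), dx x * Complex.normSq (U (O, J) x) := by
    intro J
    rw [Matrix.mul_apply, Complex.re_sum]
    refine Finset.sum_congr rfl fun x _ => ?_
    rw [Matrix.mul_diagonal, Matrix.conjTranspose_apply]
    rw [mul_comm (U (O, J) x), mul_assoc,
      show star (U (O, J) x) = (starRingEnd ℂ) (U (O, J) x) from rfl,
      Complex.mul_conj, ← Complex.ofReal_mul, Complex.ofReal_re]
  -- per-row bound
  have hrowbound : ∀ J : Fin ν → Fin d,
      ∑ x : (Fin μ → Fin d) × (Fin ν → Fin d), dx x * Complex.normSq (U (O, J) x) ≤ p (KJ J) / Z ^ ν := by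
    intro J
    calc ∑ x : (Fin μ → Fin d) × (Fin ν → Fin d), dx x * Complex.normSq (U (O, J) x)
        ≤ ∑ x : (Fin μ → Fin d) × (Fin ν → Fin d), (p (KJ J) / Z ^ ν) * Complex.normSq (U (O, J) x) := by
          refine Finset.sum_le_sum fun x _ => ?_
          by_cases hUx : U (O, J) x = 0
          · simp [hUx]
          · refine mul_le_mul_of_nonneg_right ?_ (Complex.normSq_nonneg _)
            have hshell := hoff J x hUx
            have hle : Es x.1 ≤ Es (KJ J) := by
              rw [hKJE]; have := hEmnn x.2; linarith
            have h := hR3 x.1 (KJ J) hle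
            rw [show (∑ η, ε (x.1 η)) = Es x.1 from rfl,
              show (∑ η, ε (KJ J η)) = Es (KJ J) from rfl, hKJE] at h
            have h2 := exp_shift_le h
            have h3 : β * Es x.1 - β * Em J = -β * Em x.2 := by
              rw [← hshell]; ring
            rw [h3] at h2
            have h5 := mul_le_mul_of_nonneg_right h2
              (inv_nonneg.mpr (pow_pos hZpos ν).le)
            calc dx x = p x.1 * Real.exp (-β * Em x.2) * (Z ^ ν)⁻¹ := by
                  rw [show dx x = p x.1 * (Real.exp (-β * Em x.2) / Z ^ ν) from rfl,
                    div_eq_mul_inv]; ring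
              _ ≤ p (KJ J) * (Z ^ ν)⁻¹ := h5
              _ = p (KJ J) / Z ^ ν := (div_eq_mul_inv _ _).symm
      _ = (p (KJ J) / Z ^ ν) * ∑ x : (Fin μ → Fin d) × (Fin ν → Fin d), Complex.normSq (U (O, J) x) := by
          rw [Finset.mul_sum]
      _ = p (KJ J) / Z ^ ν := by rw [hrow J, mul_one]
  -- main chain
  have hgoal1 : ∑ J : Fin ν → Fin d,
      ((U * Matrix.diagonal (fun x : (Fin μ → Fin d) × (Fin ν → Fin d) => ((dx x : ℝ) : ℂ)) * Uᴴ) (O, J) (O, J)).re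
      ≤ 1 / Z ^ μ := by
    calc ∑ J : Fin ν → Fin d,
        ((U * Matrix.diagonal (fun x : (Fin μ → Fin d) × (Fin ν → Fin d) => ((dx x : ℝ) : ℂ)) * Uᴴ) (O, J) (O, J)).re
        = ∑ J : Fin ν → Fin d, ∑ x : (Fin μ → Fin d) × (Fin ν → Fin d), dx x * Complex.normSq (U (O, J) x) :=
          Finset.sum_congr rfl fun J _ => hentry J
      _ ≤ ∑ J : Fin ν → Fin d, p (KJ J) / Z ^ ν :=
          Finset.sum_le_sum fun J _ => hrowbound J
      _ = (∑ J : Fin ν → Fin d, p (KJ J)) / Z ^ ν := by rw [Finset.sum_div]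
      _ ≤ (1 / Z ^ (μ - ν)) / Z ^ ν :=
          div_le_div_of_nonneg_right hstep4 (pow_pos hZpos ν).le
      _ = 1 / Z ^ μ := by
          rw [div_div, ← pow_add, Nat.sub_add_cancel hμν]
  exact hgoal1
end

section
/- Let β > 0, E > 0 and q = exp(−β·E). Consider a qutrit system with energies (0, E, 2E) initially in the pure excited distribution p = (0, 0, 1), and a qubit molecule with energies (0, 2E) in its Gibbs state τ^r = (1/(1+q²), q²/(1+q²)). Then there exists a unitary complex matrix U indexed by (Fin 3) × (Fin 2), commuting with the diagonal matrix H_{(k,j)} = k·E + 2j·E, such that the output ground-state population satisfies Σ_{j<2} (U·D·U†)_{(0,j),(0,j)} = 1/(1+q²) > 1/(1+q+q²), where D is diagonal with D_{(k,j),(k,j)} = p_k·τ^r_j. (This shows condition (R2) — matching of the lowest spectra — is essential for the paper's Theorem 2: although (R1) and (R3) hold, the system is cooled below the Gibbs ground population 1/(1+q+q²).) -/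
open scoped BigOperators
open Matrix

noncomputable section

private def sw : Equiv.Perm (Fin 3 × Fin 2) :=
  Equiv.swap ((2 : Fin 3), (0 : Fin 2)) ((0 : Fin 3), (1 : Fin 2))

private def Usw : Matrix (Fin 3 × Fin 2) (Fin 3 × Fin 2) ℂ := sw.toPEquiv.toMatrix

private lemma Usw_conjTranspose : Uswᴴ = sw.symm.toPEquiv.toMatrix := by
  rw [Equiv.toPEquiv_symm, PEquiv.toMatrix_symm]
  ext i j
  simp [Usw, Matrix.conjTranspose_apply, PEquiv.toMatrix_apply, apply_ite (star : ℂ → ℂ)]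

private lemma Usw_mul_conjTranspose : Usw * Uswᴴ = 1 := by
  rw [Usw_conjTranspose, Usw, ← PEquiv.toMatrix_trans, ← Equiv.toPEquiv_trans,
    Equiv.self_trans_symm, Equiv.toPEquiv_refl, PEquiv.toMatrix_refl]

/-- Condition (R2) is essential for the paper's Theorem 2: a qutrit system with energies
(0,E,2E) in the pure excited state, colliding with a qubit molecule with energies (0,2E) in
its Gibbs state, can be cooled to ground population 1/(1+q²), which exceeds the qutrit Gibbs
ground population 1/(1+q+q²). -/
theorem R2_essential_counterexample
    (β E : ℝ) (hβ : 0 < β) (hE : 0 < E) (q : ℝ) (hq : q = Real.exp (-β * E)) :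
    ∃ U : Matrix (Fin 3 × Fin 2) (Fin 3 × Fin 2) ℂ,
      U ∈ Matrix.unitaryGroup (Fin 3 × Fin 2) ℂ ∧
      U * Matrix.diagonal
          (fun kj : Fin 3 × Fin 2 => (((kj.1 : ℕ) * E + 2 * (kj.2 : ℕ) * E : ℝ) : ℂ))
        = Matrix.diagonal
          (fun kj : Fin 3 × Fin 2 => (((kj.1 : ℕ) * E + 2 * (kj.2 : ℕ) * E : ℝ) : ℂ)) * U ∧
      (∑ j : Fin 2,
        (U * Matrix.diagonal
            (fun kj : Fin 3 × Fin 2 =>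
              (((if kj.1 = 2 then (1 : ℝ) else 0) *
                (q ^ (2 * (kj.2 : ℕ)) / (1 + q ^ 2)) : ℝ) : ℂ)) * Uᴴ)
          ((0 : Fin 3), j) ((0 : Fin 3), j))
        = ((1 / (1 + q ^ 2) : ℝ) : ℂ) ∧
      1 / (1 + q + q ^ 2) < 1 / (1 + q ^ 2) := by
  have hq0 : 0 < q := hq ▸ Real.exp_pos _
  have hsw : ∀ i : Fin 3 × Fin 2,
      (((sw i).1 : ℕ) * E + 2 * ((sw i).2 : ℕ) * E : ℝ) =
      ((i.1 : ℕ) * E + 2 * (i.2 : ℕ) * E : ℝ) := by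
    intro i
    rcases eq_or_ne i ((2 : Fin 3), (0 : Fin 2)) with h | h
    · subst h; rw [show sw ((2 : Fin 3), (0 : Fin 2)) = ((0 : Fin 3), (1 : Fin 2)) from
        Equiv.swap_apply_left _ _]
      norm_num
    rcases eq_or_ne i ((0 : Fin 3), (1 : Fin 2)) with h' | h'
    · subst h'; rw [show sw ((0 : Fin 3), (1 : Fin 2)) = ((2 : Fin 3), (0 : Fin 2)) from
        Equiv.swap_apply_right _ _]
      norm_num
    · rw [show sw i = i from Equiv.swap_apply_of_ne_of_ne h h']
  refine ⟨Usw, ?_, ?_, ?_, ?_⟩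
  · rw [Matrix.mem_unitaryGroup_iff, Matrix.star_eq_conjTranspose]
    exact Usw_mul_conjTranspose
  · ext i j
    rw [Matrix.mul_diagonal, Matrix.diagonal_mul]
    by_cases h : sw i = j
    · have : ((((j.1 : ℕ)) * E + 2 * ((j.2 : ℕ)) * E : ℝ) : ℂ)
          = ((((i.1 : ℕ)) * E + 2 * ((i.2 : ℕ)) * E : ℝ) : ℂ) := by
        rw [← h]; exact_mod_cast congrArg Complex.ofReal (hsw i)
      rw [this, mul_comm]
    · simp [Usw, PEquiv.toMatrix_apply, Equiv.toPEquiv_apply, h]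
  · have key : ∀ i : Fin 3 × Fin 2,
        (Usw * Matrix.diagonal
            (fun kj : Fin 3 × Fin 2 =>
              (((if kj.1 = 2 then (1 : ℝ) else 0) *
                (q ^ (2 * (kj.2 : ℕ)) / (1 + q ^ 2)) : ℝ) : ℂ)) * Uswᴴ) i i
          = (((if (sw i).1 = 2 then (1 : ℝ) else 0) *
                (q ^ (2 * ((sw i).2 : ℕ)) / (1 + q ^ 2)) : ℝ) : ℂ) := by
      intro i
      rw [Usw_conjTranspose, Usw, PEquiv.toMatrix_toPEquiv_mul,
        PEquiv.mul_toMatrix_toPEquiv, Equiv.symm_symm]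
      simp [Matrix.submatrix_apply, Matrix.diagonal_apply_eq]
    rw [Fin.sum_univ_two, key, key]
    have h0 : sw ((0 : Fin 3), (0 : Fin 2)) = ((0 : Fin 3), (0 : Fin 2)) := by decide
    have h1 : sw ((0 : Fin 3), (1 : Fin 2)) = ((2 : Fin 3), (0 : Fin 2)) := by decide
    rw [h0, h1]
    norm_num [show ((0 : Fin 3)) ≠ 2 from by decide]
  · rw [div_lt_div_iff₀ (by positivity) (by positivity)]
    nlinarith
end
end

section
/- Let β > 0, E > 0, q = exp(−β·E), τ_0 = 1/(1+q), τ_1 = q/(1+q). Let U be a unitary complex matrix indexed by (Fin 2) × (Fin 2) commuting with the diagonal matrix H_{(a,b)} = (a+b)·E and with U_{(0,0),(0,0)} = 1. Write u = U_{(0,1),(0,1)}, w = U_{(1,0),(1,0)}, v = U_{(1,1),(1,1)}. Then for every 2×2 density matrix ρ and every N ≥ 1, the N-fold collision output σ = T_U^N(ρ) satisfies σ_{00} = τ_0 + |u|^{2N}·(ρ_{00} − τ_0) and σ_{01} = (τ_1·u·conj(v) + τ_0·conj(w))^N · ρ_{01}. (Equations (rho00)–(rho01) used in the proof of the paper's Theorem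 1.) -/
open scoped BigOperators
open Matrix
open scoped ComplexOrder

/-- The qubit collision channel: the system qubit interacts with a molecule qubit in the
Gibbs state diag(1/(1+q), q/(1+q)) via the joint unitary `U`, and the molecule is traced out. -/
noncomputable def collide (q : ℝ) (U : Matrix (Fin 2 × Fin 2) (Fin 2 × Fin 2) ℂ)
    (ρ : Matrix (Fin 2) (Fin 2) ℂ) : Matrix (Fin 2) (Fin 2) ℂ :=
  Matrix.of fun a b => ∑ c : Fin 2,
    (U * (Matrix.kroneckerMap (· * ·) ρ
        (Matrix.diagonal fun j : Fin 2 => ((q ^ (j : ℕ) / (1 + q) : ℝ) : ℂ))) * Uᴴ)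
      (a, c) (b, c)

/-- Equations (rho00)–(rho01) of the paper (used in the proof of Theorem 1): the N-fold
collision output of a qubit under an energy-preserving unitary with U_{(00),(00)} = 1. -/
theorem qubit_collision_iterates
    (β E : ℝ) (hβ : 0 < β) (hE : 0 < E) (q : ℝ) (hq : q = Real.exp (-β * E))
    (τ₀ τ₁ : ℝ) (hτ₀ : τ₀ = 1 / (1 + q)) (hτ₁ : τ₁ = q / (1 + q))
    (U : Matrix (Fin 2 × Fin 2) (Fin 2 × Fin 2) ℂ)
    (hU : U ∈ Matrix.unitaryGroup (Fin 2 × Fin 2) ℂ)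
    (hcomm : U * Matrix.diagonal
        (fun ab : Fin 2 × Fin 2 => ((((ab.1 : ℕ) + (ab.2 : ℕ)) * E : ℝ) : ℂ))
      = Matrix.diagonal
        (fun ab : Fin 2 × Fin 2 => ((((ab.1 : ℕ) + (ab.2 : ℕ)) * E : ℝ) : ℂ)) * U)
    (h00 : U ((0, 0) : Fin 2 × Fin 2) ((0, 0) : Fin 2 × Fin 2) = 1)
    (u w v : ℂ)
    (hu : u = U ((0, 1) : Fin 2 × Fin 2) ((0, 1) : Fin 2 × Fin 2))
    (hw : w = U ((1, 0) : Fin 2 × Fin 2) ((1, 0) : Fin 2 × Fin 2))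
    (hv : v = U ((1, 1) : Fin 2 × Fin 2) ((1, 1) : Fin 2 × Fin 2))
    (ρ : Matrix (Fin 2) (Fin 2) ℂ) (hρ : ρ.PosSemidef) (htr : ρ.trace = 1)
    (N : ℕ) (hN : 1 ≤ N) :
    ((collide q U)^[N] ρ) 0 0
        = (τ₀ : ℂ) + (‖u‖ : ℝ) ^ (2 * N) * (ρ 0 0 - (τ₀ : ℂ)) ∧
    ((collide q U)^[N] ρ) 0 1
        = ((τ₁ : ℂ) * u * (starRingEnd ℂ) v + (τ₀ : ℂ) * (starRingEnd ℂ) w) ^ N * ρ 0 1 := by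
  have hq0 : 0 < q := hq ▸ Real.exp_pos _
  have h1q : (1 : ℝ) + q ≠ 0 := by positivity
  -- zero entries of U
  have hz : ∀ a b : Fin 2 × Fin 2, ((a.1:ℕ)+(a.2:ℕ)) ≠ ((b.1:ℕ)+(b.2:ℕ)) → U a b = 0 := by
    intro a b hab
    have h := congrFun (congrFun hcomm a) b
    rw [Matrix.mul_diagonal, Matrix.diagonal_mul] at h
    by_contra hU0
    apply hab
    have h2 : ((((b.1:ℕ)+(b.2:ℕ)) * E : ℝ) : ℂ) = ((((a.1:ℕ)+(a.2:ℕ)) * E : ℝ) : ℂ) :=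
      mul_left_cancel₀ hU0 (by rw [h, mul_comm])
    have h3 : (((b.1:ℕ)+(b.2:ℕ)) : ℝ) * E = (((a.1:ℕ)+(a.2:ℕ)) : ℝ) * E := by
      exact_mod_cast h2
    have h4 : ((((b.1:ℕ)+(b.2:ℕ)) : ℕ) : ℝ) = (((a.1:ℕ)+(a.2:ℕ) : ℕ) : ℝ) := by
      push_cast at h3 ⊢; exact mul_right_cancel₀ hE.ne' h3
    exact_mod_cast h4.symm
  have z1 := hz (0,0) (0,1) (by decide)
  have z2 := hz (0,0) (1,0) (by decide)
  have z3 := hz (0,0) (1,1) (by decide)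
  have z4 := hz (0,1) (0,0) (by decide)
  have z5 := hz (1,0) (0,0) (by decide)
  have z6 := hz (1,1) (0,0) (by decide)
  have z7 := hz (0,1) (1,1) (by decide)
  have z8 := hz (1,0) (1,1) (by decide)
  have z9 := hz (1,1) (0,1) (by decide)
  have z10 := hz (1,1) (1,0) (by decide)
  set x : ℂ := U ((0,1) : Fin 2 × Fin 2) ((1,0) : Fin 2 × Fin 2) with hx
  set y : ℂ := U ((1,0) : Fin 2 × Fin 2) ((0,1) : Fin 2 × Fin 2) with hy
  -- unitarity relations
  have hUU : U * Uᴴ = 1 := by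
    have := Matrix.mem_unitaryGroup_iff.mp hU
    rwa [Matrix.star_eq_conjTranspose] at this
  have hUU' : Uᴴ * U = 1 := by
    have := Matrix.mem_unitaryGroup_iff'.mp hU
    rwa [Matrix.star_eq_conjTranspose] at this
  have r1 : u * (starRingEnd ℂ) u + x * (starRingEnd ℂ) x = 1 := by
    have h := congrFun (congrFun hUU ((0,1) : Fin 2 × Fin 2)) ((0,1) : Fin 2 × Fin 2)
    simp only [Matrix.mul_apply, Matrix.conjTranspose_apply, Fintype.sum_prod_type,
      Fin.sum_univ_two, z1, z2, z3, z4, z5, z6, z7, z8, z9, z10, star_zero, mul_zero, zero_mul,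
      add_zero, zero_add, Matrix.one_apply_eq, Complex.star_def] at h
    rw [hu, hx]
    linear_combination h
  have r2 : (starRingEnd ℂ) u * u + (starRingEnd ℂ) y * y = 1 := by
    have h := congrFun (congrFun hUU' ((0,1) : Fin 2 × Fin 2)) ((0,1) : Fin 2 × Fin 2)
    simp only [Matrix.mul_apply, Matrix.conjTranspose_apply, Fintype.sum_prod_type,
      Fin.sum_univ_two, z1, z2, z3, z4, z5, z6, z7, z8, z9, z10, star_zero, mul_zero, zero_mul,
      add_zero, zero_add, Matrix.one_apply_eq, Complex.star_def] at h
    rw [hu, hy]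
    linear_combination h
  have r3 : (starRingEnd ℂ) x * x + (starRingEnd ℂ) w * w = 1 := by
    have h := congrFun (congrFun hUU' ((1,0) : Fin 2 × Fin 2)) ((1,0) : Fin 2 × Fin 2)
    simp only [Matrix.mul_apply, Matrix.conjTranspose_apply, Fintype.sum_prod_type,
      Fin.sum_univ_two, z1, z2, z3, z4, z5, z6, z7, z8, z9, z10, star_zero, mul_zero, zero_mul,
      add_zero, zero_add, Matrix.one_apply_eq, Complex.star_def] at h
    rw [hw, hx]
    linear_combination h
  have r4 : (starRingEnd ℂ) v * v = 1 := by
    have h := congrFun (congrFun hUU' ((1,1) : Fin 2 × Fin 2)) ((1,1) : Fin 2 × Fin 2)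
    simp only [Matrix.mul_apply, Matrix.conjTranspose_apply, Fintype.sum_prod_type,
      Fin.sum_univ_two, z1, z2, z3, z4, z5, z6, z7, z8, z9, z10, star_zero, mul_zero, zero_mul,
      add_zero, zero_add, Matrix.one_apply_eq, Complex.star_def] at h
    rw [hv]
    linear_combination h
  -- tau facts
  have e0 : ((q ^ ((0 : Fin 2) : ℕ) / (1 + q) : ℝ) : ℂ) = (τ₀ : ℂ) := by
    norm_num [hτ₀]
  have e1 : ((q ^ ((1 : Fin 2) : ℕ) / (1 + q) : ℝ) : ℂ) = (τ₁ : ℂ) := by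
    norm_num [hτ₁]
  have hτsum : (τ₀ : ℂ) + (τ₁ : ℂ) = 1 := by
    rw [hτ₀, hτ₁]
    push_cast
    field_simp
  -- step lemma
  have step : ∀ σ : Matrix (Fin 2) (Fin 2) ℂ,
      collide q U σ 0 0 = (τ₀:ℂ) * σ 0 0 + (τ₁:ℂ) * (u * (starRingEnd ℂ) u) * σ 0 0
          + (τ₀:ℂ) * (x * (starRingEnd ℂ) x) * σ 1 1 ∧
      collide q U σ 0 1 = ((τ₁:ℂ) * u * (starRingEnd ℂ) v + (τ₀:ℂ) * (starRingEnd ℂ) w) * σ 0 1 ∧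
      collide q U σ 1 1 = (τ₀:ℂ) * (w * (starRingEnd ℂ) w) * σ 1 1
          + (τ₁:ℂ) * (y * (starRingEnd ℂ) y) * σ 0 0
          + (τ₁:ℂ) * (v * (starRingEnd ℂ) v) * σ 1 1 := by
    intro σ
    refine ⟨?_, ?_, ?_⟩ <;>
    · simp only [collide, Matrix.of_apply, Matrix.mul_apply, Matrix.conjTranspose_apply,
        Matrix.kroneckerMap_apply, Matrix.diagonal_apply, Fintype.sum_prod_type,
        Fin.sum_univ_two, z1, z2, z3, z4, z5, z6, z7, z8, z9, z10, h00, star_zero, star_one,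
        mul_zero, zero_mul, mul_one, one_mul, add_zero, zero_add, Fin.isValue, one_ne_zero,
        zero_ne_one, ite_true, ite_false, if_pos, if_neg, e0, e1, ← hu, ← hw, ← hv, ← hx, ← hy]
      simp only [Complex.star_def]
      ring
  -- main induction
  have main : ∀ n : ℕ,
      ((collide q U)^[n] ρ) 0 0 = (τ₀:ℂ) + (u * (starRingEnd ℂ) u) ^ n * (ρ 0 0 - (τ₀:ℂ)) ∧
      ((collide q U)^[n] ρ) 0 1
        = ((τ₁:ℂ) * u * (starRingEnd ℂ) v + (τ₀:ℂ) * (starRingEnd ℂ) w) ^ n * ρ 0 1 ∧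
      ((collide q U)^[n] ρ) 0 0 + ((collide q U)^[n] ρ) 1 1 = 1 := by
    intro n
    induction n with
    | zero =>
      refine ⟨by simp, by simp, ?_⟩
      simpa [Matrix.trace, Matrix.diag, Fin.sum_univ_two] using htr
    | succ n ih =>
      obtain ⟨ih1, ih2, ih3⟩ := ih
      set σ := (collide q U)^[n] ρ with hσ
      have h11 : σ 1 1 = 1 - σ 0 0 := by linear_combination ih3
      obtain ⟨s1, s2, s3⟩ := step σ
      rw [Function.iterate_succ_apply']
      have hx1 : x * (starRingEnd ℂ) x = 1 - u * (starRingEnd ℂ) u := by linear_combination r1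
      have hy1 : y * (starRingEnd ℂ) y = 1 - u * (starRingEnd ℂ) u := by linear_combination r2
      have hw1 : w * (starRingEnd ℂ) w = u * (starRingEnd ℂ) u := by linear_combination r3 - r1
      have hv1 : v * (starRingEnd ℂ) v = 1 := by linear_combination r4
      have hτ1c : (τ₁ : ℂ) = 1 - (τ₀ : ℂ) := by linear_combination hτsum
      refine ⟨?_, ?_, ?_⟩
      · rw [s1, hx1, h11, ih1, hτ1c]; ring
      · rw [s2, ih2]; ring
      · rw [s1, s3, hw1, hx1, hy1, hv1, h11, hτ1c]; ring
  obtain ⟨m1, m2, m3⟩ := main N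
  have hk : (((‖u‖ : ℝ) : ℂ)) ^ (2 * N) = (u * (starRingEnd ℂ) u) ^ N := by
    rw [pow_mul, Complex.mul_conj]
    norm_cast
    rw [Complex.sq_norm]
  exact ⟨by rw [m1, ← hk], m2⟩
end

section
/- Let β > 0, E > 0, q = exp(−β·E), z_τ = (1−q)/(1+q). Let ρ be a 2×2 density matrix with z(ρ) = ρ_{00} − ρ_{11} ≠ z_τ and η(ρ) = |ρ_{01}|. Then for every energy-preserving unitary U indexed by (Fin 2) × (Fin 2) and every N ≥ 1, the output σ = T_U^N(ρ) satisfies: r := (z(σ) − z_τ)/(z(ρ) − z_τ) ∈ [0, 1], and z_τ^N · η(ρ) · √r ≤ η(σ) ≤ η(ρ) · √r, where η(σ) = |σ_{01}| and z(σ) = σ_{00} − σ_{11}. (Necessity direction of the paper's Theorem 1, Eq. (cone_qubit).) -/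
open scoped BigOperators
open Matrix
open scoped ComplexOrder

section Aux

variable (q : ℝ) (U : Matrix (Fin 2 × Fin 2) (Fin 2 × Fin 2) ℂ)
    (ρ : Matrix (Fin 2) (Fin 2) ℂ)
    (h1 : U (0,0) (0,1) = 0) (h2 : U (0,0) (1,0) = 0) (h3 : U (0,0) (1,1) = 0)
    (h4 : U (0,1) (0,0) = 0) (h5 : U (1,0) (0,0) = 0)
    (h6 : U (0,1) (1,1) = 0) (h7 : U (1,0) (1,1) = 0)
    (h8 : U (1,1) (0,0) = 0) (h9 : U (1,1) (0,1) = 0) (h10 : U (1,1) (1,0) = 0)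

include h1 h2 h3 h4 h5 h6 h7 h8 h9 h10 in
lemma collide01 :
    collide q U ρ 0 1 = (U (0,0) (0,0) * (starRingEnd ℂ) (U (1,0) (1,0)) * ((1/(1+q) : ℝ) : ℂ)
      + U (0,1) (0,1) * (starRingEnd ℂ) (U (1,1) (1,1)) * ((q/(1+q) : ℝ) : ℂ)) * ρ 0 1 := by
  simp only [collide, Matrix.of_apply, Matrix.mul_apply, Matrix.conjTranspose_apply,
    Matrix.kroneckerMap_apply, Matrix.diagonal_apply, Fintype.sum_prod_type, Fin.sum_univ_two,
    h1,h2,h3,h4,h5,h6,h7,h8,h9,h10]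
  simp
  ring

include h1 h2 h3 h4 h5 h6 h7 h8 h9 h10 in
lemma collide00 :
    collide q U ρ 0 0 = (U (0,0) (0,0) * (starRingEnd ℂ) (U (0,0) (0,0)) * ((1/(1+q) : ℝ) : ℂ)
      + U (0,1) (0,1) * (starRingEnd ℂ) (U (0,1) (0,1)) * ((q/(1+q) : ℝ) : ℂ)) * ρ 0 0
      + U (0,1) (1,0) * (starRingEnd ℂ) (U (0,1) (1,0)) * ((1/(1+q) : ℝ) : ℂ) * ρ 1 1 := by
  simp only [collide, Matrix.of_apply, Matrix.mul_apply, Matrix.conjTranspose_apply,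
    Matrix.kroneckerMap_apply, Matrix.diagonal_apply, Fintype.sum_prod_type, Fin.sum_univ_two,
    h1,h2,h3,h4,h5,h6,h7,h8,h9,h10]
  simp
  ring

include h1 h2 h3 h4 h5 h6 h7 h8 h9 h10 in
lemma collide11 :
    collide q U ρ 1 1 = (U (1,0) (1,0) * (starRingEnd ℂ) (U (1,0) (1,0)) * ((1/(1+q) : ℝ) : ℂ)
      + U (1,1) (1,1) * (starRingEnd ℂ) (U (1,1) (1,1)) * ((q/(1+q) : ℝ) : ℂ)) * ρ 1 1
      + U (1,0) (0,1) * (starRingEnd ℂ) (U (1,0) (0,1)) * ((q/(1+q) : ℝ) : ℂ) * ρ 0 0 := by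
  simp only [collide, Matrix.of_apply, Matrix.mul_apply, Matrix.conjTranspose_apply,
    Matrix.kroneckerMap_apply, Matrix.diagonal_apply, Fintype.sum_prod_type, Fin.sum_univ_two,
    h1,h2,h3,h4,h5,h6,h7,h8,h9,h10]
  simp
  ring

end Aux

/-- Necessity direction of the paper's Theorem 1, Eq. (cone_qubit): for z(ρ) ≠ z_τ, the
N-collision output satisfies r = (z(σ)−z_τ)/(z(ρ)−z_τ) ∈ [0,1] and
z_τ^N·η(ρ)·√r ≤ η(σ) ≤ η(ρ)·√r. -/
theorem qubit_cone_necessity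
    (β E : ℝ) (hβ : 0 < β) (hE : 0 < E) (q : ℝ) (hq : q = Real.exp (-β * E))
    (zτ : ℝ) (hzτ : zτ = (1 - q) / (1 + q))
    (ρ : Matrix (Fin 2) (Fin 2) ℂ) (hρ : ρ.PosSemidef) (htr : ρ.trace = 1)
    (hzρ : (ρ 0 0).re - (ρ 1 1).re ≠ zτ)
    (U : Matrix (Fin 2 × Fin 2) (Fin 2 × Fin 2) ℂ)
    (hU : U ∈ Matrix.unitaryGroup (Fin 2 × Fin 2) ℂ)
    (hcomm : U * Matrix.diagonal
        (fun ab : Fin 2 × Fin 2 => ((((ab.1 : ℕ) + (ab.2 : ℕ)) * E : ℝ) : ℂ))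
      = Matrix.diagonal
        (fun ab : Fin 2 × Fin 2 => ((((ab.1 : ℕ) + (ab.2 : ℕ)) * E : ℝ) : ℂ)) * U)
    (N : ℕ) (hN : 1 ≤ N)
    (σ : Matrix (Fin 2) (Fin 2) ℂ) (hσ : σ = (collide q U)^[N] ρ)
    (r : ℝ) (hr : r = (((σ 0 0).re - (σ 1 1).re) - zτ) / (((ρ 0 0).re - (ρ 1 1).re) - zτ)) :
    0 ≤ r ∧ r ≤ 1 ∧
    zτ ^ N * ‖ρ 0 1‖ * Real.sqrt r ≤ ‖σ 0 1‖ ∧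
    ‖σ 0 1‖ ≤ ‖ρ 0 1‖ * Real.sqrt r := by
  -- basic facts about q and zτ
  have hq0 : 0 < q := by rw [hq]; exact Real.exp_pos _
  have hql : q < 1 := by
    rw [hq]; rw [Real.exp_lt_one_iff]; nlinarith
  have hq1 : (0:ℝ) < 1 + q := by linarith
  have hq1' : (1:ℝ) + q ≠ 0 := ne_of_gt hq1
  have hq1C : (1:ℂ) + (q:ℂ) ≠ 0 := by exact_mod_cast (Complex.ofReal_ne_zero.mpr hq1')
  have hzτ0 : 0 ≤ zτ := by rw [hzτ]; apply div_nonneg <;> linarith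
  have hzτ1 : zτ ≤ 1 := by rw [hzτ, div_le_one hq1]; linarith
  -- zero entries of U from energy conservation
  have key0 : ∀ i j : Fin 2 × Fin 2, ((i.1:ℕ)+(i.2:ℕ)) ≠ ((j.1:ℕ)+(j.2:ℕ)) → U i j = 0 := by
    intro i j hne
    have h := congrFun (congrFun hcomm i) j
    rw [Matrix.mul_diagonal, Matrix.diagonal_mul] at h
    have h2 : U i j * (((((j.1:ℕ)+(j.2:ℕ)) * E : ℝ):ℂ) - ((((i.1:ℕ)+(i.2:ℕ)) * E : ℝ):ℂ)) = 0 := by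
      rw [mul_sub, h]; ring
    rcases mul_eq_zero.mp h2 with h3 | h3
    · exact h3
    · exfalso
      rw [sub_eq_zero] at h3
      have h4 : (((j.1:ℕ)+(j.2:ℕ)) * E : ℝ) = (((i.1:ℕ)+(i.2:ℕ)) * E : ℝ) :=
        Complex.ofReal_inj.mp h3
      have h5 : ((((j.1:ℕ)+(j.2:ℕ)):ℝ)) = (((i.1:ℕ)+(i.2:ℕ)):ℝ) :=
        mul_right_cancel₀ (ne_of_gt hE) h4
      exact hne (by exact_mod_cast h5.symm)
  have h1 : U (0,0) (0,1) = 0 := key0 _ _ (by decide)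
  have h2 : U (0,0) (1,0) = 0 := key0 _ _ (by decide)
  have h3 : U (0,0) (1,1) = 0 := key0 _ _ (by decide)
  have h4 : U (0,1) (0,0) = 0 := key0 _ _ (by decide)
  have h5 : U (1,0) (0,0) = 0 := key0 _ _ (by decide)
  have h6 : U (0,1) (1,1) = 0 := key0 _ _ (by decide)
  have h7 : U (1,0) (1,1) = 0 := key0 _ _ (by decide)
  have h8 : U (1,1) (0,0) = 0 := key0 _ _ (by decide)
  have h9 : U (1,1) (0,1) = 0 := key0 _ _ (by decide)
  have h10 : U (1,1) (1,0) = 0 := key0 _ _ (by decide)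
  -- unitarity relations
  have hUrow : U * Uᴴ = 1 := by
    have := Matrix.mem_unitaryGroup_iff.mp hU
    rwa [Matrix.star_eq_conjTranspose] at this
  have hUcol : Uᴴ * U = 1 := by
    have := Matrix.mem_unitaryGroup_iff'.mp hU
    rwa [Matrix.star_eq_conjTranspose] at this
  set s : ℝ := Complex.normSq (U (0,1) (1,0)) with hsdef
  have hbb : U (0,1) (1,0) * (starRingEnd ℂ) (U (0,1) (1,0)) = (s:ℂ) := Complex.mul_conj _
  have row01 : U (0,1) (0,1) * (starRingEnd ℂ) (U (0,1) (0,1))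
      + U (0,1) (1,0) * (starRingEnd ℂ) (U (0,1) (1,0)) = 1 := by
    have h := congrFun (congrFun hUrow (0,1)) (0,1)
    simp only [Matrix.mul_apply, Matrix.conjTranspose_apply, Fintype.sum_prod_type,
      Fin.sum_univ_two, h4, h6, Matrix.one_apply_eq] at h
    simpa using h
  have col01 : (starRingEnd ℂ) (U (0,1) (0,1)) * U (0,1) (0,1)
      + (starRingEnd ℂ) (U (1,0) (0,1)) * U (1,0) (0,1) = 1 := by
    have h := congrFun (congrFun hUcol (0,1)) (0,1)
    simp only [Matrix.mul_apply, Matrix.conjTranspose_apply, Fintype.sum_prod_type,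
      Fin.sum_univ_two, h1, h9, Matrix.one_apply_eq] at h
    simpa using h
  have row10 : U (1,0) (0,1) * (starRingEnd ℂ) (U (1,0) (0,1))
      + U (1,0) (1,0) * (starRingEnd ℂ) (U (1,0) (1,0)) = 1 := by
    have h := congrFun (congrFun hUrow (1,0)) (1,0)
    simp only [Matrix.mul_apply, Matrix.conjTranspose_apply, Fintype.sum_prod_type,
      Fin.sum_univ_two, h5, h7, Matrix.one_apply_eq] at h
    simpa using h
  have hαα : U (0,0) (0,0) * (starRingEnd ℂ) (U (0,0) (0,0)) = 1 := by
    have h := congrFun (congrFun hUrow (0,0)) (0,0)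
    simp only [Matrix.mul_apply, Matrix.conjTranspose_apply, Fintype.sum_prod_type,
      Fin.sum_univ_two, h1, h2, h3, Matrix.one_apply_eq] at h
    simpa using h
  have hγγ : U (1,1) (1,1) * (starRingEnd ℂ) (U (1,1) (1,1)) = 1 := by
    have h := congrFun (congrFun hUrow (1,1)) (1,1)
    simp only [Matrix.mul_apply, Matrix.conjTranspose_apply, Fintype.sum_prod_type,
      Fin.sum_univ_two, h8, h9, h10, Matrix.one_apply_eq] at h
    simpa using h
  have haa : U (0,1) (0,1) * (starRingEnd ℂ) (U (0,1) (0,1)) = 1 - (s:ℂ) := by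
    linear_combination row01 - hbb
  have hcc : U (1,0) (0,1) * (starRingEnd ℂ) (U (1,0) (0,1)) = (s:ℂ) := by
    linear_combination col01 - haa
  have hdd : U (1,0) (1,0) * (starRingEnd ℂ) (U (1,0) (1,0)) = 1 - (s:ℂ) := by
    linear_combination row10 - hcc
  -- norm facts
  have hs0 : 0 ≤ s := Complex.normSq_nonneg _
  have hnd : Complex.normSq (U (1,0) (1,0)) = 1 - s := by
    have h := hdd; rw [Complex.mul_conj] at h
    exact_mod_cast h
  have hna : Complex.normSq (U (0,1) (0,1)) = 1 - s := by
    have h := haa; rw [Complex.mul_conj] at h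
    exact_mod_cast h
  have hs1 : s ≤ 1 := by nlinarith [Complex.normSq_nonneg (U (1,0) (1,0))]
  have hl0 : (0:ℝ) ≤ 1 - s := by linarith
  have habsd : ‖U (1,0) (1,0)‖ = Real.sqrt (1 - s) := by
    rw [Complex.norm_def, hnd]
  have habsa : ‖U (0,1) (0,1)‖ = Real.sqrt (1 - s) := by
    rw [Complex.norm_def, hna]
  have habsα : ‖U (0,0) (0,0)‖ = 1 := by
    have h := hαα; rw [Complex.mul_conj] at h
    have : Complex.normSq (U (0,0) (0,0)) = 1 := by exact_mod_cast h
    rw [Complex.norm_def, this, Real.sqrt_one]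
  have habsγ : ‖U (1,1) (1,1)‖ = 1 := by
    have h := hγγ; rw [Complex.mul_conj] at h
    have : Complex.normSq (U (1,1) (1,1)) = 1 := by exact_mod_cast h
    rw [Complex.norm_def, this, Real.sqrt_one]
  -- the one-step maps
  set μ : ℂ := U (0,0) (0,0) * (starRingEnd ℂ) (U (1,0) (1,0)) * ((1/(1+q) : ℝ) : ℂ)
      + U (0,1) (0,1) * (starRingEnd ℂ) (U (1,1) (1,1)) * ((q/(1+q) : ℝ) : ℂ) with hμdef
  have step01 : ∀ M : Matrix (Fin 2) (Fin 2) ℂ, collide q U M 0 1 = μ * M 0 1 := by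
    intro M
    rw [collide01 q U M h1 h2 h3 h4 h5 h6 h7 h8 h9 h10]
  have stepT : ∀ M : Matrix (Fin 2) (Fin 2) ℂ,
      collide q U M 0 0 + collide q U M 1 1 = M 0 0 + M 1 1 := by
    intro M
    rw [collide00 q U M h1 h2 h3 h4 h5 h6 h7 h8 h9 h10,
      collide11 q U M h1 h2 h3 h4 h5 h6 h7 h8 h9 h10, hαα, hγγ, haa, hbb, hcc, hdd]
    push_cast
    field_simp
    ring
  have stepZ : ∀ M : Matrix (Fin 2) (Fin 2) ℂ,
      collide q U M 0 0 - collide q U M 1 1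
        = ((1 - s : ℝ) : ℂ) * (M 0 0 - M 1 1) + (s:ℂ) * (zτ:ℂ) * (M 0 0 + M 1 1) := by
    intro M
    rw [collide00 q U M h1 h2 h3 h4 h5 h6 h7 h8 h9 h10,
      collide11 q U M h1 h2 h3 h4 h5 h6 h7 h8 h9 h10, hαα, hγγ, haa, hbb, hcc, hdd, hzτ]
    push_cast
    field_simp
    ring
  -- the N-step facts by induction
  have main : ∀ k : ℕ,
      ((collide q U)^[k] ρ) 0 1 = μ ^ k * ρ 0 1 ∧
      ((collide q U)^[k] ρ) 0 0 + ((collide q U)^[k] ρ) 1 1 = 1 ∧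
      ((collide q U)^[k] ρ) 0 0 - ((collide q U)^[k] ρ) 1 1
        = ((1 - s : ℝ) : ℂ) ^ k * ((ρ 0 0 - ρ 1 1) - (zτ:ℂ)) + (zτ:ℂ) := by
    intro k
    induction k with
    | zero =>
      refine ⟨by simp, ?_, by simp⟩
      have := Matrix.trace_fin_two ρ
      rw [htr] at this
      simpa using this.symm
    | succ k ih =>
      rw [Function.iterate_succ_apply']
      refine ⟨?_, ?_, ?_⟩
      · rw [step01, ih.1]; ring
      · rw [stepT, ih.2.1]
      · rw [stepZ, ih.2.1, ih.2.2]
        push_cast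
        ring
  -- diagonal entries of ρ are real
  have hherm := hρ.1
  have hρ00 : (ρ 0 0) = ((ρ 0 0).re : ℂ) := by
    have h := congrFun (congrFun hherm 0) 0
    rw [Matrix.conjTranspose_apply] at h
    exact (Complex.conj_eq_iff_re.mp h).symm
  have hρ11 : (ρ 1 1) = ((ρ 1 1).re : ℂ) := by
    have h := congrFun (congrFun hherm 1) 1
    rw [Matrix.conjTranspose_apply] at h
    exact (Complex.conj_eq_iff_re.mp h).symm
  -- value of r
  have hdiff : σ 0 0 - σ 1 1
      = (((1 - s) ^ N * (((ρ 0 0).re - (ρ 1 1).re) - zτ) + zτ : ℝ) : ℂ) := by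
    rw [hσ, (main N).2.2]
    rw [hρ00, hρ11]
    push_cast
    simp only [Complex.ofReal_re]
  have hdiffre : (σ 0 0).re - (σ 1 1).re
      = (1 - s) ^ N * (((ρ 0 0).re - (ρ 1 1).re) - zτ) + zτ := by
    have := congrArg Complex.re hdiff
    rwa [Complex.sub_re, Complex.ofReal_re] at this
  have hden : ((ρ 0 0).re - (ρ 1 1).re) - zτ ≠ 0 := sub_ne_zero.mpr hzρ
  have hrval : r = (1 - s) ^ N := by
    rw [hr, hdiffre, add_sub_cancel_right, mul_div_assoc, div_self hden, mul_one]
  have hr0 : 0 ≤ r := by rw [hrval]; positivity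
  have hr1 : r ≤ 1 := by rw [hrval]; exact pow_le_one₀ hl0 (by linarith)
  -- coherence
  have hcoh : ‖σ 0 1‖ = ‖μ‖ ^ N * ‖ρ 0 1‖ := by
    rw [hσ, (main N).1, norm_mul, norm_pow]
  -- bounds on |μ|
  have ht0 : (0:ℝ) ≤ 1/(1+q) := by positivity
  have ht1 : (0:ℝ) ≤ q/(1+q) := by positivity
  have habs1 : ‖U (0,0) (0,0) * (starRingEnd ℂ) (U (1,0) (1,0)) * ((1/(1+q) : ℝ) : ℂ)‖
      = Real.sqrt (1 - s) * (1/(1+q)) := by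
    rw [norm_mul, norm_mul, Complex.norm_conj, habsα, habsd, Complex.norm_real, Real.norm_eq_abs,
      abs_of_nonneg ht0, one_mul]
  have habs2 : ‖U (0,1) (0,1) * (starRingEnd ℂ) (U (1,1) (1,1)) * ((q/(1+q) : ℝ) : ℂ)‖
      = Real.sqrt (1 - s) * (q/(1+q)) := by
    rw [norm_mul, norm_mul, Complex.norm_conj, habsa, habsγ, Complex.norm_real, Real.norm_eq_abs,
      abs_of_nonneg ht1]
    ring
  have htsum : 1/(1+q) + q/(1+q) = 1 := by field_simp
  have htdiff : 1/(1+q) - q/(1+q) = zτ := by rw [hzτ]; field_simp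
  have hμle : ‖μ‖ ≤ Real.sqrt (1 - s) := by
    calc ‖μ‖ ≤ _ + _ := norm_add_le _ _
      _ = Real.sqrt (1 - s) * (1/(1+q)) + Real.sqrt (1 - s) * (q/(1+q)) := by
          rw [habs1, habs2]
      _ = Real.sqrt (1 - s) * (1/(1+q) + q/(1+q)) := by ring
      _ = Real.sqrt (1 - s) := by rw [htsum, mul_one]
  have hμge : Real.sqrt (1 - s) * zτ ≤ ‖μ‖ := by
    have hn := norm_sub_norm_le (U (0,0) (0,0) * (starRingEnd ℂ) (U (1,0) (1,0)) * ((1/(1+q) : ℝ) : ℂ))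
      (-(U (0,1) (0,1) * (starRingEnd ℂ) (U (1,1) (1,1)) * ((q/(1+q) : ℝ) : ℂ)))
    rw [sub_neg_eq_add, norm_neg] at hn
    rw [habs1, habs2] at hn
    calc Real.sqrt (1 - s) * zτ
        = Real.sqrt (1 - s) * (1/(1+q)) - Real.sqrt (1 - s) * (q/(1+q)) := by
          rw [← mul_sub, htdiff]
      _ ≤ ‖μ‖ := hn
  -- √r
  have hsqrtr : Real.sqrt r = Real.sqrt (1 - s) ^ N := by
    rw [hrval,
      show (1 - s) ^ N = (Real.sqrt (1 - s) ^ N) ^ 2 by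
        rw [← pow_mul, mul_comm, pow_mul, Real.sq_sqrt hl0],
      Real.sqrt_sq (pow_nonneg (Real.sqrt_nonneg _) N)]
  refine ⟨hr0, hr1, ?_, ?_⟩
  · -- lower bound
    rw [hcoh, hsqrtr]
    have hb : 0 ≤ zτ * Real.sqrt (1 - s) := mul_nonneg hzτ0 (Real.sqrt_nonneg _)
    have hp : (zτ * Real.sqrt (1 - s)) ^ N ≤ ‖μ‖ ^ N :=
      pow_le_pow_left₀ hb (by rw [mul_comm]; exact hμge) N
    rw [mul_pow] at hp
    calc zτ ^ N * ‖ρ 0 1‖ * Real.sqrt (1 - s) ^ N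
        = (zτ ^ N * Real.sqrt (1 - s) ^ N) * ‖ρ 0 1‖ := by ring
      _ ≤ ‖μ‖ ^ N * ‖ρ 0 1‖ :=
          mul_le_mul_of_nonneg_right hp (norm_nonneg _)
  · -- upper bound
    rw [hcoh, hsqrtr]
    have hp : ‖μ‖ ^ N ≤ Real.sqrt (1 - s) ^ N :=
      pow_le_pow_left₀ (norm_nonneg _) hμle N
    calc ‖μ‖ ^ N * ‖ρ 0 1‖
        ≤ Real.sqrt (1 - s) ^ N * ‖ρ 0 1‖ :=
          mul_le_mul_of_nonneg_right hp (norm_nonneg _)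
      _ = ‖ρ 0 1‖ * Real.sqrt (1 - s) ^ N := by ring
end

section
/- Let β > 0, E > 0, q = exp(−β·E), z_τ = (1−q)/(1+q). Let ρ be a 2×2 density matrix with z(ρ) ≠ z_τ, and let N ≥ 1. Suppose z' ∈ ℝ and η' ≥ 0 satisfy r := (z' − z_τ)/(z(ρ) − z_τ) ∈ [0, 1] and z_τ^N · η(ρ) · √r ≤ η' ≤ η(ρ) · √r. Then there exists an energy-preserving unitary U indexed by (Fin 2) × (Fin 2) such that σ = T_U^N(ρ) satisfies z(σ) = z' and η(σ) = η'. (Sufficiency direction of the paper's Theorem 1: every point of the cone Eq. (cone_qubit) is reachable by N identical collisions.) -/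
open scoped BigOperators
open Matrix
open scoped ComplexOrder

noncomputable def Umat (c s : ℝ) (w : ℂ) : Matrix (Fin 2 × Fin 2) (Fin 2 × Fin 2) ℂ :=
  fun x y =>
    if x = (0,0) ∧ y = (0,0) then 1
    else if x = (0,1) ∧ y = (0,1) then (c:ℂ)
    else if x = (0,1) ∧ y = (1,0) then (-s:ℂ)
    else if x = (1,0) ∧ y = (0,1) then (s:ℂ)
    else if x = (1,0) ∧ y = (1,0) then (c:ℂ)
    else if x = (1,1) ∧ y = (1,1) then w
    else 0

set_option maxHeartbeats 1000000 in
theorem Umat_unitary (c s : ℝ) (w : ℂ) (hc : c^2 + s^2 = 1) (hw : w * (starRingEnd ℂ) w = 1) :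
    Umat c s w ∈ Matrix.unitaryGroup (Fin 2 × Fin 2) ℂ := by
  have hc' : (c:ℂ)^2 + (s:ℂ)^2 = 1 := by exact_mod_cast congrArg (Complex.ofReal) hc
  rw [Matrix.mem_unitaryGroup_iff]
  ext ⟨a,j⟩ ⟨b,k⟩
  fin_cases a <;> fin_cases j <;> fin_cases b <;> fin_cases k <;>
    simp [Umat, Matrix.mul_apply, Matrix.conjTranspose_apply, Fintype.sum_prod_type,
      Fin.sum_univ_two, Matrix.one_apply, Prod.ext_iff] <;>
    push_cast <;>
    first
      | (linear_combination hc')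
      | (rw [hw])
      | (rw [hw]; ring)
      | (linear_combination hw)
      | ring

set_option maxHeartbeats 1000000 in
theorem Umat_commute (c s : ℝ) (w : ℂ) (E : ℝ) :
    Umat c s w * Matrix.diagonal
          (fun ab : Fin 2 × Fin 2 => ((((ab.1 : ℕ) + (ab.2 : ℕ)) * E : ℝ) : ℂ))
        = Matrix.diagonal
          (fun ab : Fin 2 × Fin 2 => ((((ab.1 : ℕ) + (ab.2 : ℕ)) * E : ℝ) : ℂ)) * Umat c s w := by
  ext ⟨a,j⟩ ⟨b,k⟩
  rw [Matrix.mul_diagonal, Matrix.diagonal_mul]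
  fin_cases a <;> fin_cases j <;> fin_cases b <;> fin_cases k <;>
    simp [Umat, Prod.ext_iff] <;> ring

set_option maxHeartbeats 1000000 in
theorem collide_01 (q c s : ℝ) (w : ℂ) (ρ : Matrix (Fin 2) (Fin 2) ℂ) :
    collide q (Umat c s w) ρ 0 1
      = (c:ℂ) * ((1/(1+q) : ℝ) + (starRingEnd ℂ) w * ((q/(1+q) : ℝ))) * ρ 0 1 := by
  simp [collide, Umat, Matrix.mul_apply, Matrix.conjTranspose_apply, Matrix.kroneckerMap_apply,
    Matrix.diagonal_apply, Fintype.sum_prod_type, Fin.sum_univ_two, Prod.ext_iff]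
  ring

set_option maxHeartbeats 1000000 in
theorem collide_diag (q c s : ℝ) (w : ℂ) (hw : w * (starRingEnd ℂ) w = 1)
    (hc : (c:ℂ)^2 + (s:ℂ)^2 = 1) (h1q : (1:ℝ) + q ≠ 0)
    (ρ : Matrix (Fin 2) (Fin 2) ℂ) :
    collide q (Umat c s w) ρ 0 0 + collide q (Umat c s w) ρ 1 1 = ρ 0 0 + ρ 1 1 ∧
    collide q (Umat c s w) ρ 0 0 - collide q (Umat c s w) ρ 1 1
      = (c:ℂ)^2 * (ρ 0 0 - ρ 1 1) + (s:ℂ)^2 * (((1-q)/(1+q) : ℝ)) * (ρ 0 0 + ρ 1 1) := by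
  have h1q' : ((1:ℂ) + q) ≠ 0 := by
    intro h; apply h1q; exact_mod_cast congrArg Complex.re h
  constructor <;>
    simp only [collide, Umat, Matrix.of_apply, Matrix.mul_apply, Matrix.conjTranspose_apply,
      Matrix.kroneckerMap_apply, Matrix.diagonal_apply, Fintype.sum_prod_type, Fin.sum_univ_two,
      Prod.ext_iff]
  · norm_num
    field_simp
    ring_nf
    linear_combination (-(ρ 0 0 * (q:ℂ)^2 + (q:ℂ) * ρ 1 1) + (q:ℂ)*(1+(q:ℂ))*ρ 0 0 + (1+(q:ℂ))*ρ 1 1) * hc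
      + (-((q:ℂ)*ρ 1 1 + (q:ℂ)^2*ρ 1 1 + ρ 1 1) + (1+(q:ℂ))^2*ρ 1 1) * hw
  · norm_num
    field_simp
    ring_nf
    linear_combination (-(ρ 0 0) * (1+(q:ℂ)+(q:ℂ)^2) - ρ 1 1 + (q:ℂ)*(1+(q:ℂ))*ρ 0 0 + (1+(q:ℂ))*ρ 1 1) * hc
      + (- (1+3*(q:ℂ)+(q:ℂ)^2) + (1+(q:ℂ))^2) * ρ 1 1 * hw

theorem collide_iter (q c s : ℝ) (w : ℂ) (hw : w * (starRingEnd ℂ) w = 1)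
    (hc : (c:ℂ)^2 + (s:ℂ)^2 = 1) (h1q : (1:ℝ) + q ≠ 0)
    (ρ : Matrix (Fin 2) (Fin 2) ℂ) (htr : ρ 0 0 + ρ 1 1 = 1) (n : ℕ) :
    ((collide q (Umat c s w))^[n] ρ) 0 0 + ((collide q (Umat c s w))^[n] ρ) 1 1 = 1 ∧
    ((collide q (Umat c s w))^[n] ρ) 0 0 - ((collide q (Umat c s w))^[n] ρ) 1 1
      = ((c:ℂ)^2)^n * ((ρ 0 0 - ρ 1 1) - (((1-q)/(1+q) : ℝ) : ℂ)) + (((1-q)/(1+q) : ℝ) : ℂ) ∧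
    ((collide q (Umat c s w))^[n] ρ) 0 1
      = ((c:ℂ) * ((1/(1+q) : ℝ) + (starRingEnd ℂ) w * ((q/(1+q) : ℝ))))^n * ρ 0 1 := by
  induction n with
  | zero => refine ⟨by simpa using htr, by simp, by simp⟩
  | succ n ih =>
    obtain ⟨ih1, ih2, ih3⟩ := ih
    rw [Function.iterate_succ_apply']
    set σ := (collide q (Umat c s w))^[n] ρ with hσ
    obtain ⟨d1, d2⟩ := collide_diag q c s w hw hc h1q σ
    refine ⟨by rw [d1, ih1], ?_, ?_⟩
    · rw [d2, ih1, ih2]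
      linear_combination (((1-q)/(1+q) : ℝ) : ℂ) * hc
    · rw [collide_01, ih3]
      ring

set_option maxHeartbeats 1600000 in
/-- Sufficiency direction of the paper's Theorem 1: every point of the cone Eq. (cone_qubit)
is reachable by N identical energy-preserving collisions. -/
theorem qubit_cone_sufficiency
    (β E : ℝ) (hβ : 0 < β) (hE : 0 < E) (q : ℝ) (hq : q = Real.exp (-β * E))
    (zτ : ℝ) (hzτ : zτ = (1 - q) / (1 + q))
    (ρ : Matrix (Fin 2) (Fin 2) ℂ) (hρ : ρ.PosSemidef) (htr : ρ.trace = 1)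
    (hzρ : (ρ 0 0).re - (ρ 1 1).re ≠ zτ)
    (N : ℕ) (hN : 1 ≤ N)
    (z' η' : ℝ) (hη' : 0 ≤ η')
    (r : ℝ) (hr : r = (z' - zτ) / (((ρ 0 0).re - (ρ 1 1).re) - zτ))
    (hr0 : 0 ≤ r) (hr1 : r ≤ 1)
    (hlow : zτ ^ N * ‖ρ 0 1‖ * Real.sqrt r ≤ η')
    (hhigh : η' ≤ ‖ρ 0 1‖ * Real.sqrt r) :
    ∃ U : Matrix (Fin 2 × Fin 2) (Fin 2 × Fin 2) ℂ,
      U ∈ Matrix.unitaryGroup (Fin 2 × Fin 2) ℂ ∧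
      U * Matrix.diagonal
          (fun ab : Fin 2 × Fin 2 => ((((ab.1 : ℕ) + (ab.2 : ℕ)) * E : ℝ) : ℂ))
        = Matrix.diagonal
          (fun ab : Fin 2 × Fin 2 => ((((ab.1 : ℕ) + (ab.2 : ℕ)) * E : ℝ) : ℂ)) * U ∧
      ((((collide q U)^[N] ρ) 0 0).re - (((collide q U)^[N] ρ) 1 1).re = z' ∧
       ‖((collide q U)^[N] ρ) 0 1‖ = η') := by
  -- basic facts about q, zτ
  have hq0 : 0 < q := hq ▸ Real.exp_pos _
  have hq1 : q < 1 := by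
    rw [hq]
    have : -β * E < 0 := by simpa using mul_pos hβ hE
    calc Real.exp (-β * E) < Real.exp 0 := Real.exp_lt_exp.mpr this
      _ = 1 := Real.exp_zero
  have h1q : (0:ℝ) < 1 + q := by linarith
  have h1q' : (1:ℝ) + q ≠ 0 := ne_of_gt h1q
  have hzτ0 : 0 < zτ := by
    rw [hzτ]; apply div_pos <;> linarith
  have hzτ1 : zτ < 1 := by
    rw [hzτ, div_lt_one h1q]; linarith
  -- trace
  have htr2 : ρ 0 0 + ρ 1 1 = 1 := by
    rw [Matrix.trace_fin_two] at htr; exact htr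
  -- the z'-identity
  have hz' : r * (((ρ 0 0).re - (ρ 1 1).re) - zτ) + zτ = z' := by
    have hd : ((ρ 0 0).re - (ρ 1 1).re) - zτ ≠ 0 := sub_ne_zero.mpr hzρ
    rw [hr]; field_simp; ring
  set η := ‖ρ 0 1‖ with hη
  have hηnn : 0 ≤ η := norm_nonneg _
  -- generic closing step
  have key : ∀ c s : ℝ, ∀ w : ℂ, c^2 + s^2 = 1 → w * (starRingEnd ℂ) w = 1 →
      (c^2)^N = r →
      ‖(c:ℂ) * ((1/(1+q) : ℝ) + (starRingEnd ℂ) w * ((q/(1+q) : ℝ)))‖^N * η = η' →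
      ∃ U : Matrix (Fin 2 × Fin 2) (Fin 2 × Fin 2) ℂ,
      U ∈ Matrix.unitaryGroup (Fin 2 × Fin 2) ℂ ∧
      U * Matrix.diagonal
          (fun ab : Fin 2 × Fin 2 => ((((ab.1 : ℕ) + (ab.2 : ℕ)) * E : ℝ) : ℂ))
        = Matrix.diagonal
          (fun ab : Fin 2 × Fin 2 => ((((ab.1 : ℕ) + (ab.2 : ℕ)) * E : ℝ) : ℂ)) * U ∧
      ((((collide q U)^[N] ρ) 0 0).re - (((collide q U)^[N] ρ) 1 1).re = z' ∧
       ‖((collide q U)^[N] ρ) 0 1‖ = η') := by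
    intro c s w hcs hwu hcr habs
    have hcC : (c:ℂ)^2 + (s:ℂ)^2 = 1 := by exact_mod_cast congrArg Complex.ofReal hcs
    refine ⟨Umat c s w, Umat_unitary c s w hcs hwu, Umat_commute c s w E, ?_, ?_⟩
    · obtain ⟨h1, h2, h3⟩ := collide_iter q c s w hwu hcC h1q' ρ htr2 N
      have hcast : ((c:ℂ)^2)^N = (((c^2)^N : ℝ) : ℂ) := by push_cast; ring
      rw [hcast, hcr] at h2
      have h2re := congrArg Complex.re h2
      simp only [Complex.add_re, Complex.sub_re, Complex.mul_re, Complex.ofReal_re,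
        Complex.ofReal_im, zero_mul, sub_zero, mul_zero] at h2re ⊢
      rw [h2re, ← hzτ]
      linarith [hz']
    · obtain ⟨h1, h2, h3⟩ := collide_iter q c s w hwu hcC h1q' ρ htr2 N
      rw [h3]
      rw [show ∀ a b : ℂ, ‖a * b‖ = ‖a‖ * ‖b‖ from fun a b => norm_mul a b]
      rw [show ∀ (a : ℂ) (n : ℕ), ‖a ^ n‖ = ‖a‖ ^ n from fun a n => norm_pow a n]
      exact habs
  by_cases hρ01 : ρ 0 1 = 0
  · -- no initial coherence: η' must be 0
    have hη0 : η = 0 := by rw [hη, hρ01, norm_zero]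
    have hη'0 : η' = 0 := le_antisymm (by rw [hη0] at hhigh; simpa using hhigh) hη'
    -- λ = r^(1/N)
    have hlam0 : 0 ≤ r ^ ((N:ℝ)⁻¹) := Real.rpow_nonneg hr0 _
    have hlam1 : r ^ ((N:ℝ)⁻¹) ≤ 1 := Real.rpow_le_one hr0 hr1 (by positivity)
    refine key (Real.sqrt (r ^ ((N:ℝ)⁻¹))) (Real.sqrt (1 - r ^ ((N:ℝ)⁻¹))) 1 ?_ (by simp) ?_ ?_
    · rw [Real.sq_sqrt hlam0, Real.sq_sqrt (by linarith)]; ring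
    · rw [Real.sq_sqrt hlam0, ← Real.rpow_natCast (r ^ ((N:ℝ)⁻¹)) N, ← Real.rpow_mul hr0,
        inv_mul_cancel₀ (by positivity : (N:ℝ) ≠ 0), Real.rpow_one]
    · rw [hη0, mul_zero, hη'0]
  · have hηpos : 0 < η := norm_pos_iff.mpr hρ01
    have hNne : (N:ℕ) ≠ 0 := Nat.one_le_iff_ne_zero.mp hN
    have hNne' : (N:ℝ) ≠ 0 := Nat.cast_ne_zero.mpr hNne
    rcases eq_or_lt_of_le hr0 with hr0' | hrpos
    · -- r = 0 : full swap, η' = 0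
      have hη'0 : η' = 0 := by
        have : η' ≤ 0 := by
          have := hhigh; rw [← hr0', Real.sqrt_zero, mul_zero] at this; exact this
        linarith
      refine key 0 1 1 (by norm_num) (by simp) ?_ ?_
      · rw [← hr0']; simp [zero_pow hNne]
      · simp [zero_pow hNne, hη'0]
    · -- r > 0 : main construction
      have hp0 : (0:ℝ) < 1/(1+q) := by positivity
      have hp1 : (0:ℝ) < q/(1+q) := by positivity
      have hsum : 1/(1+q) + q/(1+q) = 1 := by field_simp
      have hzτeq : zτ = 1/(1+q) - q/(1+q) := by rw [hzτ]; field_simp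
      set lam := r ^ ((N:ℝ)⁻¹) with hlamdef
      have hlampos : 0 < lam := Real.rpow_pos_of_pos hrpos _
      have hlam1 : lam ≤ 1 := Real.rpow_le_one hr0 hr1 (by positivity)
      set c := Real.sqrt lam with hcdef
      have hcpos : 0 < c := Real.sqrt_pos.mpr hlampos
      have hc2 : c^2 = lam := Real.sq_sqrt hlampos.le
      set s := Real.sqrt (1 - lam) with hsdef
      have hcs : c^2 + s^2 = 1 := by
        rw [hc2, Real.sq_sqrt (by linarith)]; ring
      have hcr : (c^2)^N = r := by
        rw [hc2, hlamdef, ← Real.rpow_natCast (r ^ ((N:ℝ)⁻¹)) N, ← Real.rpow_mul hr0,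
          inv_mul_cancel₀ hNne', Real.rpow_one]
      have hcrp : c = (Real.sqrt r) ^ ((N:ℝ)⁻¹) := by
        rw [hcdef, hlamdef, Real.sqrt_eq_rpow, Real.sqrt_eq_rpow, ← Real.rpow_mul hr0,
          ← Real.rpow_mul hr0, mul_comm]
      set t := (η'/η) ^ ((N:ℝ)⁻¹) with htdef
      have hdivnn : 0 ≤ η'/η := div_nonneg hη' hηnn
      have htnn : 0 ≤ t := Real.rpow_nonneg hdivnn _
      have htlow : zτ * c ≤ t := by
        have h1 : zτ^N * Real.sqrt r ≤ η'/η := by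
          rw [le_div_iff₀ hηpos]
          calc zτ^N * Real.sqrt r * η = zτ^N * η * Real.sqrt r := by ring
            _ ≤ η' := hlow
        have h2 : (zτ^N * Real.sqrt r) ^ ((N:ℝ)⁻¹) ≤ t :=
          Real.rpow_le_rpow (by positivity) h1 (by positivity)
        calc zτ * c = (zτ^N) ^ ((N:ℝ)⁻¹) * (Real.sqrt r) ^ ((N:ℝ)⁻¹) := by
              rw [← Real.rpow_natCast zτ N, ← Real.rpow_mul hzτ0.le,
                mul_inv_cancel₀ hNne', Real.rpow_one, hcrp]
          _ = (zτ^N * Real.sqrt r) ^ ((N:ℝ)⁻¹) := by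
              rw [Real.mul_rpow (by positivity) (Real.sqrt_nonneg r)]
          _ ≤ t := h2
      have hthigh : t ≤ c := by
        have h1 : η'/η ≤ Real.sqrt r := by
          rw [div_le_iff₀ hηpos]
          calc η' ≤ η * Real.sqrt r := hhigh
            _ = Real.sqrt r * η := by ring
        calc t ≤ (Real.sqrt r) ^ ((N:ℝ)⁻¹) := Real.rpow_le_rpow hdivnn h1 (by positivity)
          _ = c := hcrp.symm
      set m := t / c with hmdef
      have hm0 : zτ ≤ m := (le_div_iff₀ hcpos).mpr htlow
      have hm1 : m ≤ 1 := (div_le_one hcpos).mpr hthigh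
      have hmpos : 0 < m := lt_of_lt_of_le hzτ0 hm0
      have hcm : c * m = t := by rw [hmdef, mul_comm, div_mul_cancel₀ t (ne_of_gt hcpos)]
      set x := (m^2 - (1/(1+q))^2 - (q/(1+q))^2) / (2 * (1/(1+q)) * (q/(1+q))) with hxdef
      have hxmul : x * (2 * (1/(1+q)) * (q/(1+q))) = m^2 - (1/(1+q))^2 - (q/(1+q))^2 :=
        div_mul_cancel₀ _ (by positivity)
      have hmsq1 : m^2 ≤ 1 := by simpa using pow_le_pow_left₀ hmpos.le hm1 2
      have hsumsq : (1/(1+q))^2 + 2*(1/(1+q))*(q/(1+q)) + (q/(1+q))^2 = 1 := by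
        calc (1/(1+q))^2 + 2*(1/(1+q))*(q/(1+q)) + (q/(1+q))^2
            = (1/(1+q) + q/(1+q))^2 := by ring
          _ = 1 := by rw [hsum]; norm_num
      have hxle : x ≤ 1 := by
        rw [hxdef, div_le_one (by positivity)]
        linarith [hmsq1, hsumsq]
      have hzsq : zτ^2 ≤ m^2 := pow_le_pow_left₀ hzτ0.le hm0 2
      have hdiffsq : zτ^2 = (1/(1+q))^2 - 2*(1/(1+q))*(q/(1+q)) + (q/(1+q))^2 := by
        rw [hzτeq]; ring
      have hxge : -1 ≤ x := by
        rw [hxdef, le_div_iff₀ (by positivity)]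
        linarith [hzsq, hdiffsq]
      set y := Real.sqrt (1 - x^2) with hydef
      have hxabs : x^2 ≤ 1 := by
        have := abs_le.mpr ⟨hxge, hxle⟩
        calc x^2 = |x|^2 := (sq_abs x).symm
          _ ≤ 1^2 := pow_le_pow_left₀ (abs_nonneg x) this 2
          _ = 1 := one_pow 2
      have hy2 : y^2 = 1 - x^2 := Real.sq_sqrt (by linarith)
      have hxy : x^2 + y^2 = 1 := by rw [hy2]; ring
      have hxyC : (x:ℂ)^2 + (y:ℂ)^2 = 1 := by exact_mod_cast congrArg Complex.ofReal hxy
      set w := (x:ℂ) + (y:ℂ) * Complex.I with hwdef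
      have hconj : (starRingEnd ℂ) w = (x:ℂ) - (y:ℂ) * Complex.I := by
        rw [hwdef]; simp [Complex.conj_ofReal]; ring
      have hwu : w * (starRingEnd ℂ) w = 1 := by
        rw [hconj, hwdef]
        linear_combination hxyC - (y:ℂ)^2 * Complex.I_sq
      refine key c s w hcs hwu hcr ?_
      -- compute the modulus of the coherence factor
      have hFabs : ‖(c:ℂ) * ((1/(1+q) : ℝ) + (starRingEnd ℂ) w * ((q/(1+q) : ℝ)))‖ = t := by
        have hsq : (‖(c:ℂ) * ((1/(1+q) : ℝ) + (starRingEnd ℂ) w * ((q/(1+q) : ℝ)))‖)^2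
            = t^2 := by
          rw [Complex.sq_norm, Complex.normSq_apply, hconj]
          simp only [Complex.mul_re, Complex.mul_im, Complex.add_re, Complex.add_im,
            Complex.sub_re, Complex.sub_im, Complex.ofReal_re, Complex.ofReal_im,
            Complex.I_re, Complex.I_im]
          linear_combination (c^2*(q/(1+q))^2) * hy2 + c^2 * hxmul + (c*m + t) * hcm
        calc ‖(c:ℂ) * ((1/(1+q) : ℝ) + (starRingEnd ℂ) w * ((q/(1+q) : ℝ)))‖
            = Real.sqrt ((‖(c:ℂ) * ((1/(1+q) : ℝ) + (starRingEnd ℂ) w * ((q/(1+q) : ℝ)))‖)^2) :=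
              (Real.sqrt_sq (norm_nonneg _)).symm
          _ = Real.sqrt (t^2) := by rw [hsq]
          _ = t := Real.sqrt_sq htnn
      rw [hFabs]
      have htN : t^N = η'/η := by
        rw [htdef, ← Real.rpow_natCast ((η'/η) ^ ((N:ℝ)⁻¹)) N, ← Real.rpow_mul hdivnn,
          inv_mul_cancel₀ hNne', Real.rpow_one]
      rw [htN, div_mul_cancel₀ η' (ne_of_gt hηpos)]
end

section
/- Let β > 0, E > 0, q = exp(−β·E), z_τ = (1−q)/(1+q), and let ρ be a 2×2 density matrix with z(ρ) = z_τ. Then for every N ≥ 1: (i) for every energy-preserving unitary U indexed by (Fin 2) × (Fin 2), the output σ = T_U^N(ρ) satisfies z(σ) = z_τ and η(σ) ∈ [0, η(ρ)]; and (ii) conversely, for every η' ∈ [0, η(ρ)] there exists an energy-preserving unitary U with σ = T_U^N(ρ) satisfying z(σ) = z_τ and η(σ) = η'. (The z = z_τ case of the paper's Theorem 1.) -/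
open scoped BigOperators
open Matrix
open scoped ComplexOrder

lemma collide_step (q : ℝ) (hq : 0 < q)
    (U : Matrix (Fin 2 × Fin 2) (Fin 2 × Fin 2) ℂ)
    (hU : U ∈ Matrix.unitaryGroup (Fin 2 × Fin 2) ℂ)
    (hz : ∀ x y : Fin 2 × Fin 2, (x.1 : ℕ) + (x.2 : ℕ) ≠ (y.1 : ℕ) + (y.2 : ℕ) → U x y = 0)
    (σ : Matrix (Fin 2) (Fin 2) ℂ)
    (h00 : σ 0 0 = ((1 / (1 + q) : ℝ) : ℂ)) (h11 : σ 1 1 = ((q / (1 + q) : ℝ) : ℂ)) :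
    collide q U σ 0 0 = σ 0 0 ∧ collide q U σ 1 1 = σ 1 1 ∧
      ∃ μ : ℂ, ‖μ‖ ≤ 1 ∧ collide q U σ 0 1 = μ * σ 0 1 := by
  have hq1 : (0:ℝ) < 1 + q := by linarith
  have hne : (1 + (q:ℂ)) ≠ 0 := by
    exact_mod_cast (Complex.ofReal_ne_zero.mpr hq1.ne')
  have z1 : U 0 (0,1) = 0 := by simpa [Prod.mk_zero_zero] using hz (0,0) (0,1) (by decide)
  have z2 : U 0 (1,0) = 0 := by simpa [Prod.mk_zero_zero] using hz (0,0) (1,0) (by decide)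
  have z3 : U 0 1 = 0 := by
    simpa [Prod.mk_zero_zero, Prod.mk_one_one] using hz (0,0) (1,1) (by decide)
  have z4 : U (0,1) 0 = 0 := by simpa [Prod.mk_zero_zero] using hz (0,1) (0,0) (by decide)
  have z5 : U (0,1) 1 = 0 := by simpa [Prod.mk_one_one] using hz (0,1) (1,1) (by decide)
  have z6 : U (1,0) 0 = 0 := by simpa [Prod.mk_zero_zero] using hz (1,0) (0,0) (by decide)
  have z7 : U (1,0) 1 = 0 := by simpa [Prod.mk_one_one] using hz (1,0) (1,1) (by decide)
  have z8 : U 1 0 = 0 := by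
    simpa [Prod.mk_zero_zero, Prod.mk_one_one] using hz (1,1) (0,0) (by decide)
  have z9 : U 1 (0,1) = 0 := by simpa [Prod.mk_one_one] using hz (1,1) (0,1) (by decide)
  have z10 : U 1 (1,0) = 0 := by simpa [Prod.mk_one_one] using hz (1,1) (1,0) (by decide)
  have hUU : U * Uᴴ = 1 := Matrix.mem_unitaryGroup_iff.mp hU
  have row : ∀ x : Fin 2 × Fin 2, (U * Uᴴ) x x = 1 := by
    intro x; rw [hUU]; simp [Matrix.one_apply]
  have r00 := row 0
  have r01 := row (0,1)
  have r10 := row (1,0)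
  have r11 := row 1
  simp only [Matrix.mul_apply, Fintype.sum_prod_type, Fin.sum_univ_two,
    Matrix.conjTranspose_apply, Prod.mk_zero_zero, Prod.mk_one_one, Complex.star_def,
    z1,z2,z3,z4,z5,z6,z7,z8,z9,z10,
    zero_mul, mul_zero, add_zero, zero_add, map_zero, star_zero] at r00 r01 r10 r11
  refine ⟨?_, ?_, ?_⟩
  · simp only [collide, Matrix.mul_apply, Fintype.sum_prod_type, Fin.sum_univ_two,
      Matrix.kroneckerMap_apply, Matrix.conjTranspose_apply, Matrix.of_apply,
      Matrix.diagonal_apply, Finset.sum_mul, Finset.mul_sum,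
      Prod.mk_zero_zero, Prod.mk_one_one,
      z1,z2,z3,z4,z5,z6,z7,z8,z9,z10,
      zero_mul, mul_zero, add_zero, zero_add, map_zero, star_zero]
    simp only [h00, h11]
    norm_num
    field_simp [hne]
    linear_combination r00 + (q:ℂ) * r01
  · simp only [collide, Matrix.mul_apply, Fintype.sum_prod_type, Fin.sum_univ_two,
      Matrix.kroneckerMap_apply, Matrix.conjTranspose_apply, Matrix.of_apply,
      Matrix.diagonal_apply, Finset.sum_mul, Finset.mul_sum,
      Prod.mk_zero_zero, Prod.mk_one_one,
      z1,z2,z3,z4,z5,z6,z7,z8,z9,z10,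
      zero_mul, mul_zero, add_zero, zero_add, map_zero, star_zero]
    simp only [h00, h11]
    norm_num
    field_simp [hne]
    linear_combination r10 + (q:ℂ) * r11
  · have n00 : Complex.normSq (U 0 0) = 1 := by
      rw [Complex.mul_conj] at r00; exact_mod_cast r00
    have n11 : Complex.normSq (U 1 1) = 1 := by
      rw [Complex.mul_conj] at r11; exact_mod_cast r11
    have n01 : Complex.normSq (U (0,1) (0,1)) + Complex.normSq (U (0,1) (1,0)) = 1 := by
      rw [Complex.mul_conj, Complex.mul_conj] at r01; exact_mod_cast r01
    have n10 : Complex.normSq (U (1,0) (0,1)) + Complex.normSq (U (1,0) (1,0)) = 1 := by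
      rw [Complex.mul_conj, Complex.mul_conj] at r10; exact_mod_cast r10
    have au0 : ‖U 0 0‖ = 1 := by
      rw [Complex.norm_def, n00, Real.sqrt_one]
    have au1 : ‖U 1 1‖ = 1 := by
      rw [Complex.norm_def, n11, Real.sqrt_one]
    have aa : ‖U (0,1) (0,1)‖ ≤ 1 := by
      rw [Complex.norm_def]
      rw [Real.sqrt_le_one]
      nlinarith [Complex.normSq_nonneg (U (0,1) (1,0))]
    have ad : ‖U (1,0) (1,0)‖ ≤ 1 := by
      rw [Complex.norm_def]
      rw [Real.sqrt_le_one]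
      nlinarith [Complex.normSq_nonneg (U (1,0) (0,1))]
    refine ⟨((1/(1+q):ℝ):ℂ) * (U 0 0 * starRingEnd ℂ (U (1,0) (1,0)))
        + ((q/(1+q):ℝ):ℂ) * (U (0,1) (0,1) * starRingEnd ℂ (U 1 1)), ?_, ?_⟩
    · have ht0 : (0:ℝ) ≤ 1/(1+q) := by positivity
      have ht1 : (0:ℝ) ≤ q/(1+q) := by positivity
      calc ‖_‖ ≤ ‖((1/(1+q):ℝ):ℂ) * (U 0 0 * starRingEnd ℂ (U (1,0) (1,0)))‖
            + ‖((q/(1+q):ℝ):ℂ) * (U (0,1) (0,1) * starRingEnd ℂ (U 1 1))‖ :=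
          norm_add_le _ _
        _ = (1/(1+q)) * (‖U 0 0‖ * ‖U (1,0) (1,0)‖)
            + (q/(1+q)) * (‖U (0,1) (0,1)‖ * ‖U 1 1‖) := by
          have habs : ‖1+(q:ℂ)‖ = 1 + q := by
            rw [show (1+(q:ℂ)) = ((1+q:ℝ):ℂ) by push_cast; ring, Complex.norm_real, Real.norm_eq_abs,
              abs_of_pos hq1]
          simp [norm_mul, Complex.norm_real, Real.norm_eq_abs, Complex.norm_conj, abs_of_nonneg ht0,
            abs_of_nonneg ht1, habs, abs_of_pos hq, div_eq_mul_inv]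
        _ ≤ 1 := by
          have b1 : ‖U 0 0‖ * ‖U (1,0) (1,0)‖ ≤ 1 := by
            rw [au0, one_mul]; exact ad
          have b2 : ‖U (0,1) (0,1)‖ * ‖U 1 1‖ ≤ 1 := by
            rw [au1, mul_one]; exact aa
          have hsum : 1/(1+q) + q/(1+q) = 1 := by field_simp
          nlinarith [ht0, ht1, b1, b2,
            mul_nonneg (norm_nonneg (U 0 0)) (norm_nonneg (U (1,0) (1,0))),
            mul_nonneg (norm_nonneg (U (0,1) (0,1))) (norm_nonneg (U 1 1))]
    · simp only [collide, Matrix.mul_apply, Fintype.sum_prod_type, Fin.sum_univ_two,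
        Matrix.kroneckerMap_apply, Matrix.conjTranspose_apply, Matrix.of_apply,
        Matrix.diagonal_apply, Finset.sum_mul, Finset.mul_sum,
        Prod.mk_zero_zero, Prod.mk_one_one, Complex.star_def,
        z1,z2,z3,z4,z5,z6,z7,z8,z9,z10,
        zero_mul, mul_zero, add_zero, zero_add, map_zero, star_zero]
      norm_num
      push_cast
      ring

noncomputable def Ut (t s : ℝ) : Matrix (Fin 2 × Fin 2) (Fin 2 × Fin 2) ℂ :=
  Matrix.of fun x y =>
    if x = y then (if x = ((0:Fin 2),(1:Fin 2)) ∨ x = ((1:Fin 2),(0:Fin 2)) then (t:ℂ) else 1)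
    else if x = ((0:Fin 2),(1:Fin 2)) ∧ y = ((1:Fin 2),(0:Fin 2)) then (s:ℂ)
    else if x = ((1:Fin 2),(0:Fin 2)) ∧ y = ((0:Fin 2),(1:Fin 2)) then (-s:ℂ)
    else 0

lemma Ut_unitary (t s : ℝ) (ht : t^2 + s^2 = 1) :
    Ut t s ∈ Matrix.unitaryGroup (Fin 2 × Fin 2) ℂ := by
  have ic : (t:ℂ)^2 + (s:ℂ)^2 = 1 := by exact_mod_cast congrArg (Complex.ofReal) ht
  rw [Matrix.mem_unitaryGroup_iff]
  ext x y
  fin_cases x <;> fin_cases y <;>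
    simp [Ut, Matrix.mul_apply, Fintype.sum_prod_type, Fin.sum_univ_two,
      Matrix.conjTranspose_apply, Matrix.one_apply, Prod.ext_iff] <;>
    push_cast <;> try ring1
  all_goals linear_combination ic

lemma Ut_comm (t s E : ℝ) :
    Ut t s * Matrix.diagonal
        (fun ab : Fin 2 × Fin 2 => ((((ab.1 : ℕ) + (ab.2 : ℕ)) * E : ℝ) : ℂ))
      = Matrix.diagonal
        (fun ab : Fin 2 × Fin 2 => ((((ab.1 : ℕ) + (ab.2 : ℕ)) * E : ℝ) : ℂ)) * Ut t s := by
  ext x y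
  rw [Matrix.mul_diagonal, Matrix.diagonal_mul]
  fin_cases x <;> fin_cases y <;> simp [Ut, Prod.ext_iff] <;> ring

lemma collide_Ut (q t s : ℝ) (hq : 0 < q)
    (σ : Matrix (Fin 2) (Fin 2) ℂ)
    (h00 : σ 0 0 = ((1 / (1 + q) : ℝ) : ℂ)) (h11 : σ 1 1 = ((q / (1 + q) : ℝ) : ℂ))
    (ht : t^2 + s^2 = 1) :
    collide q (Ut t s) σ 0 0 = σ 0 0 ∧ collide q (Ut t s) σ 1 1 = σ 1 1 ∧
      collide q (Ut t s) σ 0 1 = (t:ℂ) * σ 0 1 := by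
  have hq1 : (0:ℝ) < 1 + q := by linarith
  have hne : (1 + (q:ℂ)) ≠ 0 := by exact_mod_cast (Complex.ofReal_ne_zero.mpr hq1.ne')
  have ic : (t:ℂ)^2 + (s:ℂ)^2 = 1 := by exact_mod_cast congrArg (Complex.ofReal) ht
  refine ⟨?_, ?_, ?_⟩ <;>
    · simp only [collide, Matrix.mul_apply, Fintype.sum_prod_type, Fin.sum_univ_two,
        Matrix.kroneckerMap_apply, Matrix.conjTranspose_apply, Matrix.of_apply,
        Matrix.diagonal_apply, Finset.sum_mul, Finset.mul_sum, Complex.star_def]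
      simp [Ut, Prod.ext_iff, h00, h11]
      push_cast
      field_simp [hne]
      all_goals first
        | ring1
        | linear_combination (q:ℂ) * ic
        | linear_combination ic

/-- The z = z_τ case of the paper's Theorem 1: (i) any N identical energy-preserving
collisions fix z at z_τ and can only shrink the coherence; (ii) conversely any coherence
value in [0, η(ρ)] is reachable with z staying at z_τ. -/
theorem qubit_cone_z_eq_ztau
    (β E : ℝ) (hβ : 0 < β) (hE : 0 < E) (q : ℝ) (hq : q = Real.exp (-β * E))
    (zτ : ℝ) (hzτ : zτ = (1 - q) / (1 + q))
    (ρ : Matrix (Fin 2) (Fin 2) ℂ) (hρ : ρ.PosSemidef) (htr : ρ.trace = 1)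
    (hzρ : (ρ 0 0).re - (ρ 1 1).re = zτ)
    (N : ℕ) (hN : 1 ≤ N) :
    (∀ U : Matrix (Fin 2 × Fin 2) (Fin 2 × Fin 2) ℂ,
      U ∈ Matrix.unitaryGroup (Fin 2 × Fin 2) ℂ →
      U * Matrix.diagonal
          (fun ab : Fin 2 × Fin 2 => ((((ab.1 : ℕ) + (ab.2 : ℕ)) * E : ℝ) : ℂ))
        = Matrix.diagonal
          (fun ab : Fin 2 × Fin 2 => ((((ab.1 : ℕ) + (ab.2 : ℕ)) * E : ℝ) : ℂ)) * U →
      ((((collide q U)^[N] ρ) 0 0).re - (((collide q U)^[N] ρ) 1 1).re = zτ ∧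
        0 ≤ ‖((collide q U)^[N] ρ) 0 1‖ ∧
        ‖((collide q U)^[N] ρ) 0 1‖ ≤ ‖ρ 0 1‖))
    ∧ (∀ η' : ℝ, 0 ≤ η' → η' ≤ ‖ρ 0 1‖ →
      ∃ U : Matrix (Fin 2 × Fin 2) (Fin 2 × Fin 2) ℂ,
        U ∈ Matrix.unitaryGroup (Fin 2 × Fin 2) ℂ ∧
        U * Matrix.diagonal
            (fun ab : Fin 2 × Fin 2 => ((((ab.1 : ℕ) + (ab.2 : ℕ)) * E : ℝ) : ℂ))
          = Matrix.diagonal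
            (fun ab : Fin 2 × Fin 2 => ((((ab.1 : ℕ) + (ab.2 : ℕ)) * E : ℝ) : ℂ)) * U ∧
        (((collide q U)^[N] ρ) 0 0).re - (((collide q U)^[N] ρ) 1 1).re = zτ ∧
        ‖((collide q U)^[N] ρ) 0 1‖ = η') := by
  have hq0 : 0 < q := hq ▸ Real.exp_pos _
  have hq1 : (0:ℝ) < 1 + q := by linarith
  have him0 : (ρ 0 0).im = 0 := by
    have h2 := congrFun (congrFun hρ.1.symm 0) 0
    rw [Matrix.conjTranspose_apply] at h2
    have h3 := congrArg Complex.im h2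
    simp at h3
    linarith
  have him1 : (ρ 1 1).im = 0 := by
    have h2 := congrFun (congrFun hρ.1.symm 1) 1
    rw [Matrix.conjTranspose_apply] at h2
    have h3 := congrArg Complex.im h2
    simp at h3
    linarith
  have htr2 : ρ 0 0 + ρ 1 1 = 1 := by rw [← Matrix.trace_fin_two]; exact htr
  have hre : (ρ 0 0).re + (ρ 1 1).re = 1 := by
    have := congrArg Complex.re htr2; simpa using this
  have a0 : ρ 0 0 = ((1/(1+q) : ℝ) : ℂ) := by
    apply Complex.ext
    · have h1 : (ρ 0 0).re = (1 + zτ)/2 := by linarith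
      rw [Complex.ofReal_re, h1, hzτ]
      field_simp
      ring
    · rw [Complex.ofReal_im]; exact him0
  have a1 : ρ 1 1 = ((q/(1+q) : ℝ) : ℂ) := by
    apply Complex.ext
    · have h1 : (ρ 1 1).re = (1 - zτ)/2 := by linarith
      rw [Complex.ofReal_re, h1, hzτ]
      field_simp
      ring
    · rw [Complex.ofReal_im]; exact him1
  constructor
  · intro U hU hcomm
    have hz : ∀ x y : Fin 2 × Fin 2,
        (x.1 : ℕ) + (x.2 : ℕ) ≠ (y.1 : ℕ) + (y.2 : ℕ) → U x y = 0 := by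
      intro x y hxy
      have h2 := congrFun (congrFun hcomm x) y
      rw [Matrix.mul_diagonal, Matrix.diagonal_mul] at h2
      have hfe : (((((y.1:ℕ) + (y.2:ℕ)) : ℝ) * E : ℝ) : ℂ)
          ≠ (((((x.1:ℕ) + (x.2:ℕ)) : ℝ) * E : ℝ) : ℂ) := by
        intro hc
        apply hxy
        have hc2 := Complex.ofReal_injective hc
        have hc3 := mul_right_cancel₀ hE.ne' hc2
        exact_mod_cast hc3.symm
      have h4 : U x y * ((((((y.1:ℕ) + (y.2:ℕ)) : ℝ) * E : ℝ) : ℂ)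
          - (((((x.1:ℕ) + (x.2:ℕ)) : ℝ) * E : ℝ) : ℂ)) = 0 := by
        push_cast at h2 ⊢
        linear_combination h2
      rcases mul_eq_zero.mp h4 with h | h
      · exact h
      · exact absurd (sub_eq_zero.mp h) hfe
    have key : ∀ n : ℕ, ((collide q U)^[n] ρ) 0 0 = ρ 0 0 ∧ ((collide q U)^[n] ρ) 1 1 = ρ 1 1 ∧
        ∃ μ : ℂ, ‖μ‖ ≤ 1 ∧ ((collide q U)^[n] ρ) 0 1 = μ * ρ 0 1 := by
      intro n
      induction n with
      | zero => exact ⟨rfl, rfl, 1, by simp⟩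
      | succ n ih =>
        obtain ⟨i0, i1, μ, hμ, hμe⟩ := ih
        obtain ⟨s0, s1, ν, hν, hνe⟩ := collide_step q hq0 U hU hz ((collide q U)^[n] ρ)
          (by rw [i0, a0]) (by rw [i1, a1])
        rw [Function.iterate_succ_apply']
        refine ⟨by rw [s0, i0], by rw [s1, i1], ν * μ, ?_, by rw [hνe, hμe]; ring⟩
        rw [norm_mul]
        exact mul_le_one₀ hν (norm_nonneg _) hμ
    obtain ⟨k0, k1, μ, hμ, hμe⟩ := key N
    refine ⟨by rw [k0, k1]; exact hzρ, norm_nonneg _, ?_⟩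
    rw [hμe, norm_mul]
    exact mul_le_of_le_one_left (norm_nonneg _) hμ
  · intro η' hη0 hηle
    obtain ⟨t, ht0, ht1, htN⟩ : ∃ t : ℝ, 0 ≤ t ∧ t ≤ 1 ∧ t^N * ‖ρ 0 1‖ = η' := by
      by_cases h : ‖ρ 0 1‖ = 0
      · refine ⟨1, zero_le_one, le_refl 1, ?_⟩
        rw [h, mul_zero]
        have : η' ≤ 0 := h ▸ hηle
        linarith
      · have hpos : 0 < ‖ρ 0 1‖ :=
          lt_of_le_of_ne (norm_nonneg _) (Ne.symm h)
        have hr0 : 0 ≤ η' / ‖ρ 0 1‖ := div_nonneg hη0 hpos.le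
        have hr1 : η' / ‖ρ 0 1‖ ≤ 1 := (div_le_one hpos).mpr hηle
        refine ⟨(η' / ‖ρ 0 1‖) ^ ((N:ℝ)⁻¹), Real.rpow_nonneg hr0 _,
          Real.rpow_le_one hr0 hr1 (by positivity), ?_⟩
        have hNne : (N:ℝ) ≠ 0 := by
          exact_mod_cast (Nat.pos_of_ne_zero (by omega)).ne'
        have hp : ((η' / ‖ρ 0 1‖) ^ ((N:ℝ)⁻¹)) ^ N
            = η' / ‖ρ 0 1‖ := by
          rw [← Real.rpow_natCast ((η' / ‖ρ 0 1‖) ^ ((N:ℝ)⁻¹)) N,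
            ← Real.rpow_mul hr0, inv_mul_cancel₀ hNne, Real.rpow_one]
        rw [hp]
        field_simp
    set s := Real.sqrt (1 - t^2) with hs
    have hts : t^2 + s^2 = 1 := by
      rw [hs, Real.sq_sqrt (by nlinarith : (0:ℝ) ≤ 1 - t^2)]; ring
    have key : ∀ n : ℕ, ((collide q (Ut t s))^[n] ρ) 0 0 = ρ 0 0 ∧
        ((collide q (Ut t s))^[n] ρ) 1 1 = ρ 1 1 ∧
        ((collide q (Ut t s))^[n] ρ) 0 1 = ((t:ℝ):ℂ)^n * ρ 0 1 := by
      intro n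
      induction n with
      | zero => simp
      | succ n ih =>
        obtain ⟨i0, i1, i01⟩ := ih
        obtain ⟨s0, s1, s01⟩ := collide_Ut q t s hq0 ((collide q (Ut t s))^[n] ρ)
          (by rw [i0, a0]) (by rw [i1, a1]) hts
        rw [Function.iterate_succ_apply']
        exact ⟨by rw [s0, i0], by rw [s1, i1], by rw [s01, i01]; ring⟩
    obtain ⟨k0, k1, k01⟩ := key N
    refine ⟨Ut t s, Ut_unitary t s hts, Ut_comm t s E,
      by rw [k0, k1]; exact hzρ, ?_⟩
    rw [k01, norm_mul, norm_pow, Complex.norm_real, Real.norm_eq_abs, abs_of_nonneg ht0]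
    exact htN
end

section
/- Let β > 0, E > 0, q = exp(−β·E), s = 1+q+q², and τ_j = q^j/s for j = 0,1,2. Let p be a probability distribution on Fin 3 with τ_1·p_1 ≥ τ_0·p_2 ≥ τ_2·p_0 (β-ordering (1,2,0)). Then for every unitary complex matrix U indexed by (Fin 3) × (Fin 3) commuting with the diagonal matrix H_{(k,j)} = (k+j)·E, the output populations p'_k = Σ_{j<3} (U·D·U†)_{(k,j),(k,j)} (with D diagonal, D_{(k,j),(k,j)} = p_k·τ_j) satisfy: p_0 ≤ p'_0 ≤ τ_0 + (τ_1·p_1 − τ_0·p_2), τ_1 − (τ_1·p_1 − τ_2·p_0) ≤ p'_1 ≤ p_1, and p_2 − (τ_0·p_2 − τ_2·p_0) ≤ p'_2 ≤ τ_2 + (τ_1·p_1 − τ_2·p_0). (Necessity direction of the paper's computation of the single-collision cone for qutrit states in Subset V, Eq. (qutrit_cone).) -/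
open scoped BigOperators
open Matrix

set_option maxHeartbeats 1000000

private lemma row2bnd (a b x y : ℝ) (ha : 0 ≤ a) (hb : 0 ≤ b) (hab : a + b = 1)
    (hxy : x ≤ y) : x ≤ a * x + b * y ∧ a * x + b * y ≤ y := by
  have ha' : a = 1 - b := by linarith
  subst ha'
  constructor
  · nlinarith [mul_nonneg hb (sub_nonneg.2 hxy)]
  · nlinarith [mul_nonneg ha (sub_nonneg.2 hxy)]

private lemma row3bnd (a b c x y z : ℝ) (ha : 0 ≤ a) (hb : 0 ≤ b) (hc : 0 ≤ c)
    (habc : a + b + c = 1) (hxz : x ≤ z) (hzy : z ≤ y) :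
    x ≤ a * x + b * y + c * z ∧ a * x + b * y + c * z ≤ y := by
  have ha' : a = 1 - b - c := by linarith
  subst ha'
  constructor
  · nlinarith [mul_nonneg hb (sub_nonneg.2 (hxz.trans hzy)), mul_nonneg hc (sub_nonneg.2 hxz)]
  · nlinarith [mul_nonneg ha (sub_nonneg.2 (hxz.trans hzy)), mul_nonneg hc (sub_nonneg.2 hzy)]

/-- Necessity direction of the paper's single-collision qutrit cone, Eq. (qutrit_cone):
for an input distribution in Subset V (β-ordering (1,2,0)), the output populations of any
energy-preserving collision with a Gibbs qutrit molecule obey the stated bounds. -/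
theorem qutrit_cone_necessity
    (β E : ℝ) (hβ : 0 < β) (hE : 0 < E) (q : ℝ) (hq : q = Real.exp (-β * E))
    (s : ℝ) (hs : s = 1 + q + q ^ 2)
    (τ : Fin 3 → ℝ) (hτ : ∀ j, τ j = q ^ (j : ℕ) / s)
    (p : Fin 3 → ℝ) (hp0 : ∀ k, 0 ≤ p k) (hp1 : ∑ k, p k = 1)
    (hord₁ : τ 0 * p 2 ≤ τ 1 * p 1) (hord₂ : τ 2 * p 0 ≤ τ 0 * p 2)
    (U : Matrix (Fin 3 × Fin 3) (Fin 3 × Fin 3) ℂ)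
    (hU : U ∈ Matrix.unitaryGroup (Fin 3 × Fin 3) ℂ)
    (hcomm : U * Matrix.diagonal
        (fun kj : Fin 3 × Fin 3 => ((((kj.1 : ℕ) + (kj.2 : ℕ)) * E : ℝ) : ℂ))
      = Matrix.diagonal
        (fun kj : Fin 3 × Fin 3 => ((((kj.1 : ℕ) + (kj.2 : ℕ)) * E : ℝ) : ℂ)) * U)
    (p' : Fin 3 → ℝ)
    (hp' : ∀ k : Fin 3, p' k = ∑ j : Fin 3,
      ((U * Matrix.diagonal
          (fun kj : Fin 3 × Fin 3 => ((p kj.1 * τ kj.2 : ℝ) : ℂ)) * Uᴴ)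
        (k, j) (k, j)).re) :
    (p 0 ≤ p' 0 ∧ p' 0 ≤ τ 0 + (τ 1 * p 1 - τ 0 * p 2)) ∧
    (τ 1 - (τ 1 * p 1 - τ 2 * p 0) ≤ p' 1 ∧ p' 1 ≤ p 1) ∧
    (p 2 - (τ 0 * p 2 - τ 2 * p 0) ≤ p' 2 ∧ p' 2 ≤ τ 2 + (τ 1 * p 1 - τ 2 * p 0)) := by
  -- basic positivity facts
  have hq0 : 0 < q := by rw [hq]; exact Real.exp_pos _
  have hs0 : 0 < s := by rw [hs]; positivity
  have hsne : s ≠ 0 := hs0.ne'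
  have e0 : τ 0 = 1 / s := by rw [hτ]; norm_num
  have e1 : τ 1 = q / s := by rw [hτ]; norm_num
  have e2 : τ 2 = q ^ 2 / s := by rw [hτ]; norm_num
  have ht1 : τ 1 = q * τ 0 := by rw [e1, e0]; ring
  have ht2 : τ 2 = q * τ 1 := by rw [e2, e1]; ring
  have hτsum : τ 0 + τ 1 + τ 2 = 1 := by
    rw [e0, e1, e2]
    field_simp
    linarith [hs]
  have hp1' : p 0 + p 1 + p 2 = 1 := by
    rw [Fin.sum_univ_three] at hp1; exact hp1
  -- sign facts for 2-dim sectors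
  have hyx : τ 2 * p 0 ≤ τ 1 * p 1 := hord₂.trans hord₁
  have hsec1 : p 0 * τ 1 ≤ p 1 * τ 0 := by
    rw [ht2, ht1] at hyx
    rw [ht1]
    nlinarith [hyx, hq0]
  have hsec3 : p 2 * τ 1 ≤ p 1 * τ 2 := by
    have h := mul_le_mul_of_nonneg_left hord₁ hq0.le
    rw [ht2, ht1]
    rw [ht1] at h
    nlinarith [h]
  -- the transition weights
  set w : Fin 3 × Fin 3 → Fin 3 × Fin 3 → ℝ :=
    fun r c => Complex.normSq (U r c) with hwdef
  have hwnn : ∀ r c, 0 ≤ w r c := fun r c => Complex.normSq_nonneg _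
  -- energy conservation: off-sector entries vanish
  have hw0 : ∀ r c : Fin 3 × Fin 3, (r.1:ℕ) + (r.2:ℕ) ≠ (c.1:ℕ) + (c.2:ℕ) → w r c = 0 := by
    intro r c h
    have h1 := congrFun (congrFun hcomm r) c
    rw [Matrix.mul_diagonal, Matrix.diagonal_mul] at h1
    have h2 : U r c * ((((c.1:ℕ)+(c.2:ℕ)) * E : ℝ) - (((r.1:ℕ)+(r.2:ℕ)) * E : ℝ) : ℂ) = 0 := by
      push_cast at h1 ⊢
      linear_combination h1
    rcases mul_eq_zero.mp h2 with h3 | h3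
    · simp [hwdef, h3]
    · exfalso
      apply h
      have h4 : ((((c.1:ℕ)+(c.2:ℕ)) * E : ℝ) : ℂ) = ((((r.1:ℕ)+(r.2:ℕ)) * E : ℝ) : ℂ) := by
        push_cast at h3 ⊢; linear_combination h3
      have h5 : (((c.1:ℕ)+(c.2:ℕ)) * E : ℝ) = (((r.1:ℕ)+(r.2:ℕ)) * E : ℝ) := by
        exact_mod_cast h4
      have h6 := mul_right_cancel₀ hE.ne' h5
      exact_mod_cast h6.symm
  -- rows of |U|² sum to one
  have hrow : ∀ r : Fin 3 × Fin 3, ∑ c, w r c = 1 := by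
    intro r
    have hUU : U * Uᴴ = 1 := Matrix.mem_unitaryGroup_iff.mp hU
    have h1 := congrFun (congrFun hUU r) r
    rw [Matrix.mul_apply, Matrix.one_apply_eq] at h1
    have h2 : ((∑ c, Complex.normSq (U r c) : ℝ) : ℂ) = 1 := by
      push_cast
      rw [← h1]
      refine Finset.sum_congr rfl fun c _ => ?_
      rw [Matrix.conjTranspose_apply, RCLike.star_def, Complex.mul_conj]
    exact_mod_cast h2
  -- populations as weighted sums
  have hterm : ∀ (z : ℂ) (x : ℝ), (z * (x:ℂ) * star z).re = Complex.normSq z * x := by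
    intro z x
    have h : z * (x:ℂ) * star z = ((Complex.normSq z * x : ℝ) : ℂ) := by
      rw [RCLike.star_def, mul_comm z, mul_assoc, Complex.mul_conj]
      push_cast; ring
    rw [h, Complex.ofReal_re]
  have hP : ∀ k : Fin 3, p' k = ∑ j : Fin 3, ∑ c : Fin 3 × Fin 3,
      w (k, j) c * (p c.1 * τ c.2) := by
    intro k
    rw [hp' k]
    refine Finset.sum_congr rfl fun j _ => ?_
    rw [Matrix.mul_apply, Complex.re_sum]
    refine Finset.sum_congr rfl fun c _ => ?_
    rw [Matrix.mul_diagonal, Matrix.conjTranspose_apply, hterm]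

  have hr00 : w (0,0) (0,0) = 1 := by
    have h := hrow (0,0)
    simp only [Fintype.sum_prod_type, Fin.sum_univ_three] at h
    simp only [hw0 (0,0) (0,1) (by decide),
      hw0 (0,0) (0,2) (by decide),
      hw0 (0,0) (1,0) (by decide),
      hw0 (0,0) (1,1) (by decide),
      hw0 (0,0) (1,2) (by decide),
      hw0 (0,0) (2,0) (by decide),
      hw0 (0,0) (2,1) (by decide),
      hw0 (0,0) (2,2) (by decide)] at h
    linarith [h]
  have hr01 : w (0,1) (0,1) + w (0,1) (1,0) = 1 := by
    have h := hrow (0,1)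
    simp only [Fintype.sum_prod_type, Fin.sum_univ_three] at h
    simp only [hw0 (0,1) (0,0) (by decide),
      hw0 (0,1) (0,2) (by decide),
      hw0 (0,1) (1,1) (by decide),
      hw0 (0,1) (1,2) (by decide),
      hw0 (0,1) (2,0) (by decide),
      hw0 (0,1) (2,1) (by decide),
      hw0 (0,1) (2,2) (by decide)] at h
    linarith [h]
  have hr10 : w (1,0) (0,1) + w (1,0) (1,0) = 1 := by
    have h := hrow (1,0)
    simp only [Fintype.sum_prod_type, Fin.sum_univ_three] at h
    simp only [hw0 (1,0) (0,0) (by decide),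
      hw0 (1,0) (0,2) (by decide),
      hw0 (1,0) (1,1) (by decide),
      hw0 (1,0) (1,2) (by decide),
      hw0 (1,0) (2,0) (by decide),
      hw0 (1,0) (2,1) (by decide),
      hw0 (1,0) (2,2) (by decide)] at h
    linarith [h]
  have hr02 : w (0,2) (0,2) + w (0,2) (1,1) + w (0,2) (2,0) = 1 := by
    have h := hrow (0,2)
    simp only [Fintype.sum_prod_type, Fin.sum_univ_three] at h
    simp only [hw0 (0,2) (0,0) (by decide),
      hw0 (0,2) (0,1) (by decide),
      hw0 (0,2) (1,0) (by decide),
      hw0 (0,2) (1,2) (by decide),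
      hw0 (0,2) (2,1) (by decide),
      hw0 (0,2) (2,2) (by decide)] at h
    linarith [h]
  have hr11 : w (1,1) (0,2) + w (1,1) (1,1) + w (1,1) (2,0) = 1 := by
    have h := hrow (1,1)
    simp only [Fintype.sum_prod_type, Fin.sum_univ_three] at h
    simp only [hw0 (1,1) (0,0) (by decide),
      hw0 (1,1) (0,1) (by decide),
      hw0 (1,1) (1,0) (by decide),
      hw0 (1,1) (1,2) (by decide),
      hw0 (1,1) (2,1) (by decide),
      hw0 (1,1) (2,2) (by decide)] at h
    linarith [h]
  have hr20 : w (2,0) (0,2) + w (2,0) (1,1) + w (2,0) (2,0) = 1 := by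
    have h := hrow (2,0)
    simp only [Fintype.sum_prod_type, Fin.sum_univ_three] at h
    simp only [hw0 (2,0) (0,0) (by decide),
      hw0 (2,0) (0,1) (by decide),
      hw0 (2,0) (1,0) (by decide),
      hw0 (2,0) (1,2) (by decide),
      hw0 (2,0) (2,1) (by decide),
      hw0 (2,0) (2,2) (by decide)] at h
    linarith [h]
  have hr12 : w (1,2) (1,2) + w (1,2) (2,1) = 1 := by
    have h := hrow (1,2)
    simp only [Fintype.sum_prod_type, Fin.sum_univ_three] at h
    simp only [hw0 (1,2) (0,0) (by decide),
      hw0 (1,2) (0,1) (by decide),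
      hw0 (1,2) (0,2) (by decide),
      hw0 (1,2) (1,0) (by decide),
      hw0 (1,2) (1,1) (by decide),
      hw0 (1,2) (2,0) (by decide),
      hw0 (1,2) (2,2) (by decide)] at h
    linarith [h]
  have hr21 : w (2,1) (1,2) + w (2,1) (2,1) = 1 := by
    have h := hrow (2,1)
    simp only [Fintype.sum_prod_type, Fin.sum_univ_three] at h
    simp only [hw0 (2,1) (0,0) (by decide),
      hw0 (2,1) (0,1) (by decide),
      hw0 (2,1) (0,2) (by decide),
      hw0 (2,1) (1,0) (by decide),
      hw0 (2,1) (1,1) (by decide),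
      hw0 (2,1) (2,0) (by decide),
      hw0 (2,1) (2,2) (by decide)] at h
    linarith [h]
  have hr22 : w (2,2) (2,2) = 1 := by
    have h := hrow (2,2)
    simp only [Fintype.sum_prod_type, Fin.sum_univ_three] at h
    simp only [hw0 (2,2) (0,0) (by decide),
      hw0 (2,2) (0,1) (by decide),
      hw0 (2,2) (0,2) (by decide),
      hw0 (2,2) (1,0) (by decide),
      hw0 (2,2) (1,1) (by decide),
      hw0 (2,2) (1,2) (by decide),
      hw0 (2,2) (2,0) (by decide),
      hw0 (2,2) (2,1) (by decide)] at h
    linarith [h]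
  have hP0 : p' 0 = (w (0,0) (0,0) * (p 0 * τ 0))
      + (w (0,1) (0,1) * (p 0 * τ 1) + w (0,1) (1,0) * (p 1 * τ 0))
      + (w (0,2) (0,2) * (p 0 * τ 2) + w (0,2) (1,1) * (p 1 * τ 1) + w (0,2) (2,0) * (p 2 * τ 0)) := by
    rw [hP 0]
    simp only [Fintype.sum_prod_type, Fin.sum_univ_three]
    simp only [hw0 (0,0) (0,1) (by decide),
      hw0 (0,0) (0,2) (by decide),
      hw0 (0,0) (1,0) (by decide),
      hw0 (0,0) (1,1) (by decide),
      hw0 (0,0) (1,2) (by decide),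
      hw0 (0,0) (2,0) (by decide),
      hw0 (0,0) (2,1) (by decide),
      hw0 (0,0) (2,2) (by decide),
      hw0 (0,1) (0,0) (by decide),
      hw0 (0,1) (0,2) (by decide),
      hw0 (0,1) (1,1) (by decide),
      hw0 (0,1) (1,2) (by decide),
      hw0 (0,1) (2,0) (by decide),
      hw0 (0,1) (2,1) (by decide),
      hw0 (0,1) (2,2) (by decide),
      hw0 (0,2) (0,0) (by decide),
      hw0 (0,2) (0,1) (by decide),
      hw0 (0,2) (1,0) (by decide),
      hw0 (0,2) (1,2) (by decide),
      hw0 (0,2) (2,1) (by decide),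
      hw0 (0,2) (2,2) (by decide), zero_mul, add_zero, zero_add]
    all_goals ring
  have hP1 : p' 1 = (w (1,0) (0,1) * (p 0 * τ 1) + w (1,0) (1,0) * (p 1 * τ 0))
      + (w (1,1) (0,2) * (p 0 * τ 2) + w (1,1) (1,1) * (p 1 * τ 1) + w (1,1) (2,0) * (p 2 * τ 0))
      + (w (1,2) (1,2) * (p 1 * τ 2) + w (1,2) (2,1) * (p 2 * τ 1)) := by
    rw [hP 1]
    simp only [Fintype.sum_prod_type, Fin.sum_univ_three]
    simp only [hw0 (1,0) (0,0) (by decide),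
      hw0 (1,0) (0,2) (by decide),
      hw0 (1,0) (1,1) (by decide),
      hw0 (1,0) (1,2) (by decide),
      hw0 (1,0) (2,0) (by decide),
      hw0 (1,0) (2,1) (by decide),
      hw0 (1,0) (2,2) (by decide),
      hw0 (1,1) (0,0) (by decide),
      hw0 (1,1) (0,1) (by decide),
      hw0 (1,1) (1,0) (by decide),
      hw0 (1,1) (1,2) (by decide),
      hw0 (1,1) (2,1) (by decide),
      hw0 (1,1) (2,2) (by decide),
      hw0 (1,2) (0,0) (by decide),
      hw0 (1,2) (0,1) (by decide),
      hw0 (1,2) (0,2) (by decide),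
      hw0 (1,2) (1,0) (by decide),
      hw0 (1,2) (1,1) (by decide),
      hw0 (1,2) (2,0) (by decide),
      hw0 (1,2) (2,2) (by decide), zero_mul, add_zero, zero_add]
    all_goals ring
  have hP2 : p' 2 = (w (2,0) (0,2) * (p 0 * τ 2) + w (2,0) (1,1) * (p 1 * τ 1) + w (2,0) (2,0) * (p 2 * τ 0))
      + (w (2,1) (1,2) * (p 1 * τ 2) + w (2,1) (2,1) * (p 2 * τ 1))
      + (w (2,2) (2,2) * (p 2 * τ 2)) := by
    rw [hP 2]
    simp only [Fintype.sum_prod_type, Fin.sum_univ_three]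
    simp only [hw0 (2,0) (0,0) (by decide),
      hw0 (2,0) (0,1) (by decide),
      hw0 (2,0) (1,0) (by decide),
      hw0 (2,0) (1,2) (by decide),
      hw0 (2,0) (2,1) (by decide),
      hw0 (2,0) (2,2) (by decide),
      hw0 (2,1) (0,0) (by decide),
      hw0 (2,1) (0,1) (by decide),
      hw0 (2,1) (0,2) (by decide),
      hw0 (2,1) (1,0) (by decide),
      hw0 (2,1) (1,1) (by decide),
      hw0 (2,1) (2,0) (by decide),
      hw0 (2,1) (2,2) (by decide),
      hw0 (2,2) (0,0) (by decide),
      hw0 (2,2) (0,1) (by decide),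
      hw0 (2,2) (0,2) (by decide),
      hw0 (2,2) (1,0) (by decide),
      hw0 (2,2) (1,1) (by decide),
      hw0 (2,2) (1,2) (by decide),
      hw0 (2,2) (2,0) (by decide),
      hw0 (2,2) (2,1) (by decide), zero_mul, add_zero, zero_add]
    all_goals ring
  -- per-row bounds
  have hB01 := row2bnd _ _ _ _ (hwnn (0,1) (0,1)) (hwnn (0,1) (1,0)) hr01 hsec1
  have hB10 := row2bnd _ _ _ _ (hwnn (1,0) (0,1)) (hwnn (1,0) (1,0)) hr10 hsec1
  have hB12 := row2bnd _ _ _ _ (hwnn (1,2) (2,1)) (hwnn (1,2) (1,2)) (by linarith [hr12]) hsec3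
  have hB21 := row2bnd _ _ _ _ (hwnn (2,1) (2,1)) (hwnn (2,1) (1,2)) (by linarith [hr21]) hsec3
  have hxz : p 0 * τ 2 ≤ p 2 * τ 0 := by linarith [hord₂, mul_comm (τ 2) (p 0), mul_comm (τ 0) (p 2)]
  have hzy : p 2 * τ 0 ≤ p 1 * τ 1 := by linarith [hord₁, mul_comm (τ 0) (p 2), mul_comm (τ 1) (p 1)]
  have hB02 := row3bnd (w (0,2) (0,2)) (w (0,2) (1,1)) (w (0,2) (2,0)) (p 0 * τ 2) (p 1 * τ 1) (p 2 * τ 0)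
    (hwnn _ _) (hwnn _ _) (hwnn _ _) hr02 hxz hzy
  have hB11 := row3bnd (w (1,1) (0,2)) (w (1,1) (1,1)) (w (1,1) (2,0)) (p 0 * τ 2) (p 1 * τ 1) (p 2 * τ 0)
    (hwnn _ _) (hwnn _ _) (hwnn _ _) (by linarith [hr11]) hxz hzy
  have hB20 := row3bnd (w (2,0) (0,2)) (w (2,0) (1,1)) (w (2,0) (2,0)) (p 0 * τ 2) (p 1 * τ 1) (p 2 * τ 0)
    (hwnn _ _) (hwnn _ _) (hwnn _ _) (by linarith [hr20]) hxz hzy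
  -- product-sum identities
  have hA0 : p 0 * τ 0 + p 0 * τ 1 + p 0 * τ 2 = p 0 := by linear_combination (p 0) * hτsum
  have hA1 : p 1 * τ 0 + p 1 * τ 1 + p 1 * τ 2 = p 1 := by linear_combination (p 1) * hτsum
  have hA2 : p 2 * τ 0 + p 2 * τ 1 + p 2 * τ 2 = p 2 := by linear_combination (p 2) * hτsum
  have hB0 : p 0 * τ 0 + p 1 * τ 0 + p 2 * τ 0 = τ 0 := by linear_combination (τ 0) * hp1'
  have hB1 : p 0 * τ 1 + p 1 * τ 1 + p 2 * τ 1 = τ 1 := by linear_combination (τ 1) * hp1'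
  have hB2 : p 0 * τ 2 + p 1 * τ 2 + p 2 * τ 2 = τ 2 := by linear_combination (τ 2) * hp1'
  have hw00 : w (0,0) (0,0) = 1 := by linarith [hr00]
  have hw22 : w (2,2) (2,2) = 1 := by linarith [hr22]
  rw [hw00] at hP0
  rw [hw22] at hP2
  refine ⟨⟨?_, ?_⟩, ⟨?_, ?_⟩, ?_, ?_⟩
  · linarith only [hP0, hB01.1, hB02.1, hA0]
  · linarith only [hP0, hB01.2, hB02.2, hB0]
  · linarith only [hP1, hB10.1, hB11.1, hB12.1, hB1]
  · linarith only [hP1, hB10.2, hB11.2, hB12.2, hA1]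
  · linarith only [hP2, hB20.1, hB21.1, hA2]
  · linarith only [hP2, hB20.2, hB21.2, hB2]
end

section
/- Let β > 0, E > 0, q = exp(−β·E), and τ_j = q^j/(1+q+q²) for j = 0,1,2. For every probability distribution p on Fin 3 there exists a unitary complex matrix U indexed by (Fin 3) × (Fin 3), commuting with the diagonal matrix H_{(k,j)} = (k+j)·E (namely the permutation that swaps |01⟩ ↔ |10⟩, cyclically permutes |02⟩ → |20⟩ → |11⟩ → |02⟩, and fixes all other basis states), such that the output populations are exactly p'_0 = τ_0 + (τ_1·p_1 − τ_0·p_2), p'_1 = τ_1·p_0 + τ_2·p_1 + τ_0·p_2, p'_2 = p_2 − (τ_0·p_2 − τ_2·p_0). (Achievability of the extreme point A₄ of the paper's single-collision qutrit cone.) -/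
open scoped BigOperators
open Matrix

private def A4f : Fin 3 × Fin 3 → Fin 3 × Fin 3 := fun x =>
  if x = (0,1) then (1,0)
  else if x = (1,0) then (0,1)
  else if x = (0,2) then (1,1)
  else if x = (2,0) then (0,2)
  else if x = (1,1) then (2,0)
  else x

private def A4g : Fin 3 × Fin 3 → Fin 3 × Fin 3 := fun x =>
  if x = (1,0) then (0,1)
  else if x = (0,1) then (1,0)
  else if x = (1,1) then (0,2)
  else if x = (0,2) then (2,0)
  else if x = (2,0) then (1,1)
  else x

private def A4perm : Equiv.Perm (Fin 3 × Fin 3) := ⟨A4f, A4g, by decide, by decide⟩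

private def A4U : Matrix (Fin 3 × Fin 3) (Fin 3 × Fin 3) ℂ :=
  A4perm.toPEquiv.toMatrix

private lemma A4U_conjTranspose : A4Uᴴ = (A4perm.symm).toPEquiv.toMatrix := by
  ext i j
  simp [A4U, conjTranspose_apply, PEquiv.toMatrix_apply, apply_ite (star : ℂ → ℂ),
    Equiv.toPEquiv_apply, eq_comm, Equiv.eq_symm_apply]

private lemma A4U_unitary : A4U ∈ Matrix.unitaryGroup (Fin 3 × Fin 3) ℂ := by
  rw [Matrix.mem_unitaryGroup_iff]
  have : (star A4U : Matrix _ _ ℂ) = (A4perm.symm).toPEquiv.toMatrix := A4U_conjTranspose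
  rw [this, A4U, ← PEquiv.toMatrix_trans, ← Equiv.toPEquiv_trans, Equiv.self_trans_symm,
    Equiv.toPEquiv_refl, PEquiv.toMatrix_refl]

private lemma A4_energy : ∀ i : Fin 3 × Fin 3,
    ((A4perm i).1 : ℕ) + ((A4perm i).2 : ℕ) = (i.1 : ℕ) + (i.2 : ℕ) := by decide

private lemma A4U_comm (E : ℝ) :
    A4U * Matrix.diagonal
        (fun kj : Fin 3 × Fin 3 => ((((kj.1 : ℕ) + (kj.2 : ℕ)) * E : ℝ) : ℂ))
      = Matrix.diagonal
        (fun kj : Fin 3 × Fin 3 => ((((kj.1 : ℕ) + (kj.2 : ℕ)) * E : ℝ) : ℂ)) * A4U := by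
  ext i j
  rw [A4U, PEquiv.toMatrix_toPEquiv_mul]
  rw [Matrix.diagonal_mul, Matrix.submatrix_apply, id_eq, Matrix.diagonal_apply]
  by_cases h : A4perm i = j
  · rw [if_pos h, PEquiv.toMatrix_apply, Equiv.toPEquiv_apply, if_pos (by simp [h]), mul_one]
    norm_cast
    rw [A4_energy i]
  · rw [if_neg h, PEquiv.toMatrix_apply, Equiv.toPEquiv_apply,
      if_neg (by simpa [eq_comm] using h), mul_zero]

private lemma A4U_conj (d : Fin 3 × Fin 3 → ℂ) (i : Fin 3 × Fin 3) :
    (A4U * Matrix.diagonal d * A4Uᴴ) i i = d (A4perm i) := by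
  rw [A4U_conjTranspose, PEquiv.mul_toMatrix_apply]
  simp only [← Equiv.toPEquiv_symm, Equiv.toPEquiv_apply, Equiv.symm_symm]
  rw [A4U, PEquiv.toMatrix_mul_apply, Equiv.toPEquiv_apply]
  simp [Matrix.diagonal_apply_eq]

/-- Achievability of the extreme point A₄ of the paper's single-collision qutrit cone: the
energy-preserving permutation swapping |01⟩ ↔ |10⟩ and cyclically permuting
|02⟩ → |20⟩ → |11⟩ → |02⟩ produces exactly the stated output populations. -/
theorem qutrit_extreme_point_A4
    (β E : ℝ) (hβ : 0 < β) (hE : 0 < E) (q : ℝ) (hq : q = Real.exp (-β * E))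
    (τ : Fin 3 → ℝ) (hτ : ∀ j, τ j = q ^ (j : ℕ) / (1 + q + q ^ 2))
    (p : Fin 3 → ℝ) (hp0 : ∀ k, 0 ≤ p k) (hp1 : ∑ k, p k = 1) :
    ∃ U : Matrix (Fin 3 × Fin 3) (Fin 3 × Fin 3) ℂ,
      U ∈ Matrix.unitaryGroup (Fin 3 × Fin 3) ℂ ∧
      U * Matrix.diagonal
          (fun kj : Fin 3 × Fin 3 => ((((kj.1 : ℕ) + (kj.2 : ℕ)) * E : ℝ) : ℂ))
        = Matrix.diagonal
          (fun kj : Fin 3 × Fin 3 => ((((kj.1 : ℕ) + (kj.2 : ℕ)) * E : ℝ) : ℂ)) * U ∧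
      (∑ j : Fin 3,
          (U * Matrix.diagonal
              (fun kj : Fin 3 × Fin 3 => ((p kj.1 * τ kj.2 : ℝ) : ℂ)) * Uᴴ)
            ((0 : Fin 3), j) ((0 : Fin 3), j)
        = ((τ 0 + (τ 1 * p 1 - τ 0 * p 2) : ℝ) : ℂ)) ∧
      (∑ j : Fin 3,
          (U * Matrix.diagonal
              (fun kj : Fin 3 × Fin 3 => ((p kj.1 * τ kj.2 : ℝ) : ℂ)) * Uᴴ)
            ((1 : Fin 3), j) ((1 : Fin 3), j)
        = ((τ 1 * p 0 + τ 2 * p 1 + τ 0 * p 2 : ℝ) : ℂ)) ∧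
      (∑ j : Fin 3,
          (U * Matrix.diagonal
              (fun kj : Fin 3 × Fin 3 => ((p kj.1 * τ kj.2 : ℝ) : ℂ)) * Uᴴ)
            ((2 : Fin 3), j) ((2 : Fin 3), j)
        = ((p 2 - (τ 0 * p 2 - τ 2 * p 0) : ℝ) : ℂ)) := by
  have hq' : 0 < q := by rw [hq]; exact Real.exp_pos _
  have hne : (0 : ℝ) < 1 + q + q ^ 2 := by nlinarith [sq_nonneg q]
  have hp : p 0 + p 1 + p 2 = 1 := by
    simpa [Fin.sum_univ_three] using hp1
  have hsum : τ 0 + τ 1 + τ 2 = 1 := by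
    rw [hτ 0, hτ 1, hτ 2]
    field_simp
    simp
  have e00 : A4perm (0,0) = (0,0) := by decide
  have e01 : A4perm (0,1) = (1,0) := by decide
  have e02 : A4perm (0,2) = (1,1) := by decide
  have e10 : A4perm (1,0) = (0,1) := by decide
  have e11 : A4perm (1,1) = (2,0) := by decide
  have e12 : A4perm (1,2) = (1,2) := by decide
  have e20 : A4perm (2,0) = (0,2) := by decide
  have e21 : A4perm (2,1) = (2,1) := by decide
  have e22 : A4perm (2,2) = (2,2) := by decide
  refine ⟨A4U, A4U_unitary, A4U_comm E, ?_, ?_, ?_⟩ <;>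
    simp only [Fin.sum_univ_three, A4U_conj, e00, e01, e02, e10, e11, e12, e20, e21, e22]
  · norm_cast
    linear_combination τ 0 * hp
  · norm_cast
    ring
  · norm_cast
    linear_combination p 2 * hsum
end

section
/- Let β > 0, E > 0, q = exp(−β·E), and τ_j = q^j/(1+q+q²) for j = 0,1,2. For the qutrit input distribution p = (τ_1, τ_0, τ_2) (a state with no well-defined effective temperature), the maximum over all energy-preserving collisions of the output ground-state population equals τ_0 + τ_1·(τ_0 − τ_1); that is, there exists a unitary U indexed by (Fin 3) × (Fin 3) commuting with H_{(k,j)} = (k+j)·E with Σ_j (U·D·U†)_{(0,j),(0,j)} = τ_0 + τ_1·(τ_0 − τ_1), no such U achieves a larger value, and τ_0 + τ_1·(τ_0 − τ_1) > τ_0. (The paper's explicit example of cooling below the bath temperature by a single collision with a molecule no larger than the system.) -/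
open scoped BigOperators
open Matrix

/-- The energy-preserving permutation used in the optimal collision:
swaps (0,1)↔(1,0) and (0,2)↔(1,1). -/
def permF : Fin 3 × Fin 3 → Fin 3 × Fin 3 := fun x =>
  if x = (0, 1) then (1, 0) else if x = (1, 0) then (0, 1)
  else if x = (0, 2) then (1, 1) else if x = (1, 1) then (0, 2) else x

def qperm : Equiv.Perm (Fin 3 × Fin 3) :=
  ⟨permF, permF, by decide, by decide⟩

lemma qperm_energy (b : Fin 3 × Fin 3) :
    (((qperm b).1 : ℕ) + ((qperm b).2 : ℕ)) = ((b.1 : ℕ) + (b.2 : ℕ)) := by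
  revert b; decide

lemma conj_diag_entry {n : Type*} [Fintype n] [DecidableEq n]
    (V : Matrix n n ℂ) (w : n → ℝ) (a : n) :
    (V * Matrix.diagonal (fun i => ((w i : ℝ) : ℂ)) * Vᴴ) a a
      = ((∑ b, Complex.normSq (V a b) * w b : ℝ) : ℂ) := by
  rw [Matrix.mul_apply]
  push_cast
  refine Finset.sum_congr rfl fun b _ => ?_
  rw [Matrix.mul_diagonal, Matrix.conjTranspose_apply]
  calc V a b * ((w b : ℝ) : ℂ) * star (V a b)
      = ((w b : ℝ) : ℂ) * (V a b * star (V a b)) := by ring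
    _ = ((w b : ℝ) : ℂ) * ((Complex.normSq (V a b) : ℝ) : ℂ) := by
        rw [Complex.star_def, Complex.mul_conj]
    _ = ((Complex.normSq (V a b) : ℝ) : ℂ) * ((w b : ℝ) : ℂ) := by ring

/-- The paper's explicit example of cooling below the bath temperature by a single collision:
for the qutrit input distribution p = (τ₁, τ₀, τ₂), the maximal output ground-state
population over all energy-preserving collisions equals τ₀ + τ₁(τ₀ − τ₁) > τ₀. -/
theorem qutrit_sub_bath_cooling
    (β E : ℝ) (hβ : 0 < β) (hE : 0 < E) (q : ℝ) (hq : q = Real.exp (-β * E))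
    (τ : Fin 3 → ℝ) (hτ : ∀ j, τ j = q ^ (j : ℕ) / (1 + q + q ^ 2))
    (p : Fin 3 → ℝ) (hp : p = ![τ 1, τ 0, τ 2]) :
    (∃ U : Matrix (Fin 3 × Fin 3) (Fin 3 × Fin 3) ℂ,
      U ∈ Matrix.unitaryGroup (Fin 3 × Fin 3) ℂ ∧
      U * Matrix.diagonal
          (fun kj : Fin 3 × Fin 3 => ((((kj.1 : ℕ) + (kj.2 : ℕ)) * E : ℝ) : ℂ))
        = Matrix.diagonal
          (fun kj : Fin 3 × Fin 3 => ((((kj.1 : ℕ) + (kj.2 : ℕ)) * E : ℝ) : ℂ)) * U ∧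
      ∑ j : Fin 3,
          (U * Matrix.diagonal
              (fun kj : Fin 3 × Fin 3 => ((p kj.1 * τ kj.2 : ℝ) : ℂ)) * Uᴴ)
            ((0 : Fin 3), j) ((0 : Fin 3), j)
        = ((τ 0 + τ 1 * (τ 0 - τ 1) : ℝ) : ℂ)) ∧
    (∀ U : Matrix (Fin 3 × Fin 3) (Fin 3 × Fin 3) ℂ,
      U ∈ Matrix.unitaryGroup (Fin 3 × Fin 3) ℂ →
      U * Matrix.diagonal
          (fun kj : Fin 3 × Fin 3 => ((((kj.1 : ℕ) + (kj.2 : ℕ)) * E : ℝ) : ℂ))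
        = Matrix.diagonal
          (fun kj : Fin 3 × Fin 3 => ((((kj.1 : ℕ) + (kj.2 : ℕ)) * E : ℝ) : ℂ)) * U →
      ∑ j : Fin 3,
          ((U * Matrix.diagonal
              (fun kj : Fin 3 × Fin 3 => ((p kj.1 * τ kj.2 : ℝ) : ℂ)) * Uᴴ)
            ((0 : Fin 3), j) ((0 : Fin 3), j)).re
        ≤ τ 0 + τ 1 * (τ 0 - τ 1)) ∧
    τ 0 < τ 0 + τ 1 * (τ 0 - τ 1) := by
  have hq0 : 0 < q := hq ▸ Real.exp_pos _
  have hq1 : q < 1 := by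
    rw [hq, Real.exp_lt_one_iff]; nlinarith
  have hZ0 : (0:ℝ) < 1 + q + q ^ 2 := by positivity
  have h0 : τ 0 = 1 / (1 + q + q ^ 2) := by rw [hτ]; norm_num
  have h1 : τ 1 = q / (1 + q + q ^ 2) := by rw [hτ]; norm_num
  have h2 : τ 2 = q ^ 2 / (1 + q + q ^ 2) := by
    rw [hτ]; norm_num [show ((2 : Fin 3) : ℕ) = 2 from rfl]
  have ht2 : 0 < τ 2 := by rw [h2]; positivity
  have ht21 : τ 2 < τ 1 := by
    rw [h1, h2, div_lt_div_iff_of_pos_right hZ0]; nlinarith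
  have ht10 : τ 1 < τ 0 := by
    rw [h0, h1, div_lt_div_iff_of_pos_right hZ0]; nlinarith
  have ht1 : 0 < τ 1 := lt_trans ht2 ht21
  have ht0 : 0 < τ 0 := lt_trans ht1 ht10
  -- the target value identity
  have htarget : τ 1 * τ 0 + τ 0 * τ 0 + τ 0 * τ 1 = τ 0 + τ 1 * (τ 0 - τ 1) := by
    rw [h0, h1]; field_simp; ring
  refine ⟨?_, ?_, ?_⟩
  · -- existence of optimal collision
    set U : Matrix (Fin 3 × Fin 3) (Fin 3 × Fin 3) ℂ :=
      Matrix.of (fun a b => if a = qperm b then (1:ℂ) else 0) with hU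
    have hUab : ∀ a b, U a b = if a = qperm b then (1:ℂ) else 0 := fun a b => rfl
    refine ⟨U, ?_, ?_, ?_⟩
    · rw [Matrix.mem_unitaryGroup_iff]
      ext a c
      rw [Matrix.mul_apply, Matrix.one_apply]
      rw [Finset.sum_eq_single (qperm.symm a)]
      · rw [Matrix.star_apply, hUab, hUab]
        simp [Equiv.apply_symm_apply, eq_comm]
      · intro b _ hb
        have hne : a ≠ qperm b := by
          intro h; exact hb (by simp [h])
        rw [hUab, if_neg hne, zero_mul]
      · simp
    · ext a b
      rw [Matrix.mul_diagonal, Matrix.diagonal_mul, hUab]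
      by_cases h : a = qperm b
      · subst h
        rw [if_pos rfl, one_mul, mul_one]
        norm_cast
        rw [qperm_energy b]
      · rw [if_neg h, zero_mul, mul_zero]
    · have hns : ∀ a : Fin 3 × Fin 3,
          (∑ b : Fin 3 × Fin 3, Complex.normSq (U a b) * (p b.1 * τ b.2))
            = p (qperm.symm a).1 * τ (qperm.symm a).2 := by
        intro a
        rw [Finset.sum_eq_single (qperm.symm a)]
        · rw [hUab, if_pos (by simp)]
          simp
        · intro b _ hb
          have hne : a ≠ qperm b := by
            intro h; exact hb (by simp [h])
          rw [hUab, if_neg hne]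
          simp
        · simp
      have hrw : ∀ j : Fin 3,
          (U * Matrix.diagonal
              (fun kj : Fin 3 × Fin 3 => ((p kj.1 * τ kj.2 : ℝ) : ℂ)) * Uᴴ)
            ((0 : Fin 3), j) ((0 : Fin 3), j)
          = ((p (qperm.symm ((0:Fin 3), j)).1 * τ (qperm.symm ((0:Fin 3), j)).2 : ℝ) : ℂ) := by
        intro j
        rw [conj_diag_entry U (fun kj => p kj.1 * τ kj.2) ((0:Fin 3), j)]
        exact_mod_cast congrArg (fun x : ℝ => (x : ℂ)) (hns ((0:Fin 3), j))
      rw [Fin.sum_univ_three, hrw 0, hrw 1, hrw 2]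
      have e0 : qperm.symm ((0:Fin 3), (0:Fin 3)) = ((0:Fin 3), (0:Fin 3)) := by decide
      have e1 : qperm.symm ((0:Fin 3), (1:Fin 3)) = ((1:Fin 3), (0:Fin 3)) := by decide
      have e2 : qperm.symm ((0:Fin 3), (2:Fin 3)) = ((1:Fin 3), (1:Fin 3)) := by decide
      rw [e0, e1, e2]
      norm_cast
      simp only [hp]
      norm_num
      linarith [htarget]
  · -- optimality
    intro U hU hcomm
    -- block structure
    have hblock : ∀ a b : Fin 3 × Fin 3,
        ((a.1 : ℕ) + (a.2 : ℕ)) ≠ ((b.1 : ℕ) + (b.2 : ℕ)) → U a b = 0 := by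
      intro a b hne
      have h := congrFun (congrFun hcomm a) b
      rw [Matrix.mul_diagonal, Matrix.diagonal_mul] at h
      have hd : ((((b.1 : ℕ) + (b.2 : ℕ)) * E : ℝ) : ℂ)
          ≠ ((((a.1 : ℕ) + (a.2 : ℕ)) * E : ℝ) : ℂ) := by
        intro hc
        have : (((b.1 : ℕ) + (b.2 : ℕ)) * E : ℝ) = (((a.1 : ℕ) + (a.2 : ℕ)) * E : ℝ) :=
          by exact_mod_cast hc
        have : (((b.1 : ℕ) + (b.2 : ℕ)) : ℝ) = (((a.1 : ℕ) + (a.2 : ℕ)) : ℝ) :=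
          mul_right_cancel₀ hE.ne' this
        exact hne (by exact_mod_cast this.symm)
      by_contra hU0
      have : ((((b.1 : ℕ) + (b.2 : ℕ)) * E : ℝ) : ℂ)
          = ((((a.1 : ℕ) + (a.2 : ℕ)) * E : ℝ) : ℂ) :=
        mul_left_cancel₀ hU0 (by rw [h]; ring)
      exact hd this
    -- row normalization
    have hrow : ∀ a, (∑ b, Complex.normSq (U a b)) = 1 := by
      intro a
      have h2 : U * star U = 1 := Matrix.mem_unitaryGroup_iff.mp hU
      have h := congrFun (congrFun h2 a) a
      rw [Matrix.mul_apply, Matrix.one_apply_eq] at h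
      have h' : (∑ b, ((Complex.normSq (U a b) : ℝ) : ℂ)) = 1 := by
        rw [← h]
        refine Finset.sum_congr rfl fun b _ => ?_
        rw [Matrix.star_apply, Complex.star_def, Complex.mul_conj]
      have := congrArg Complex.re h'
      simpa [Complex.re_sum] using this
    -- the per-row maxima
    set M : Fin 3 → ℝ := fun j => if j = 1 then τ 0 * τ 0 else τ 0 * τ 1 with hM
    have hwM : ∀ (j : Fin 3) (b : Fin 3 × Fin 3),
        ((b.1 : ℕ) + (b.2 : ℕ) = (j : ℕ)) → p b.1 * τ b.2 ≤ M j := by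
      have hp0 : p 0 = τ 1 := by rw [hp]; rfl
      have hp1 : p 1 = τ 0 := by rw [hp]; rfl
      have hp2 : p 2 = τ 2 := by rw [hp]; rfl
      have h2' : (⟨2, by omega⟩ : Fin 3) = 2 := rfl
      have h1' : (⟨1, by omega⟩ : Fin 3) = 1 := rfl
      have h0' : (⟨0, by omega⟩ : Fin 3) = 0 := rfl
      intro j b hb
      rcases b with ⟨k, l⟩
      simp only [hM]
      fin_cases k <;> fin_cases l <;> fin_cases j <;>
        first
          | exact absurd hb (by decide)
          | (rw [if_pos (by decide)]; norm_num [h0', h1', h2', hp0, hp1, hp2];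
             try nlinarith [ht2, ht21, ht10])
          | (rw [if_neg (by decide)]; norm_num [h0', h1', h2', hp0, hp1, hp2, mul_comm];
             try nlinarith [ht2, ht21, ht10])
    calc ∑ j : Fin 3,
          ((U * Matrix.diagonal
              (fun kj : Fin 3 × Fin 3 => ((p kj.1 * τ kj.2 : ℝ) : ℂ)) * Uᴴ)
            ((0 : Fin 3), j) ((0 : Fin 3), j)).re
        = ∑ j : Fin 3, ∑ b : Fin 3 × Fin 3,
            Complex.normSq (U ((0:Fin 3), j) b) * (p b.1 * τ b.2) := by
          refine Finset.sum_congr rfl fun j _ => ?_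
          rw [conj_diag_entry U (fun kj => p kj.1 * τ kj.2) ((0:Fin 3), j)]
          simp
      _ ≤ ∑ j : Fin 3, ∑ b : Fin 3 × Fin 3,
            Complex.normSq (U ((0:Fin 3), j) b) * M j := by
          refine Finset.sum_le_sum fun j _ => Finset.sum_le_sum fun b _ => ?_
          by_cases hb : U ((0:Fin 3), j) b = 0
          · simp [hb]
          · have he : ((b.1 : ℕ) + (b.2 : ℕ)) = (j : ℕ) := by
              by_contra hne
              exact hb (hblock _ _ (by simpa using fun h => hne h.symm))
            exact mul_le_mul_of_nonneg_left (hwM j b he) (Complex.normSq_nonneg _)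
      _ = ∑ j : Fin 3, M j := by
          refine Finset.sum_congr rfl fun j _ => ?_
          rw [← Finset.sum_mul, hrow, one_mul]
      _ = τ 0 + τ 1 * (τ 0 - τ 1) := by
          rw [Fin.sum_univ_three, ← htarget]
          simp only [hM, if_neg (by decide : ¬(0:Fin 3) = 1),
            if_neg (by decide : ¬(2:Fin 3) = 1), if_pos rfl]
          ring
  · nlinarith [mul_pos ht1 (sub_pos.mpr ht10)]
end

section
/- Let β > 0, ε > 0, q = exp(−β·ε), τ̄_0 = 1/(1+q), τ̄_1 = q/(1+q), and 0 ≤ p̄_0 < τ̄_0. Consider a system of three qubits with joint input distribution p(a₁,a₂,a₃) = p̄_{a₁}·τ̄_{a₂}·τ̄_{a₃} (where p̄ = (p̄_0, 1−p̄_0)) and a molecule of three qubits in the Gibbs distribution τ(b₁,b₂,b₃) = τ̄_{b₁}·τ̄_{b₂}·τ̄_{b₃}, all qubits having energy gap ε. Then there exists a unitary complex matrix U indexed by ((Fin 2)³) × ((Fin 2)³), commuting with the diagonal total-energy matrix H((a),(b)) = ε·(a₁+a₂+a₃+b₁+b₂+b₃), such that the output population of the system's all-ground configuration equals (τ̄_0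 + τ̄_0·τ̄_1·(τ̄_0 − p̄_0))·τ̄_0², and this value is strictly greater than τ̄_0³. (The paper's three-qubit example: a system state violating (R3) can be cooled below the bath temperature by a single collision with a molecule of the same size.) -/
open scoped BigOperators
open Matrix

abbrev Cfg3 := Fin 2 × Fin 2 × Fin 2

def swapFun : Cfg3 × Cfg3 → Cfg3 × Cfg3 := fun x =>
  if x = ((1,0,0),(0,0,0)) then ((0,0,0),(1,0,0)) else
  if x = ((0,0,0),(1,0,0)) then ((1,0,0),(0,0,0)) else
  if x = ((1,0,0),(0,0,1)) then ((0,0,0),(1,0,1)) else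
  if x = ((0,0,0),(1,0,1)) then ((1,0,0),(0,0,1)) else
  if x = ((1,0,0),(0,1,0)) then ((0,0,0),(1,1,0)) else
  if x = ((0,0,0),(1,1,0)) then ((1,0,0),(0,1,0)) else
  if x = ((1,0,0),(0,1,1)) then ((0,0,0),(1,1,1)) else
  if x = ((0,0,0),(1,1,1)) then ((1,0,0),(0,1,1)) else
  if x = ((0,0,0),(0,1,1)) then ((1,1,0),(0,0,0)) else
  if x = ((1,1,0),(0,0,0)) then ((0,0,0),(0,1,1)) else
  x

lemma swapFun_invol : Function.Involutive swapFun := by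
  unfold Function.Involutive; decide

lemma swapFun_energy (x : Cfg3 × Cfg3) :
    (swapFun x).1.1.val + (swapFun x).1.2.1.val + (swapFun x).1.2.2.val +
      ((swapFun x).2.1.val + (swapFun x).2.2.1.val + (swapFun x).2.2.2.val)
    = (x.1.1.val + x.1.2.1.val + x.1.2.2.val +
      (x.2.1.val + x.2.2.1.val + x.2.2.2.val)) := by revert x; decide

def swapPerm : Equiv.Perm (Cfg3 × Cfg3) := swapFun_invol.toPerm

lemma swapPerm_symm : swapPerm.symm = swapPerm := rfl

/-- The paper's three-qubit example: a three-qubit system whose first qubit is hotter than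
the bath (so that (R3) is violated) can be cooled below the bath temperature by a single
energy-preserving collision with a three-qubit molecule of the same size. -/
theorem three_qubit_sub_bath_cooling
    (β ε : ℝ) (hβ : 0 < β) (hε : 0 < ε) (q : ℝ) (hq : q = Real.exp (-β * ε))
    (τb : Fin 2 → ℝ) (hτb : ∀ b, τb b = q ^ (b : ℕ) / (1 + q))
    (pb : Fin 2 → ℝ) (p₀ : ℝ) (hp₀ : 0 ≤ p₀) (hp₀' : p₀ < τb 0)
    (hpb : pb = ![p₀, 1 - p₀]) :
    ∃ U : Matrix ((Fin 2 × Fin 2 × Fin 2) × (Fin 2 × Fin 2 × Fin 2))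
          ((Fin 2 × Fin 2 × Fin 2) × (Fin 2 × Fin 2 × Fin 2)) ℂ,
      U ∈ Matrix.unitaryGroup ((Fin 2 × Fin 2 × Fin 2) × (Fin 2 × Fin 2 × Fin 2)) ℂ ∧
      U * Matrix.diagonal
          (fun ab : (Fin 2 × Fin 2 × Fin 2) × (Fin 2 × Fin 2 × Fin 2) =>
            ((ε * (((ab.1.1 : ℕ) + (ab.1.2.1 : ℕ) + (ab.1.2.2 : ℕ)) +
              ((ab.2.1 : ℕ) + (ab.2.2.1 : ℕ) + (ab.2.2.2 : ℕ))) : ℝ) : ℂ))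
        = Matrix.diagonal
          (fun ab : (Fin 2 × Fin 2 × Fin 2) × (Fin 2 × Fin 2 × Fin 2) =>
            ((ε * (((ab.1.1 : ℕ) + (ab.1.2.1 : ℕ) + (ab.1.2.2 : ℕ)) +
              ((ab.2.1 : ℕ) + (ab.2.2.1 : ℕ) + (ab.2.2.2 : ℕ))) : ℝ) : ℂ)) * U ∧
      (∑ b : Fin 2 × Fin 2 × Fin 2,
          (U * Matrix.diagonal
              (fun ab : (Fin 2 × Fin 2 × Fin 2) × (Fin 2 × Fin 2 × Fin 2) =>
                ((pb ab.1.1 * τb ab.1.2.1 * τb ab.1.2.2 *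
                  (τb ab.2.1 * τb ab.2.2.1 * τb ab.2.2.2) : ℝ) : ℂ)) * Uᴴ)
            (((0, 0, 0) : Fin 2 × Fin 2 × Fin 2), b)
            (((0, 0, 0) : Fin 2 × Fin 2 × Fin 2), b)
        = (((τb 0 + τb 0 * τb 1 * (τb 0 - p₀)) * τb 0 ^ 2 : ℝ) : ℂ)) ∧
      τb 0 ^ 3 < (τb 0 + τb 0 * τb 1 * (τb 0 - p₀)) * τb 0 ^ 2 := by
  have hq0 : 0 < q := hq ▸ Real.exp_pos _
  have h1q : (0:ℝ) < 1 + q := by linarith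
  have hτ0 : τb 0 = 1 / (1 + q) := by rw [hτb 0]; norm_num
  have hτ1 : τb 1 = q / (1 + q) := by rw [hτb 1]; norm_num
  set U : Matrix (Cfg3 × Cfg3) (Cfg3 × Cfg3) ℂ := swapPerm.toPEquiv.toMatrix with hU
  have hUapp : ∀ i j, U i j = if swapPerm i = j then 1 else 0 := by
    intro i j
    simp [hU, PEquiv.toMatrix_apply, Equiv.toPEquiv_apply]
  have hUsq : U * U = 1 := by
    rw [hU, ← PEquiv.toMatrix_trans, ← Equiv.toPEquiv_trans]
    have : swapPerm.trans swapPerm = Equiv.refl _ := by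
      ext x : 1
      exact swapFun_invol x
    rw [this, Equiv.toPEquiv_refl, PEquiv.toMatrix_refl]
  have hstar : Uᴴ = U := by
    ext i j
    rw [Matrix.conjTranspose_apply, hUapp, hUapp]
    have hiff : swapPerm j = i ↔ swapPerm i = j := by
      constructor
      · intro h; rw [← h]; exact swapFun_invol j
      · intro h; rw [← h]; exact swapFun_invol i
    by_cases h : swapPerm i = j
    · rw [if_pos h, if_pos (hiff.2 h)]; simp
    · rw [if_neg h, if_neg (fun hc => h (hiff.1 hc))]; simp
  have hcomm : ∀ d : Cfg3 × Cfg3 → ℂ, (∀ x, d (swapPerm x) = d x) →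
      U * Matrix.diagonal d = Matrix.diagonal d * U := by
    intro d hd
    rw [hU, PEquiv.toMatrix_toPEquiv_mul, PEquiv.mul_toMatrix_toPEquiv, swapPerm_symm]
    ext i j
    simp only [Matrix.submatrix_apply, Matrix.diagonal_apply, id_eq]
    by_cases h : swapPerm i = j
    · rw [if_pos h, if_pos (by rw [← h]; exact (swapFun_invol i).symm)]
      exact hd i
    · rw [if_neg h, if_neg (fun hc : i = swapPerm j => h (by rw [hc]; exact swapFun_invol j))]
  have hdiagval : ∀ (d : Cfg3 × Cfg3 → ℂ) (i : Cfg3 × Cfg3),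
      (U * Matrix.diagonal d * Uᴴ) i i = d (swapPerm i) := by
    intro d i
    rw [hstar, hU, PEquiv.toMatrix_toPEquiv_mul, PEquiv.mul_toMatrix_toPEquiv, swapPerm_symm]
    simp [Matrix.submatrix_apply]
  refine ⟨U, ?_, ?_, ?_, ?_⟩
  · rw [Matrix.mem_unitaryGroup_iff, Matrix.star_eq_conjTranspose, hstar]
    exact hUsq
  · apply hcomm
    intro x
    have h : (swapPerm x).1.1.val + (swapPerm x).1.2.1.val + (swapPerm x).1.2.2.val +
        ((swapPerm x).2.1.val + (swapPerm x).2.2.1.val + (swapPerm x).2.2.2.val)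
        = (x.1.1.val + x.1.2.1.val + x.1.2.2.val +
          (x.2.1.val + x.2.2.1.val + x.2.2.2.val)) := swapFun_energy x
    have hC : (((swapPerm x).1.1.val + (swapPerm x).1.2.1.val + (swapPerm x).1.2.2.val +
        ((swapPerm x).2.1.val + (swapPerm x).2.2.1.val + (swapPerm x).2.2.2.val) : ℕ) : ℂ)
        = ((x.1.1.val + x.1.2.1.val + x.1.2.2.val +
          (x.2.1.val + x.2.2.1.val + x.2.2.2.val) : ℕ) : ℂ) := by exact_mod_cast congrArg (Nat.cast (R := ℂ)) h
    push_cast at hC ⊢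
    linear_combination (ε : ℂ) * hC
  · simp only [hdiagval]
    rw [Fintype.sum_prod_type]
    simp only [Fin.sum_univ_two, Fintype.sum_prod_type]
    have e1 : swapPerm (((0:Fin 2),(0:Fin 2),(0:Fin 2)), ((0:Fin 2),(0:Fin 2),(0:Fin 2))) = ((0,0,0),(0,0,0)) := by decide
    have e2 : swapPerm (((0:Fin 2),(0:Fin 2),(0:Fin 2)), ((0:Fin 2),(0:Fin 2),(1:Fin 2))) = ((0,0,0),(0,0,1)) := by decide
    have e3 : swapPerm (((0:Fin 2),(0:Fin 2),(0:Fin 2)), ((0:Fin 2),(1:Fin 2),(0:Fin 2))) = ((0,0,0),(0,1,0)) := by decide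
    have e4 : swapPerm (((0:Fin 2),(0:Fin 2),(0:Fin 2)), ((0:Fin 2),(1:Fin 2),(1:Fin 2))) = ((1,1,0),(0,0,0)) := by decide
    have e5 : swapPerm (((0:Fin 2),(0:Fin 2),(0:Fin 2)), ((1:Fin 2),(0:Fin 2),(0:Fin 2))) = ((1,0,0),(0,0,0)) := by decide
    have e6 : swapPerm (((0:Fin 2),(0:Fin 2),(0:Fin 2)), ((1:Fin 2),(0:Fin 2),(1:Fin 2))) = ((1,0,0),(0,0,1)) := by decide
    have e7 : swapPerm (((0:Fin 2),(0:Fin 2),(0:Fin 2)), ((1:Fin 2),(1:Fin 2),(0:Fin 2))) = ((1,0,0),(0,1,0)) := by decide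
    have e8 : swapPerm (((0:Fin 2),(0:Fin 2),(0:Fin 2)), ((1:Fin 2),(1:Fin 2),(1:Fin 2))) = ((1,0,0),(0,1,1)) := by decide
    rw [e1, e2, e3, e4, e5, e6, e7, e8]
    push_cast
    norm_cast
    rw [hpb, hτ0, hτ1]
    simp only [Matrix.cons_val_zero, Matrix.cons_val_one, Matrix.head_cons]
    field_simp
    ring
  · have hτ0pos : 0 < τb 0 := by rw [hτ0]; positivity
    have hτ1pos : 0 < τb 1 := by rw [hτ1]; positivity
    nlinarith [mul_pos (mul_pos hτ0pos hτ1pos) (sub_pos.2 hp₀'), pow_pos hτ0pos 2]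
end

section
/- Let q ∈ (0, 1), s = 1+q+q², τ_0 = 1/s, τ_1 = q/s, τ_2 = q²/s, and let d ≥ 2. Let G be the d×d real matrix with G_{0,0} = τ_0+τ_1, G_{0,1} = τ_0, G_{j,j−1} = τ_2, G_{j,j} = τ_1 and G_{j,j+1} = τ_0 for 1 ≤ j ≤ d−2, G_{d−1,d−2} = τ_2, G_{d−1,d−1} = τ_1+τ_2, and all other entries 0. Then the vector p* with p*_k = q^{2k} / Σ_{l<d} q^{2l} is a probability vector satisfying G·p* = p*, and it is the unique probability vector fixed by G. (Eqs. (eff_G_S) and (fix_point): the machineless iterative protocol drives the d-level system to the Gibbs state at inverse temperature 2β.) -/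
open scoped BigOperators

/-- Sum of an `ite`-supported function over `Fin d` when the condition picks out a
unique element. -/
lemma sum_ite_unique {d : ℕ} (P : Fin d → Prop) [DecidablePred P] (c : ℝ)
    (v : Fin d → ℝ) (j₀ : Fin d) (hj₀ : P j₀)
    (h : ∀ j : Fin d, P j → j = j₀) :
    ∑ j : Fin d, (if P j then c else 0) * v j = c * v j₀ := by
  rw [Finset.sum_eq_single j₀]
  · rw [if_pos hj₀]
  · intro b _ hb
    rw [if_neg, zero_mul]
    exact fun hP => hb (h b hP)
  · intro hn; exact absurd (Finset.mem_univ j₀) hn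

lemma sum_ite_none {d : ℕ} (P : Fin d → Prop) [DecidablePred P] (c : ℝ)
    (v : Fin d → ℝ) (h : ∀ j : Fin d, ¬ P j) :
    ∑ j : Fin d, (if P j then c else 0) * v j = 0 := by
  apply Finset.sum_eq_zero
  intro j _
  rw [if_neg (h j), zero_mul]

/-- Eqs. (eff_G_S) and (fix_point): the tridiagonal column-stochastic transition matrix of
the machineless iterative protocol has the Gibbs distribution at inverse temperature 2β as
its unique fixed probability vector. -/
theorem fixed_point_machineless_protocol
    (q : ℝ) (hq : q ∈ Set.Ioo (0 : ℝ) 1)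
    (s : ℝ) (hs : s = 1 + q + q ^ 2)
    (τ₀ τ₁ τ₂ : ℝ) (hτ₀ : τ₀ = 1 / s) (hτ₁ : τ₁ = q / s) (hτ₂ : τ₂ = q ^ 2 / s)
    (d : ℕ) (hd : 2 ≤ d)
    (G : Matrix (Fin d) (Fin d) ℝ)
    (hG : ∀ i j : Fin d, G i j =
      (if (j : ℕ) + 1 = (i : ℕ) then τ₂ else 0) +
      (if i = j then τ₁ else 0) +
      (if (i : ℕ) + 1 = (j : ℕ) then τ₀ else 0) +
      (if (i : ℕ) = 0 ∧ (j : ℕ) = 0 then τ₀ else 0) +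
      (if (i : ℕ) = d - 1 ∧ (j : ℕ) = d - 1 then τ₂ else 0))
    (pstar : Fin d → ℝ)
    (hpstar : ∀ k : Fin d, pstar k = q ^ (2 * (k : ℕ)) / ∑ l : Fin d, q ^ (2 * (l : ℕ))) :
    ((∀ k, 0 ≤ pstar k) ∧ ∑ k, pstar k = 1) ∧
    G.mulVec pstar = pstar ∧
    (∀ v : Fin d → ℝ, (∀ k, 0 ≤ v k) → (∑ k, v k = 1) →
      G.mulVec v = v → v = pstar) := by
  obtain ⟨hq0, hq1⟩ := hq
  have hs0 : 0 < s := by rw [hs]; nlinarith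
  have hτ0 : 0 < τ₀ := by rw [hτ₀]; positivity
  have hτ1 : 0 < τ₁ := by rw [hτ₁]; positivity
  have hτ2 : 0 < τ₂ := by rw [hτ₂]; positivity
  have hsum1 : τ₀ + τ₁ + τ₂ = 1 := by
    rw [hτ₀, hτ₁, hτ₂, hs]; field_simp
  have hq2 : τ₂ = q ^ 2 * τ₀ := by rw [hτ₀, hτ₂]; field_simp
  set S := ∑ l : Fin d, q ^ (2 * (l : ℕ)) with hS
  have hSpos : 0 < S := by
    apply Finset.sum_pos
    · intro i _; positivity
    · exact ⟨⟨0, by omega⟩, Finset.mem_univ _⟩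
  have hSne : S ≠ 0 := ne_of_gt hSpos
  -- row formula for G.mulVec
  have hrow : ∀ (v : Fin d → ℝ) (i : Fin d), G.mulVec v i =
      (if h : 0 < (i : ℕ) then
        τ₂ * v ⟨(i : ℕ) - 1, lt_of_le_of_lt (Nat.sub_le _ _) i.isLt⟩ else 0) +
      τ₁ * v i +
      (if h : (i : ℕ) + 1 < d then τ₀ * v ⟨(i : ℕ) + 1, h⟩ else 0) +
      (if (i : ℕ) = 0 then τ₀ * v i else 0) +
      (if (i : ℕ) = d - 1 then τ₂ * v i else 0) := by
    intro v i
    have e : G.mulVec v i = ∑ j : Fin d,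
        ((if (j : ℕ) + 1 = (i : ℕ) then τ₂ else 0) * v j +
         (if i = j then τ₁ else 0) * v j +
         (if (i : ℕ) + 1 = (j : ℕ) then τ₀ else 0) * v j +
         (if (i : ℕ) = 0 ∧ (j : ℕ) = 0 then τ₀ else 0) * v j +
         (if (i : ℕ) = d - 1 ∧ (j : ℕ) = d - 1 then τ₂ else 0) * v j) := by
      simp only [Matrix.mulVec, dotProduct]
      refine Finset.sum_congr rfl fun j _ => ?_
      rw [hG]; ring
    rw [e]
    rw [Finset.sum_add_distrib, Finset.sum_add_distrib, Finset.sum_add_distrib,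
        Finset.sum_add_distrib]
    have h1 : ∑ j : Fin d, (if (j : ℕ) + 1 = (i : ℕ) then τ₂ else 0) * v j =
        (if h : 0 < (i : ℕ) then
          τ₂ * v ⟨(i : ℕ) - 1, lt_of_le_of_lt (Nat.sub_le _ _) i.isLt⟩ else 0) := by
      by_cases h : 0 < (i : ℕ)
      · rw [dif_pos h]
        exact sum_ite_unique _ _ _ _ (by simp; omega) (fun j hj => Fin.ext (by simp at hj ⊢; omega))
      · rw [dif_neg h]
        exact sum_ite_none _ _ _ (fun j => by omega)
    have h2 : ∑ j : Fin d, (if i = j then τ₁ else 0) * v j = τ₁ * v i :=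
      sum_ite_unique _ _ _ i rfl (fun j hj => hj.symm)
    have h3 : ∑ j : Fin d, (if (i : ℕ) + 1 = (j : ℕ) then τ₀ else 0) * v j =
        (if h : (i : ℕ) + 1 < d then τ₀ * v ⟨(i : ℕ) + 1, h⟩ else 0) := by
      by_cases h : (i : ℕ) + 1 < d
      · rw [dif_pos h]
        exact sum_ite_unique _ _ _ _ rfl (fun j hj => Fin.ext (by simp at hj ⊢; omega))
      · rw [dif_neg h]
        exact sum_ite_none _ _ _ (fun j => by have := j.isLt; omega)
    have h4 : ∑ j : Fin d, (if (i : ℕ) = 0 ∧ (j : ℕ) = 0 then τ₀ else 0) * v j =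
        (if (i : ℕ) = 0 then τ₀ * v i else 0) := by
      by_cases h : (i : ℕ) = 0
      · rw [if_pos h]
        exact sum_ite_unique _ _ _ i ⟨h, h⟩ (fun j hj => Fin.ext (by omega))
      · rw [if_neg h]
        exact sum_ite_none _ _ _ (fun j hj => h hj.1)
    have h5 : ∑ j : Fin d, (if (i : ℕ) = d - 1 ∧ (j : ℕ) = d - 1 then τ₂ else 0) * v j =
        (if (i : ℕ) = d - 1 then τ₂ * v i else 0) := by
      by_cases h : (i : ℕ) = d - 1
      · rw [if_pos h]
        refine sum_ite_unique _ _ _ i ⟨h, h⟩ (fun j hj => Fin.ext (by omega))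
      · rw [if_neg h]
        exact sum_ite_none _ _ _ (fun j hj => h hj.1)
    rw [h1, h2, h3, h4, h5]
  have hpow : ∀ n : ℕ, 1 ≤ n → q ^ (2 * (n - 1)) * q ^ 2 = q ^ (2 * n) := by
    intro n hn
    rw [← pow_add]
    congr 1
    omega
  -- pstar is a probability vector
  have hnn : ∀ k, 0 ≤ pstar k := by
    intro k; rw [hpstar]; positivity
  have hsum : ∑ k, pstar k = 1 := by
    simp only [hpstar]
    rw [← Finset.sum_div, div_self hSne]
  -- fixed point
  have keysub : ∀ i : Fin d, 0 < (i : ℕ) →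
      τ₂ * q ^ (2 * ((i : ℕ) - 1)) = τ₀ * q ^ (2 * (i : ℕ)) := by
    intro i h0
    rw [hq2, ← hpow (i : ℕ) h0]; ring
  have keysup : ∀ n : ℕ, τ₀ * q ^ (2 * (n + 1)) = τ₂ * q ^ (2 * n) := by
    intro n
    rw [hq2, ← hpow (n + 1) (by omega)]
    simp only [Nat.add_sub_cancel]
    ring
  have hfix : G.mulVec pstar = pstar := by
    funext i
    rw [hrow]
    rcases Nat.eq_zero_or_pos (i : ℕ) with h0 | h0
    · rw [dif_neg (by omega), if_pos h0, if_neg (by omega), dif_pos (by omega)]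
      simp only [hpstar]
      linear_combination (1 / S) * keysup (i : ℕ) + (q ^ (2 * (i : ℕ)) / S) * hsum1
    · by_cases hlast : (i : ℕ) = d - 1
      · rw [dif_pos h0, if_neg (by omega), if_pos hlast, dif_neg (by omega)]
        simp only [hpstar]
        linear_combination (1 / S) * keysub i h0 + (q ^ (2 * (i : ℕ)) / S) * hsum1
      · have hi1 : (i : ℕ) + 1 < d := by have := i.isLt; omega
        rw [dif_pos h0, if_neg (by omega), if_neg (by omega), dif_pos hi1]
        simp only [hpstar]
        linear_combination (1 / S) * keysub i h0 + (1 / S) * keysup (i : ℕ) +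
          (q ^ (2 * (i : ℕ)) / S) * hsum1
  refine ⟨⟨hnn, hsum⟩, hfix, ?_⟩
  -- uniqueness
  intro v _ hvsum hv
  have hvi : ∀ i, G.mulVec v i = v i := fun i => congrFun hv i
  have step : ∀ n : ℕ, ∀ h : n + 1 < d,
      τ₀ * v ⟨n + 1, h⟩ = τ₂ * v ⟨n, by omega⟩ := by
    intro n
    induction n with
    | zero =>
      intro h
      have e := hvi ⟨0, by omega⟩
      rw [hrow] at e
      rw [dif_neg (by simp), if_pos (by simp), if_neg (by simp; omega),
          dif_pos (by simpa using h)] at e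
      simp only at e
      linear_combination e - v ⟨0, by omega⟩ * hsum1
    | succ n ih =>
      intro h
      have e := hvi ⟨n + 1, by omega⟩
      rw [hrow] at e
      rw [dif_pos (by simp), if_neg (by simp), if_neg (by simp; omega),
          dif_pos (by simpa using h)] at e
      simp only [Nat.add_sub_cancel] at e
      have ihn := ih (by omega)
      linear_combination e + ihn - v ⟨n + 1, by omega⟩ * hsum1
  have geom : ∀ n : ℕ, ∀ hn : n < d, v ⟨n, hn⟩ = q ^ (2 * n) * v ⟨0, by omega⟩ := by
    intro n
    induction n with
    | zero => intro hn; simp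
    | succ n ih =>
      intro hn
      have hst := step n hn
      have : v ⟨n + 1, hn⟩ = q ^ 2 * v ⟨n, by omega⟩ := by
        have h' : τ₀ * v ⟨n + 1, hn⟩ = τ₀ * (q ^ 2 * v ⟨n, by omega⟩) := by
          rw [hst, hq2]; ring
        exact mul_left_cancel₀ (ne_of_gt hτ0) h'
      rw [this, ih (by omega), ← hpow (n + 1) (by omega)]
      simp only [Nat.add_sub_cancel]
      ring
  have hv0 : v ⟨0, by omega⟩ = 1 / S := by
    have hsv : ∑ k : Fin d, v k = S * v ⟨0, by omega⟩ := by
      rw [hS, Finset.sum_mul]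
      refine Finset.sum_congr rfl fun k _ => ?_
      have hg := geom (k : ℕ) k.isLt
      rw [Fin.eta] at hg
      exact hg
    rw [hsv] at hvsum
    field_simp
    linear_combination hvsum
  funext k
  have := geom (k : ℕ) k.isLt
  rw [Fin.eta] at this
  rw [this, hv0, hpstar]
  ring
end

section
/- Let q ∈ (0, 1), s = 1+q+q², τ_j = q^j/s, and let G be the 3×3 matrix [[τ_0+τ_1, τ_0, 0], [τ_2, τ_1, τ_0], [0, τ_2, τ_1+τ_2]], with fixed probability vector p* = (1, q², q⁴)/(1+q²+q⁴). Then for every vector v ∈ ℝ³ with v_0+v_1+v_2 = 0 one has G·(G·v) = (2q/s)·(G·v); consequently, for every probability vector p and every N ≥ 1, G^N·p − p* = (2q/s)^{N−1}·(G·p − p*), so the iterates converge to p* exponentially at rate 2τ_1 = 2q/(1+q+q²). (Convergence statement of Sec. IV.B for the machineless qutrit cooling protocol.) -/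
open scoped BigOperators

/-- Convergence of the machineless qutrit cooling protocol (Sec. IV.B): on the zero-sum
subspace G² acts as (2q/s)·G, hence the iterates converge to the fixed point p* exponentially
at rate 2τ₁ = 2q/(1+q+q²). -/
theorem qutrit_protocol_convergence
    (q : ℝ) (hq : q ∈ Set.Ioo (0 : ℝ) 1)
    (s : ℝ) (hs : s = 1 + q + q ^ 2)
    (τ₀ τ₁ τ₂ : ℝ) (hτ₀ : τ₀ = 1 / s) (hτ₁ : τ₁ = q / s) (hτ₂ : τ₂ = q ^ 2 / s)
    (G : Matrix (Fin 3) (Fin 3) ℝ)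
    (hG : G = !![τ₀ + τ₁, τ₀, 0; τ₂, τ₁, τ₀; 0, τ₂, τ₁ + τ₂])
    (pstar : Fin 3 → ℝ)
    (hpstar : pstar = fun k : Fin 3 => q ^ (2 * (k : ℕ)) / (1 + q ^ 2 + q ^ 4))
    (hfix : G.mulVec pstar = pstar) :
    (∀ v : Fin 3 → ℝ, v 0 + v 1 + v 2 = 0 →
      G.mulVec (G.mulVec v) = (2 * q / s) • G.mulVec v) ∧
    (∀ p : Fin 3 → ℝ, (∀ k, 0 ≤ p k) → (∑ k, p k = 1) →
      ∀ N : ℕ, 1 ≤ N →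
        (G ^ N).mulVec p - pstar = (2 * q / s) ^ (N - 1) • (G.mulVec p - pstar)) := by
  obtain ⟨hq0, hq1⟩ := hq
  have hs0 : s ≠ 0 := by nlinarith
  have key : ∀ v : Fin 3 → ℝ, v 0 + v 1 + v 2 = 0 →
      G.mulVec (G.mulVec v) = (2 * q / s) • G.mulVec v := by
    intro v hv
    subst hG hτ₀ hτ₁ hτ₂
    have hv2 : v 2 = -v 0 - v 1 := by linarith
    funext i
    fin_cases i <;>
      simp only [Matrix.mulVec, dotProduct, Fin.sum_univ_three, Pi.smul_apply,
        smul_eq_mul, Matrix.cons_val', Matrix.cons_val_zero, Matrix.cons_val_one,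
        Matrix.head_cons, Matrix.empty_val', Matrix.cons_val_fin_one,
        Matrix.cons_val_two, Matrix.tail_cons, Matrix.head_fin_const, hv2, Matrix.of_apply,
        Fin.reduceFinMk] <;>
      field_simp <;>
      ring
  refine ⟨key, ?_⟩
  intro p hp hsum N hN
  have hsG : ∀ w : Fin 3 → ℝ, w 0 + w 1 + w 2 = 0 →
      (G.mulVec w) 0 + (G.mulVec w) 1 + (G.mulVec w) 2 = 0 := by
    intro w hw
    subst hG hτ₀ hτ₁ hτ₂
    simp only [Matrix.mulVec, dotProduct, Fin.sum_univ_three, Matrix.cons_val',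
      Matrix.cons_val_zero, Matrix.cons_val_one, Matrix.head_cons, Matrix.empty_val',
      Matrix.cons_val_fin_one, Matrix.cons_val_two, Matrix.tail_cons, Matrix.head_fin_const, Matrix.of_apply]
    field_simp
    linear_combination (1 + q + q ^ 2) * hw
  have hzero : (p - pstar) 0 + (p - pstar) 1 + (p - pstar) 2 = 0 := by
    have hps : pstar 0 + pstar 1 + pstar 2 = 1 := by
      subst hpstar
      have h4 : (1 : ℝ) + q ^ 2 + q ^ 4 ≠ 0 := by nlinarith
      simp only
      field_simp
      norm_num [Fin.val_two]
    have hsum' : p 0 + p 1 + p 2 = 1 := by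
      rw [← hsum]; simp [Fin.sum_univ_three]
    simp only [Pi.sub_apply]; linarith
  induction N with
  | zero => omega
  | succ n ih =>
    rcases Nat.eq_or_lt_of_le hN with h1 | h1
    · simp [← h1, pow_one, Matrix.mulVec]
    · have hn : 1 ≤ n := by omega
      have ihn := ih hn
      have hstep : G.mulVec (p - pstar) = G.mulVec p - pstar := by
        rw [Matrix.mulVec_sub, hfix]
      have h2 : G.mulVec (G.mulVec (p - pstar)) = (2 * q / s) • G.mulVec (p - pstar) :=
        key (p - pstar) hzero
      have hGn : (G ^ (n + 1)).mulVec p - pstar = G.mulVec ((G ^ n).mulVec p - pstar) := by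
        rw [Matrix.mulVec_sub, hfix, pow_succ', Matrix.mulVec_mulVec]
      rw [hGn, ihn, Matrix.mulVec_smul, ← hstep, h2, hstep, smul_smul]
      congr 1
      have : n + 1 - 1 = (n - 1) + 1 := by omega
      rw [this, pow_succ, mul_comm]
end
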